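/- arXiv:1609.00069 — 8 statements merged into one kernel-verified Lean document; each statement's English description precedes it below -/
import Mathlib

section
/- For all positive integers n and k, the rainbow Turán number of the matching with k edges satisfies ex*(n, M_k) ≤ n(k−1) + (k−1)(4k−3). In particular, ex*(n, M_k) = n(k−1) + O(k²). -/
open SimpleGraph Finset

/-- `c` is a proper edge-coloring of `G`: distinct edges sharing a vertex get distinct colors. -/
def IsProperEdgeColoring {V β : Type*} (G : SimpleGraph V) (c : Sym2 V → β) : Prop :=
  ∀ ⦃e₁ e₂ : Sym2 V⦄, e₁ ∈ G.edgeSet → e₂ ∈ G.edgeSet → e₁ ≠ e₂ →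
    (∃ v, v ∈ e₁ ∧ v ∈ e₂) → c e₁ ≠ c e₂

/-- `G` contains a copy of `F` (as a subgraph). -/
def Contains {α V : Type*} (F : SimpleGraph α) (G : SimpleGraph V) : Prop :=
  ∃ f : α ↪ V, ∀ ⦃a b⦄, F.Adj a b → G.Adj (f a) (f b)

/-- `G`, edge-colored by `c`, contains a rainbow copy of `F`:
a copy of `F` all of whose edges receive distinct colors. -/
def HasRainbowCopy {α V β : Type*} (F : SimpleGraph α) (G : SimpleGraph V)
    (c : Sym2 V → β) : Prop :=
  ∃ f : α ↪ V, (∀ ⦃a b⦄, F.Adj a b → G.Adj (f a) (f b)) ∧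
    ∀ e₁ ∈ F.edgeSet, ∀ e₂ ∈ F.edgeSet, c (e₁.map ⇑f) = c (e₂.map ⇑f) → e₁ = e₂

/-- The set of edge-counts of `n`-vertex graphs admitting a proper edge-coloring
with no rainbow copy of `F`; its greatest element is the rainbow Turán number `ex*(n,F)`. -/
def rainbowExSet (n : ℕ) {α : Type*} (F : SimpleGraph α) : Set ℕ :=
  {m | ∃ (G : SimpleGraph (Fin n)) (c : Sym2 (Fin n) → ℕ),
    IsProperEdgeColoring G c ∧ ¬ HasRainbowCopy F G c ∧ G.edgeSet.ncard = m}

/-- The set of edge-counts of `n`-vertex `F`-free graphs; its greatest element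
is the Turán number `ex(n,F)`. -/
def exSet (n : ℕ) {α : Type*} (F : SimpleGraph α) : Set ℕ :=
  {m | ∃ G : SimpleGraph (Fin n), ¬ Contains F G ∧ G.edgeSet.ncard = m}

/-- The matching `M_k` with `k` edges: vertices `2i` and `2i+1` are matched. -/
def matchingGraph (k : ℕ) : SimpleGraph (Fin (2 * k)) :=
  SimpleGraph.fromRel (fun a b => (a : ℕ) / 2 = (b : ℕ) / 2)

/-- The forest of `k` vertex-disjoint stars where the `i`-th star has `a i` edges
(the vertex `⟨i, 0⟩` being the center of the `i`-th star). -/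
def starForest {k : ℕ} (a : Fin k → ℕ) : SimpleGraph (Σ i, Fin (a i + 1)) :=
  SimpleGraph.fromRel (fun x y => x.1 = y.1 ∧ (x.2 : ℕ) = 0)

namespace RainbowAux
set_option linter.unusedSectionVars false

variable {V : Type} [Fintype V] [DecidableEq V]

/-- `p` lists `j` pairwise-disjoint edges of `G` with pairwise distinct colors. -/
def IsRM (G : SimpleGraph V) (c : Sym2 V → ℕ) {j : ℕ} (p : Fin j → V × V) : Prop :=
  (∀ i, G.Adj (p i).1 (p i).2) ∧
    (∀ i i', i ≠ i' →
      (p i).1 ≠ (p i').1 ∧ (p i).1 ≠ (p i').2 ∧ (p i).2 ≠ (p i').1 ∧ (p i).2 ≠ (p i').2) ∧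
    (∀ i i', c s((p i).1, (p i).2) = c s((p i').1, (p i').2) → i = i')

/-- `G` has a rainbow matching with `j` edges (coloring `c`). -/
def RM (G : SimpleGraph V) (c : Sym2 V → ℕ) (j : ℕ) : Prop :=
  ∃ p : Fin j → V × V, IsRM G c p

lemma rm_zero (G : SimpleGraph V) (c : Sym2 V → ℕ) : RM G c 0 :=
  ⟨fun i => i.elim0, fun i => i.elim0, fun i => i.elim0, fun i => i.elim0⟩

lemma rm_extend {G : SimpleGraph V} {c : Sym2 V → ℕ} {j : ℕ} {p : Fin j → V × V}
    (hp : IsRM G c p) {a b : V} (hab : G.Adj a b)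
    (hv : ∀ i, a ≠ (p i).1 ∧ a ≠ (p i).2 ∧ b ≠ (p i).1 ∧ b ≠ (p i).2)
    (hc : ∀ i, c s(a, b) ≠ c s((p i).1, (p i).2)) : RM G c (j + 1) := by
  obtain ⟨h1, h2, h3⟩ := hp
  refine ⟨fun i => if h : (i : ℕ) < j then p ⟨i, h⟩ else (a, b), ?_, ?_, ?_⟩
  · intro i; dsimp only; split_ifs with h
    · exact h1 _
    · exact hab
  · intro i i' hne; dsimp only; split_ifs with h h' h'
    · exact h2 ⟨i, h⟩ ⟨i', h'⟩ (fun hh => hne (Fin.ext (Fin.mk_eq_mk.mp hh)))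
    · obtain ⟨x1, x2, x3, x4⟩ := hv ⟨i, h⟩
      exact ⟨x1.symm, x3.symm, x2.symm, x4.symm⟩
    · exact hv ⟨i', h'⟩
    · exact absurd (Fin.ext (by omega : (i : ℕ) = i')) hne
  · intro i i' heq; dsimp only at heq; split_ifs at heq with h h' h'
    · have := h3 ⟨i, h⟩ ⟨i', h'⟩ heq
      exact Fin.ext (Fin.mk_eq_mk.mp this)
    · exact absurd heq.symm (hc _)
    · exact absurd heq (hc _)
    · exact Fin.ext (by omega)

/-- The vertex map associated to a rainbow matching. -/
def rmFun {j : ℕ} (p : Fin j → V × V) : Fin (2 * j) → V := fun a =>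
  if (a : ℕ) % 2 = 0 then (p ⟨(a : ℕ) / 2, by have := a.isLt; omega⟩).1
  else (p ⟨(a : ℕ) / 2, by have := a.isLt; omega⟩).2

lemma rmFun_even {j : ℕ} (p : Fin j → V × V) (x : Fin (2 * j)) (hx : (x : ℕ) % 2 = 0)
    (h : (x : ℕ) / 2 < j) : rmFun p x = (p ⟨(x : ℕ) / 2, h⟩).1 := by
  unfold rmFun; rw [if_pos hx]

lemma rmFun_odd {j : ℕ} (p : Fin j → V × V) (x : Fin (2 * j)) (hx : (x : ℕ) % 2 = 1)
    (h : (x : ℕ) / 2 < j) : rmFun p x = (p ⟨(x : ℕ) / 2, h⟩).2 := by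
  unfold rmFun; rw [if_neg (by omega)]

lemma rmFun_mk0 {j : ℕ} (p : Fin j → V × V) (i : ℕ) (hi : i < j) (h2 : 2 * i < 2 * j) :
    rmFun p ⟨2 * i, h2⟩ = (p ⟨i, hi⟩).1 := by
  rw [rmFun_even p ⟨2 * i, h2⟩ (by simp [Nat.mul_mod_right]) (by simpa using hi)]
  exact congrArg (fun z => (p z).1) (Fin.ext (by show 2 * i / 2 = i; omega))

lemma rmFun_mk1 {j : ℕ} (p : Fin j → V × V) (i : ℕ) (hi : i < j) (h2 : 2 * i + 1 < 2 * j) :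
    rmFun p ⟨2 * i + 1, h2⟩ = (p ⟨i, hi⟩).2 := by
  rw [rmFun_odd p ⟨2 * i + 1, h2⟩ (by show (2*i+1) % 2 = 1; omega) (by show (2*i+1)/2 < j; omega)]
  exact congrArg (fun z => (p z).2) (Fin.ext (by show (2 * i + 1) / 2 = i; omega))

lemma rmFun_inj {j : ℕ} {G : SimpleGraph V} {c : Sym2 V → ℕ} {p : Fin j → V × V}
    (hp : IsRM G c p) : Function.Injective (rmFun p) := by
  obtain ⟨h1, h2, _⟩ := hp
  intro a b hab
  have ha2 := a.isLt; have hb2 := b.isLt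
  have hda : (a : ℕ) / 2 < j := by omega
  have hdb : (b : ℕ) / 2 < j := by omega
  by_contra hne
  have hvne : (a : ℕ) ≠ (b : ℕ) := fun h => hne (Fin.ext h)
  by_cases hij : (a : ℕ) / 2 = (b : ℕ) / 2
  · have hidx : (⟨(a : ℕ) / 2, hda⟩ : Fin j) = ⟨(b : ℕ) / 2, hdb⟩ := Fin.ext hij
    rcases Nat.mod_two_eq_zero_or_one (a : ℕ) with ha | ha <;>
      rcases Nat.mod_two_eq_zero_or_one (b : ℕ) with hb | hb
    · omega
    · rw [rmFun_even p a ha hda, rmFun_odd p b hb hdb, ← hidx] at hab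
      exact (h1 _).ne hab
    · rw [rmFun_odd p a ha hda, rmFun_even p b hb hdb, ← hidx] at hab
      exact (h1 _).ne' hab
    · omega
  · have hidxne : (⟨(a : ℕ) / 2, hda⟩ : Fin j) ≠ ⟨(b : ℕ) / 2, hdb⟩ :=
      fun h => hij (congrArg Fin.val h)
    obtain ⟨x1, x2, x3, x4⟩ := h2 _ _ hidxne
    rcases Nat.mod_two_eq_zero_or_one (a : ℕ) with ha | ha <;>
      rcases Nat.mod_two_eq_zero_or_one (b : ℕ) with hb | hb
    · rw [rmFun_even p a ha hda, rmFun_even p b hb hdb] at hab; exact x1 hab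
    · rw [rmFun_even p a ha hda, rmFun_odd p b hb hdb] at hab; exact x2 hab
    · rw [rmFun_odd p a ha hda, rmFun_even p b hb hdb] at hab; exact x3 hab
    · rw [rmFun_odd p a ha hda, rmFun_odd p b hb hdb] at hab; exact x4 hab

lemma matching_edge {k : ℕ} (e : Sym2 (Fin (2 * k)))
    (he : e ∈ (matchingGraph k).edgeSet) :
    ∃ (i : ℕ) (h1 : 2 * i < 2 * k) (h2 : 2 * i + 1 < 2 * k) (hik : i < k),
      e = s((⟨2 * i, h1⟩ : Fin (2 * k)), (⟨2 * i + 1, h2⟩ : Fin (2 * k))) := by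
  revert he
  refine Sym2.ind (fun x y => ?_) e
  intro he
  rw [mem_edgeSet, matchingGraph, fromRel_adj] at he
  obtain ⟨hxy, hdiv⟩ := he
  have hvne : (x : ℕ) ≠ (y : ℕ) := fun h => hxy (Fin.ext h)
  have hd : (x : ℕ) / 2 = (y : ℕ) / 2 := by rcases hdiv with h | h; exacts [h, h.symm]
  have hx2 := x.isLt; have hy2 := y.isLt
  refine ⟨(x : ℕ) / 2, by omega, by omega, by omega, ?_⟩
  rcases Nat.mod_two_eq_zero_or_one (x : ℕ) with hx | hx
  · have hxe : x = ⟨2 * ((x : ℕ) / 2), by omega⟩ :=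
      Fin.ext (show (x : ℕ) = 2 * ((x : ℕ) / 2) by omega)
    have hye : y = ⟨2 * ((x : ℕ) / 2) + 1, by omega⟩ :=
      Fin.ext (show (y : ℕ) = 2 * ((x : ℕ) / 2) + 1 by omega)
    exact congrArg₂ (fun u v : Fin (2 * k) => s(u, v)) hxe hye
  · have hxe : x = ⟨2 * ((x : ℕ) / 2) + 1, by omega⟩ :=
      Fin.ext (show (x : ℕ) = 2 * ((x : ℕ) / 2) + 1 by omega)
    have hye : y = ⟨2 * ((x : ℕ) / 2), by omega⟩ :=
      Fin.ext (show (y : ℕ) = 2 * ((x : ℕ) / 2) by omega)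
    exact Sym2.eq_swap.trans (congrArg₂ (fun u v : Fin (2 * k) => s(u, v)) hye hxe)

lemma rm_to_copy {G : SimpleGraph V} {c : Sym2 V → ℕ} {k : ℕ} (h : RM G c k) :
    HasRainbowCopy (matchingGraph k) G c := by
  obtain ⟨p, hp⟩ := h
  obtain ⟨h1, h2, h3⟩ := hp
  refine ⟨⟨rmFun p, rmFun_inj ⟨h1, h2, h3⟩⟩, ?_, ?_⟩
  · intro a b hab
    rw [matchingGraph, fromRel_adj] at hab
    obtain ⟨hne, hdiv⟩ := hab
    have hd : (a : ℕ) / 2 = (b : ℕ) / 2 := by rcases hdiv with h | h; exacts [h, h.symm]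
    have ha2 := a.isLt; have hb2 := b.isLt
    have hda : (a : ℕ) / 2 < k := by omega
    have hdb : (b : ℕ) / 2 < k := by omega
    have hvne : (a : ℕ) ≠ (b : ℕ) := fun h => hne (Fin.ext h)
    have hidx : (⟨(a : ℕ) / 2, hda⟩ : Fin k) = ⟨(b : ℕ) / 2, hdb⟩ := Fin.ext hd
    simp only [Function.Embedding.coeFn_mk]
    rcases Nat.mod_two_eq_zero_or_one (a : ℕ) with ha | ha
    · have hb1 : (b : ℕ) % 2 = 1 := by omega
      rw [rmFun_even p a ha hda, rmFun_odd p b hb1 hdb, ← hidx]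
      exact h1 _
    · have hb0 : (b : ℕ) % 2 = 0 := by omega
      rw [rmFun_odd p a ha hda, rmFun_even p b hb0 hdb, ← hidx]
      exact (h1 _).symm
  · intro e₁ he₁ e₂ he₂ hcc
    obtain ⟨i₁, ha1, hb1, hk1, rfl⟩ := matching_edge e₁ he₁
    obtain ⟨i₂, ha2, hb2, hk2, rfl⟩ := matching_edge e₂ he₂
    simp only [Function.Embedding.coeFn_mk, Sym2.map_pair_eq] at hcc
    rw [rmFun_mk0 p i₁ hk1 ha1, rmFun_mk1 p i₁ hk1 hb1,
      rmFun_mk0 p i₂ hk2 ha2, rmFun_mk1 p i₂ hk2 hb2] at hcc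
    have := h3 _ _ hcc
    have hii : i₁ = i₂ := congrArg Fin.val this
    subst hii
    rfl

theorem key : ∀ (k : ℕ) (V : Type) [Fintype V] [DecidableEq V] (G : SimpleGraph V)
    (c : Sym2 V → ℕ), IsProperEdgeColoring G c → ¬ RM G c (k + 1) →
    G.edgeSet.ncard ≤ k * (Fintype.card V + 4 * k + 1) := by
  intro k
  induction k with
  | zero =>
    intro V instF instD G c _ hno
    have he : G.edgeSet = ∅ := by
      by_contra h
      obtain ⟨e, he⟩ := Set.nonempty_iff_ne_empty.mpr h
      revert he
      refine Sym2.ind (fun a b => ?_) e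
      intro hab
      rw [SimpleGraph.mem_edgeSet] at hab
      haveI : Subsingleton (Fin (0 + 1)) :=
        ⟨fun a b => Fin.ext (by have ha := a.isLt; have hb := b.isLt; omega)⟩
      exact hno ⟨fun _ => (a, b), fun _ => hab,
        fun i i' hii => absurd (Subsingleton.elim i i') hii,
        fun i i' _ => Subsingleton.elim i i'⟩
    simp [he]
  | succ K IH =>
    intro V instF instD G c hprop hno
    classical
    have hE : G.edgeSet.ncard = G.edgeFinset.card := by
      rw [← SimpleGraph.coe_edgeFinset, Set.ncard_coe_finset]
    set n := Fintype.card V with hn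
    by_cases hΔ : ∃ v, 3 * (K + 1) + 1 ≤ G.degree v
    · -- CASE 2 : a vertex of large degree; delete it and decrease k
      obtain ⟨v, hv⟩ := hΔ
      set V' := {x : V // x ≠ v} with hV'def
      set G' : SimpleGraph V' := G.comap (fun x => (x : V)) with hG'def
      set c' : Sym2 V' → ℕ := fun e => c (Sym2.map (fun x : V' => (x : V)) e) with hc'def
      have hval : Function.Injective (fun x : V' => (x : V)) := Subtype.val_injective
      have hmapinj : Function.Injective (Sym2.map (fun x : V' => (x : V))) :=
        Sym2.map.injective hval
      have hedge : ∀ e : Sym2 V', e ∈ G'.edgeSet → (Sym2.map (fun x : V' => (x : V)) e) ∈ G.edgeSet := by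
        intro e
        refine Sym2.ind (fun a b => ?_) e
        intro h
        rw [Sym2.map_pair_eq, SimpleGraph.mem_edgeSet]
        exact h
      have hprop' : IsProperEdgeColoring G' c' := by
        intro e₁ e₂ h1 h2 hne hsh
        refine hprop (hedge _ h1) (hedge _ h2) (fun h => hne (hmapinj h)) ?_
        obtain ⟨x, hx1, hx2⟩ := hsh
        exact ⟨(x : V), Sym2.mem_map.mpr ⟨x, hx1, rfl⟩, Sym2.mem_map.mpr ⟨x, hx2, rfl⟩⟩
      have hno' : ¬ RM G' c' (K + 1) := by
        rintro ⟨p, hadj, hdisj, hcol⟩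
        set q : Fin (K + 1) → V × V := fun i => (((p i).1 : V), ((p i).2 : V)) with hqdef
        have hcq : ∀ i, c s((q i).1, (q i).2) = c' s((p i).1, (p i).2) := by
          intro i
          simp only [hc'def, Sym2.map_pair_eq]
          rfl
        have hq : IsRM G c q := by
          refine ⟨fun i => hadj i, ?_, ?_⟩
          · intro i i' hii
            obtain ⟨x1, x2, x3, x4⟩ := hdisj i i' hii
            exact ⟨fun h => x1 (Subtype.ext h), fun h => x2 (Subtype.ext h),
              fun h => x3 (Subtype.ext h), fun h => x4 (Subtype.ext h)⟩
          · intro i i' h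
            refine hcol i i' ?_
            rw [← hcq, ← hcq]
            exact h
        set NB := G.neighborFinset v with hNB
        have hNBcard : 3 * (K + 1) + 1 ≤ NB.card := by
          rwa [hNB, SimpleGraph.card_neighborFinset_eq_degree]
        set Bad1 := NB.filter (fun x => ∃ i, x = (q i).1 ∨ x = (q i).2) with hB1
        set Bad2 := NB.filter (fun x => ∃ i, c s(v, x) = c s((q i).1, (q i).2)) with hB2
        have h1 : Bad1.card ≤ 2 * (K + 1) := by
          have hsub : Bad1 ⊆
              (Finset.univ : Finset (Fin (K + 1))).biUnion (fun i => {(q i).1, (q i).2}) := by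
            intro x hx
            rw [hB1, Finset.mem_filter] at hx
            obtain ⟨-, i, hi⟩ := hx
            refine Finset.mem_biUnion.mpr ⟨i, Finset.mem_univ _, ?_⟩
            rcases hi with h | h <;> simp [h]
          calc Bad1.card ≤ _ := Finset.card_le_card hsub
            _ ≤ ∑ i : Fin (K + 1), ({(q i).1, (q i).2} : Finset V).card :=
              Finset.card_biUnion_le
            _ ≤ ∑ _i : Fin (K + 1), 2 :=
              Finset.sum_le_sum (fun i _ => (Finset.card_insert_le _ _).trans (by simp))
            _ = 2 * (K + 1) := by simp [mul_comm]
        have h2 : Bad2.card ≤ K + 1 := by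
          have hle : Bad2.card ≤ (Finset.univ : Finset (Fin (K + 1))).card := by
            refine Finset.card_le_card_of_injOn
              (fun x => if h : ∃ i, c s(v, x) = c s((q i).1, (q i).2) then h.choose
                else ⟨0, Nat.succ_pos _⟩)
              (fun x _ => Finset.mem_univ _) ?_
            intro x hx y hy hxy
            rw [Finset.mem_coe, hB2, Finset.mem_filter] at hx hy
            obtain ⟨hxNB, hex⟩ := hx
            obtain ⟨hyNB, hey⟩ := hy
            simp only [dif_pos hex, dif_pos hey] at hxy
            have hcx := hex.choose_spec
            have hcy := hey.choose_spec
            rw [hxy] at hcx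
            have hcxy : c s(v, x) = c s(v, y) := hcx.trans hcy.symm
            by_contra hne
            have hadjx : G.Adj v x := by
              rw [hNB] at hxNB; exact (SimpleGraph.mem_neighborFinset _ _ _).mp hxNB
            have hadjy : G.Adj v y := by
              rw [hNB] at hyNB; exact (SimpleGraph.mem_neighborFinset _ _ _).mp hyNB
            refine hprop ((SimpleGraph.mem_edgeSet _).mpr hadjx) ((SimpleGraph.mem_edgeSet _).mpr hadjy)
              ?_ ⟨v, by simp, by simp⟩ hcxy
            intro hee
            exact hne (Sym2.congr_right.mp hee)
          simpa using hle
        have hbig : (Bad1 ∪ Bad2).card ≤ 3 * (K + 1) :=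
          le_trans (Finset.card_union_le _ _) (by omega)
        have hgood : ∃ x ∈ NB, x ∉ Bad1 ∪ Bad2 := by
          by_contra hcon
          push_neg at hcon
          have := Finset.card_le_card hcon
          omega
        obtain ⟨x, hxNB, hxbad⟩ := hgood
        have hadjvx : G.Adj v x := by
          rw [hNB] at hxNB; exact (SimpleGraph.mem_neighborFinset _ _ _).mp hxNB
        rw [Finset.mem_union] at hxbad
        push_neg at hxbad
        obtain ⟨hxb1, hxb2⟩ := hxbad
        have hx1 : ∀ i, x ≠ (q i).1 ∧ x ≠ (q i).2 := by
          intro i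
          constructor <;> intro h <;> refine hxb1 ?_ <;> rw [hB1, Finset.mem_filter]
          · exact ⟨hxNB, ⟨i, Or.inl h⟩⟩
          · exact ⟨hxNB, ⟨i, Or.inr h⟩⟩
        have hx2 : ∀ i, c s(v, x) ≠ c s((q i).1, (q i).2) := by
          intro i h
          refine hxb2 ?_
          rw [hB2, Finset.mem_filter]
          exact ⟨hxNB, ⟨i, h⟩⟩
        refine hno (rm_extend hq hadjvx ?_ ?_)
        · intro i
          exact ⟨Ne.symm (p i).1.prop, Ne.symm (p i).2.prop, (hx1 i).1, (hx1 i).2⟩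
        · exact hx2
      -- edge counting under vertex deletion
      have hE' : G'.edgeSet.ncard = G'.edgeFinset.card := by
        rw [← SimpleGraph.coe_edgeFinset, Set.ncard_coe_finset]
      have hdel : G.edgeFinset.card ≤ G'.edgeFinset.card + G.degree v := by
        have hsplit := Finset.card_filter_add_card_filter_not
          (s := G.edgeFinset) (p := fun e => v ∈ e)
        have hindeg : (G.edgeFinset.filter (fun e => v ∈ e)).card = G.degree v := by
          rw [← SimpleGraph.incidenceFinset_eq_filter,
            SimpleGraph.card_incidenceFinset_eq_degree]
        have hmapped : G.edgeFinset.filter (fun e => ¬ v ∈ e) ⊆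
            G'.edgeFinset.image (Sym2.map (fun x : V' => (x : V))) := by
          intro e he
          rw [Finset.mem_filter] at he
          obtain ⟨heE, hev⟩ := he
          revert heE hev
          refine Sym2.ind (fun a b => ?_) e
          intro heE hev
          rw [Sym2.mem_iff] at hev
          push_neg at hev
          refine Finset.mem_image.mpr
            ⟨s((⟨a, fun h => hev.1 h.symm⟩ : V'), (⟨b, fun h => hev.2 h.symm⟩ : V')), ?_, ?_⟩
          · have hadjab : G.Adj a b :=
              (SimpleGraph.mem_edgeSet G).mp (SimpleGraph.mem_edgeFinset.mp heE)
            exact SimpleGraph.mem_edgeFinset.mpr ((SimpleGraph.mem_edgeSet G').mpr hadjab)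
          · rw [Sym2.map_pair_eq]
        calc G.edgeFinset.card
            = (G.edgeFinset.filter (fun e => v ∈ e)).card
              + (G.edgeFinset.filter (fun e => ¬ v ∈ e)).card := hsplit.symm
          _ ≤ G.degree v + G'.edgeFinset.card :=
            add_le_add (le_of_eq hindeg)
              (le_trans (Finset.card_le_card hmapped) Finset.card_image_le)
          _ = G'.edgeFinset.card + G.degree v := add_comm _ _
      have hIH := IH V' G' c' hprop' hno'
      have hV' : Fintype.card V' = n - 1 := by
        show Fintype.card {x : V // x ≠ v} = n - 1
        rw [Fintype.card_subtype]
        have heq : (Finset.univ.filter (fun x : V => x ≠ v)) = Finset.univ.erase v := by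
          ext x
          simp [Finset.mem_erase, and_comm]
        rw [heq, Finset.card_erase_of_mem (Finset.mem_univ v), Finset.card_univ]
      have hn1 : 1 ≤ n := by
        rw [hn]
        exact Fintype.card_pos_iff.mpr ⟨v⟩
      rw [hE', hV'] at hIH
      have harith : n - 1 + 4 * K + 1 = n + 4 * K := by omega
      rw [harith] at hIH
      have hdegn : G.degree v + 1 ≤ n := G.degree_lt_card_verts v
      have hexp : (K + 1) * (n + 4 * (K + 1) + 1) = K * (n + 4 * K) + 9 * K + n + 5 := by ring
      rw [hE, hexp]
      linarith [hdel, hIH, hdegn]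
    · -- CASE 3 : all degrees at most 3(K+1); count via a maximum rainbow matching
      push_neg at hΔ
      set t := K + 1 with ht
      haveI : DecidablePred (RM G c) := fun _ => Classical.propDecidable _
      set r := Nat.findGreatest (RM G c) t with hrdef
      have hrt : r ≤ t := Nat.findGreatest_le t
      have hr : RM G c r := Nat.findGreatest_spec (Nat.zero_le t) (rm_zero G c)
      have hr1 : ¬ RM G c (r + 1) := by
        rcases eq_or_lt_of_le hrt with h | h
        · rw [h]; exact hno
        · exact Nat.findGreatest_is_greatest (P := RM G c) (n := t) (by omega) (by omega)
      obtain ⟨p, hpadj, hpdisj, hpcol⟩ := hr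
      set U : Finset V := Finset.univ.biUnion (fun i : Fin r => {(p i).1, (p i).2}) with hUdef
      have hUcard : U.card ≤ 2 * r := by
        calc U.card ≤ ∑ i : Fin r, ({(p i).1, (p i).2} : Finset V).card :=
            Finset.card_biUnion_le
          _ ≤ ∑ _i : Fin r, 2 :=
            Finset.sum_le_sum (fun i _ => (Finset.card_insert_le _ _).trans (by simp))
          _ = 2 * r := by simp [mul_comm]
      have hUmem1 : ∀ i, (p i).1 ∈ U := fun i =>
        Finset.mem_biUnion.mpr ⟨i, Finset.mem_univ _, by simp⟩
      have hUmem2 : ∀ i, (p i).2 ∈ U := fun i =>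
        Finset.mem_biUnion.mpr ⟨i, Finset.mem_univ _, by simp⟩
      set EW := G.edgeFinset.filter (fun e => ∀ x ∈ e, x ∉ U) with hEW
      set ET := G.edgeFinset.filter (fun e => ¬ ∀ x ∈ e, x ∉ U) with hET
      have hsplit : EW.card + ET.card = G.edgeFinset.card :=
        Finset.card_filter_add_card_filter_not _
      set CS := (Finset.univ : Finset (Fin r)).image (fun i => c s((p i).1, (p i).2)) with hCS
      have hCScard : CS.card ≤ r := Finset.card_image_le.trans (by simp)
      have hEWc : ∀ e ∈ EW, c e ∈ CS := by
        intro e he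
        by_contra hce
        rw [hEW, Finset.mem_filter] at he
        obtain ⟨heE, hWW⟩ := he
        revert hce heE hWW
        refine Sym2.ind (fun a b => ?_) e
        intro hce heE hWW
        have hadj : G.Adj a b := (SimpleGraph.mem_edgeSet _).mp (SimpleGraph.mem_edgeFinset.mp heE)
        refine hr1 (rm_extend ⟨hpadj, hpdisj, hpcol⟩ hadj ?_ ?_)
        · intro i
          have ha : a ∉ U := hWW a (by simp)
          have hb : b ∉ U := hWW b (by simp)
          exact ⟨fun h => ha (h ▸ hUmem1 i), fun h => ha (h ▸ hUmem2 i),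
            fun h => hb (h ▸ hUmem1 i), fun h => hb (h ▸ hUmem2 i)⟩
        · intro i hci
          exact hce (Finset.mem_image.mpr ⟨i, Finset.mem_univ _, hci.symm⟩)
      set W := (Finset.univ : Finset V) \ U with hW
      have hwdeg : ∀ w : V, (EW.filter (fun e => w ∈ e)).card ≤ r := by
        intro w
        refine le_trans (Finset.card_le_card_of_injOn c ?_ ?_) hCScard
        · intro e he
          exact hEWc e (Finset.mem_filter.mp he).1
        · intro e1 h1 e2 h2 hc12
          simp only [Finset.coe_filter, Set.mem_setOf_eq] at h1 h2
          by_contra hne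
          have he1 : e1 ∈ G.edgeSet :=
            SimpleGraph.mem_edgeFinset.mp (Finset.mem_filter.mp h1.1).1
          have he2 : e2 ∈ G.edgeSet :=
            SimpleGraph.mem_edgeFinset.mp (Finset.mem_filter.mp h2.1).1
          exact hprop he1 he2 hne ⟨w, h1.2, h2.2⟩ hc12
      have hdouble : 2 * EW.card ≤ W.card * r := by
        have step2 : ∀ e ∈ EW, (W.filter (fun w => w ∈ e)).card = 2 := by
          intro e he
          rw [hEW, Finset.mem_filter] at he
          obtain ⟨heE, hWW⟩ := he
          revert heE hWW
          refine Sym2.ind (fun a b => ?_) e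
          intro heE hWW
          have hadj : G.Adj a b :=
            (SimpleGraph.mem_edgeSet _).mp (SimpleGraph.mem_edgeFinset.mp heE)
          have hane : a ≠ b := hadj.ne
          have ha : a ∈ W := by
            rw [hW, Finset.mem_sdiff]; exact ⟨Finset.mem_univ _, hWW a (by simp)⟩
          have hb : b ∈ W := by
            rw [hW, Finset.mem_sdiff]; exact ⟨Finset.mem_univ _, hWW b (by simp)⟩
          have hfil : W.filter (fun w => w ∈ s(a, b)) = {a, b} := by
            ext x
            rw [Finset.mem_filter, Sym2.mem_iff, Finset.mem_insert, Finset.mem_singleton]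
            constructor
            · rintro ⟨-, h⟩; exact h
            · rintro (rfl | rfl)
              · exact ⟨ha, Or.inl rfl⟩
              · exact ⟨hb, Or.inr rfl⟩
          rw [hfil, Finset.card_pair hane]
        have step1 : ∑ w ∈ W, (EW.filter (fun e => w ∈ e)).card
            = ∑ e ∈ EW, (W.filter (fun w => w ∈ e)).card := by
          simp_rw [Finset.card_filter]
          exact Finset.sum_comm
        calc 2 * EW.card = ∑ _e ∈ EW, 2 := by rw [Finset.sum_const, smul_eq_mul, mul_comm]
          _ = ∑ e ∈ EW, (W.filter (fun w => w ∈ e)).card :=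
            (Finset.sum_congr rfl step2).symm
          _ = ∑ w ∈ W, (EW.filter (fun e => w ∈ e)).card := step1.symm
          _ ≤ ∑ _w ∈ W, r := Finset.sum_le_sum (fun w _ => hwdeg w)
          _ = W.card * r := by rw [Finset.sum_const, smul_eq_mul]
      have hWn : W.card ≤ n := Finset.card_le_univ W
      have hETbound : ET.card ≤ U.card * (3 * t) := by
        have hsub : ET ⊆ U.biUnion (fun u => G.incidenceFinset u) := by
          intro e he
          rw [hET, Finset.mem_filter] at he
          obtain ⟨heE, hnot⟩ := he
          push_neg at hnot
          obtain ⟨x, hxe, hxU⟩ := hnot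
          refine Finset.mem_biUnion.mpr ⟨x, hxU, ?_⟩
          rw [SimpleGraph.mem_incidenceFinset]
          exact ⟨SimpleGraph.mem_edgeFinset.mp heE, hxe⟩
        calc ET.card ≤ _ := Finset.card_le_card hsub
          _ ≤ ∑ u ∈ U, (G.incidenceFinset u).card := Finset.card_biUnion_le
          _ = ∑ u ∈ U, G.degree u := by
            simp [SimpleGraph.card_incidenceFinset_eq_degree]
          _ ≤ ∑ _u ∈ U, 3 * t := Finset.sum_le_sum (fun u _ => by have := hΔ u; omega)
          _ = U.card * (3 * t) := by rw [Finset.sum_const, smul_eq_mul]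
      rw [hE]
      by_cases hbig : 4 * t ≤ n + 2
      · have c1 : W.card * r ≤ n * t := Nat.mul_le_mul hWn hrt
        have c2 : U.card * (3 * t) ≤ 2 * r * (3 * t) :=
          Nat.mul_le_mul hUcard (le_refl _)
        have c3 : 2 * r * (3 * t) ≤ 2 * t * (3 * t) :=
          Nat.mul_le_mul (by omega) (le_refl _)
        have c4 : 4 * t * t ≤ (n + 2) * t := Nat.mul_le_mul hbig (le_refl _)
        nlinarith [hsplit, hdouble, hETbound, c1, c2, c3, c4]
      · have hhs : ∑ v : V, G.degree v = 2 * G.edgeFinset.card :=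
          G.sum_degrees_eq_twice_card_edges
        have hdegs : ∑ v : V, G.degree v ≤ n * (3 * t) := by
          calc ∑ v : V, G.degree v ≤ ∑ _v : V, 3 * t :=
              Finset.sum_le_sum (fun v _ => by have := hΔ v; omega)
            _ = n * (3 * t) := by
              rw [Finset.sum_const, smul_eq_mul, Finset.card_univ]
        have c5 : t * n ≤ t * (4 * t) := Nat.mul_le_mul (le_refl _) (by omega)
        nlinarith [hhs, hdegs, c5]

end RainbowAux

/-- For all positive integers `n` and `k`, `ex*(n, M_k) ≤ n(k-1) + (k-1)(4k-3)`;
in particular `ex*(n, M_k) = n(k-1) + O(k²)`. -/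
theorem rainbowTuran_matching_weak (n k : ℕ) (hn : 0 < n) (hk : 0 < k) :
    ∀ m ∈ rainbowExSet n (matchingGraph k),
      m ≤ n * (k - 1) + (k - 1) * (4 * k - 3) := by
  intro m hm
  obtain ⟨G, c, hprop, hno, hcard⟩ := hm
  obtain ⟨k', rfl⟩ : ∃ k', k = k' + 1 := ⟨k - 1, by omega⟩
  have hRM : ¬ RainbowAux.RM G c (k' + 1) := fun h => hno (RainbowAux.rm_to_copy h)
  have hkey := RainbowAux.key k' (Fin n) G c hprop hRM
  rw [Fintype.card_fin] at hkey
  have h1 : k' + 1 - 1 = k' := by omega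
  have h2 : 4 * (k' + 1) - 3 = 4 * k' + 1 := by omega
  rw [h1, h2, ← hcard]
  calc G.edgeSet.ncard ≤ k' * (n + 4 * k' + 1) := hkey
    _ = n * k' + k' * (4 * k' + 1) := by ring
end

section
/- For every positive integer k and every n ≥ 9k², the rainbow Turán number of the matching with k edges satisfies ex*(n, M_k) = C(k−1, 2) + (k−1)(n−k+1), where C(k−1,2) denotes the binomial coefficient (k−1 choose 2). -/
open SimpleGraph Finset

set_option maxHeartbeats 1000000

/-- ℕ-indexed rainbow matching of size m. -/
def RMN {V : Type*} (G : SimpleGraph V) (c : Sym2 V → ℕ) (m : ℕ) : Prop :=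
  ∃ p : ℕ → V × V,
    (∀ i < m, G.Adj (p i).1 (p i).2) ∧
    (∀ i < m, ∀ j < m, i ≠ j → (p i).1 ≠ (p j).1 ∧ (p i).2 ≠ (p j).2 ∧
      c (s((p i).1, (p i).2)) ≠ c (s((p j).1, (p j).2))) ∧
    (∀ i < m, ∀ j < m, (p i).1 ≠ (p j).2)

lemma matchingGraph_edgeSet {k : ℕ} {e : Sym2 (Fin (2*k))} :
    e ∈ (matchingGraph k).edgeSet ↔
      ∃ i : ℕ, ∃ h : i < k,
        e = s(⟨2*i, by omega⟩, (⟨2*i+1, by omega⟩ : Fin (2*k))) := by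
  induction e using Sym2.ind with
  | _ a b =>
    simp only [mem_edgeSet, matchingGraph, fromRel_adj]
    constructor
    · rintro ⟨hab, h⟩
      have h2 : (a:ℕ)/2 = (b:ℕ)/2 := by omega
      refine ⟨(a:ℕ)/2, by omega, ?_⟩
      have hab' : (a:ℕ) ≠ (b:ℕ) := fun h => hab (Fin.ext h)
      rcases Nat.lt_or_ge (a:ℕ) (b:ℕ) with hl | hl
      · have ha : (a:ℕ) = 2*((a:ℕ)/2) := by omega
        have hb : (b:ℕ) = 2*((a:ℕ)/2)+1 := by omega
        rw [Sym2.eq_iff]; exact Or.inl ⟨Fin.ext ha, Fin.ext hb⟩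
      · have ha : (a:ℕ) = 2*((a:ℕ)/2)+1 := by omega
        have hb : (b:ℕ) = 2*((a:ℕ)/2) := by omega
        rw [Sym2.eq_iff]; exact Or.inr ⟨Fin.ext ha, Fin.ext hb⟩
    · rintro ⟨i, hi, he⟩
      rw [Sym2.eq_iff] at he
      rcases he with ⟨h1, h2⟩ | ⟨h1, h2⟩ <;> subst h1 <;> subst h2 <;>
        exact ⟨by simp only [ne_eq, Fin.mk.injEq]; omega, by left; simp only [Fin.val_mk]; omega⟩

lemma rmn_to_copy {n k : ℕ} {G : SimpleGraph (Fin n)} {c : Sym2 (Fin n) → ℕ}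
    (h : RMN G c k) : HasRainbowCopy (matchingGraph k) G c := by
  obtain ⟨p, hadj, hdis, hcross⟩ := h
  set f : Fin (2*k) → Fin n :=
    fun a => if (a:ℕ) % 2 = 0 then (p ((a:ℕ)/2)).1 else (p ((a:ℕ)/2)).2 with hf
  have hdiv : ∀ a : Fin (2*k), (a:ℕ)/2 < k := fun a => by omega
  have hinj : Function.Injective f := by
    intro a b hab
    have ha2 := hdiv a; have hb2 := hdiv b
    simp only [hf] at hab
    by_cases pa : (a:ℕ) % 2 = 0 <;> by_cases pb : (b:ℕ) % 2 = 0 <;>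
      simp [pa, pb] at hab
    · by_cases hij : (a:ℕ)/2 = (b:ℕ)/2
      · exact Fin.ext (by omega)
      · exact absurd hab (hdis _ ha2 _ hb2 hij).1
    · exact absurd hab (hcross _ ha2 _ hb2)
    · exact absurd hab.symm (hcross _ hb2 _ ha2)
    · by_cases hij : (a:ℕ)/2 = (b:ℕ)/2
      · exact Fin.ext (by omega)
      · exact absurd hab (hdis _ ha2 _ hb2 hij).2.1
  refine ⟨⟨f, hinj⟩, ?_, ?_⟩
  · intro a b hab
    rw [matchingGraph, fromRel_adj] at hab
    obtain ⟨hne, hd⟩ := hab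
    have hd : (a:ℕ)/2 = (b:ℕ)/2 := by omega
    have hne' : (a:ℕ) ≠ (b:ℕ) := fun h => hne (Fin.ext h)
    have hi := hdiv a
    simp only [Function.Embedding.coeFn_mk, hf]
    by_cases pa : (a:ℕ) % 2 = 0
    · have pb : (b:ℕ) % 2 = 1 := by omega
      simp [pa, pb, ← hd]
      exact hadj _ hi
    · have pb : (b:ℕ) % 2 = 0 := by omega
      simp [pa, pb, ← hd]
      exact (hadj _ hi).symm
  · intro e₁ he₁ e₂ he₂ hce
    rw [matchingGraph_edgeSet] at he₁ he₂
    obtain ⟨i, hi, rfl⟩ := he₁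
    obtain ⟨j, hj, rfl⟩ := he₂
    have hmap : ∀ (i : ℕ) (hi : i < k),
        (s(⟨2*i, by omega⟩, (⟨2*i+1, by omega⟩ : Fin (2*k)))).map f
          = s((p i).1, (p i).2) := by
      intro i hi
      have e1 : (2*i+1) % 2 = 1 := by omega
      have e2 : (2*i+1)/2 = i := by omega
      have e3 : (2*i) % 2 = 0 := by omega
      have e4 : (2*i)/2 = i := by omega
      have h1 : f ⟨2*i, by omega⟩ = (p i).1 := by simp [hf, e3, e4]
      have h2 : f ⟨2*i+1, by omega⟩ = (p i).2 := by simp [hf, e1, e2]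
      simp [Sym2.map_pair_eq, h1, h2]
    simp only [Function.Embedding.coeFn_mk] at hce
    rw [hmap i hi, hmap j hj] at hce
    by_cases hij : i = j
    · subst hij; rfl
    · exact absurd hce (hdis _ hi _ hj hij).2.2

lemma greedy_ext {n : ℕ} {G : SimpleGraph (Fin n)} [DecidableRel G.Adj]
    {c : Sym2 (Fin n) → ℕ} (hc : IsProperEdgeColoring G c) (k : ℕ) :
    ∀ (y : ℕ) (Y : Finset (Fin n)) (m : ℕ) (p : ℕ → Fin n × Fin n),
    Y.card = y → m + y ≤ k →
    (∀ v ∈ Y, 4*k ≤ G.degree v) →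
    (∀ i < m, G.Adj (p i).1 (p i).2) →
    (∀ i < m, ∀ j < m, i ≠ j → (p i).1 ≠ (p j).1 ∧ (p i).2 ≠ (p j).2 ∧
      c (s((p i).1, (p i).2)) ≠ c (s((p j).1, (p j).2))) →
    (∀ i < m, ∀ j < m, (p i).1 ≠ (p j).2) →
    (∀ i < m, (p i).1 ∉ Y ∧ (p i).2 ∉ Y) →
    RMN G c (m + y) := by
  intro y
  induction y with
  | zero =>
    intro Y m p _ _ _ h1 h2 h3 _
    exact ⟨p, h1, h2, h3⟩
  | succ y ih =>
    intro Y m p hYcard hmy hdeg h1 h2 h3 h4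
    classical
    have hYne : Y.Nonempty := by rw [← Finset.card_pos, hYcard]; omega
    obtain ⟨v, hv⟩ := hYne
    set badV : Finset (Fin n) :=
      Y ∪ (Finset.range m).biUnion (fun i => {(p i).1, (p i).2}) with hbadV
    set badC : Finset (Fin n) :=
      (G.neighborFinset v).filter
        (fun w => ∃ i, i < m ∧ c (s(v, w)) = c (s((p i).1, (p i).2)))
      with hbadC
    have hbadVcard : badV.card ≤ (y+1) + 2*m := by
      calc badV.card ≤ Y.card + ((Finset.range m).biUnion
            (fun i => {(p i).1, (p i).2})).card := Finset.card_union_le _ _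
        _ ≤ (y+1) + 2*m := by
            refine Nat.add_le_add (le_of_eq hYcard) ?_
            calc _ ≤ ∑ i ∈ Finset.range m, ({(p i).1, (p i).2} : Finset (Fin n)).card :=
                Finset.card_biUnion_le
              _ ≤ ∑ _i ∈ Finset.range m, 2 := by
                  exact Finset.sum_le_sum fun i _ => Finset.card_insert_le _ _ |>.trans
                    (by simp)
              _ = 2*m := by simp [mul_comm]
    have hbadCcard : badC.card ≤ m := by
      have : ∀ w ∈ badC, ∃ i, i < m ∧
          c (s(v, w)) = c (s((p i).1, (p i).2)) := by
        intro w hw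
        exact (Finset.mem_filter.mp hw).2
      have hmain : badC.card ≤ (Finset.range m).card := by
        refine Finset.card_le_card_of_injOn
          (fun w => if h : ∃ i, i < m ∧
              c (s(v, w)) = c (s((p i).1, (p i).2))
            then Classical.choose h else 0)
          (fun w hw => ?_) (fun w hw w' hw' heq => ?_)
        · obtain h := (Finset.mem_filter.mp hw).2
          simp only [dif_pos h]
          exact Finset.mem_range.mpr (Classical.choose_spec h).1
        · obtain h := (Finset.mem_filter.mp hw).2
          obtain h' := (Finset.mem_filter.mp hw').2
          simp only [dif_pos h, dif_pos h'] at heq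
          have hcc : c (s(v, w)) = c (s(v, w')) := by
            rw [(Classical.choose_spec h).2, (Classical.choose_spec h').2, heq]
          by_contra hne
          have hadjw : G.Adj v w := (SimpleGraph.mem_neighborFinset _ _ _).mp (Finset.mem_filter.mp hw).1
          have hadjw' : G.Adj v w' := (SimpleGraph.mem_neighborFinset _ _ _).mp (Finset.mem_filter.mp hw').1
          have hsym : (s(v, w) : Sym2 (Fin n)) ≠ s(v, w') := by
            intro hcontra
            exact hne (Sym2.congr_right.mp hcontra)
          exact hc (G.mem_edgeSet.mpr hadjw) (G.mem_edgeSet.mpr hadjw') hsym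
            ⟨v, by simp, by simp⟩ hcc
      simpa using hmain
    have hk1 : m + (y + 1) ≤ k := hmy
    have hNcard : 4*k ≤ (G.neighborFinset v).card := hdeg v hv
    have hgood : ((G.neighborFinset v) \ (badV ∪ badC)).Nonempty := by
      rw [← Finset.card_pos]
      have h5 := Finset.card_sdiff_add_card (G.neighborFinset v) (badV ∪ badC)
      have h6 : ((G.neighborFinset v) ∪ (badV ∪ badC)).card ≥ (G.neighborFinset v).card :=
        Finset.card_le_card Finset.subset_union_left
      have h7 := Finset.card_union_le badV badC
      omega
    obtain ⟨w, hw⟩ := hgood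
    rw [Finset.mem_sdiff, Finset.mem_union] at hw
    obtain ⟨hwN, hwbad⟩ := hw
    push_neg at hwbad
    obtain ⟨hwbadV, hwbadC⟩ := hwbad
    have hadjvw : G.Adj v w := (SimpleGraph.mem_neighborFinset _ _ _).mp hwN
    have hwY : w ∉ Y := fun h => hwbadV (Finset.mem_union_left _ h)
    have hwpts : ∀ i < m, w ≠ (p i).1 ∧ w ≠ (p i).2 := by
      intro i hi
      constructor <;> intro h <;> refine hwbadV (Finset.mem_union_right _ ?_) <;>
        refine Finset.mem_biUnion.mpr ⟨i, Finset.mem_range.mpr hi, ?_⟩ <;> simp [h]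
    have hwcol : ∀ i < m, c (s(v, w)) ≠ c (s((p i).1, (p i).2)) := by
      intro i hi h
      exact hwbadC (Finset.mem_filter.mpr ⟨hwN, ⟨i, hi, h⟩⟩)
    have hvpts : ∀ i < m, v ≠ (p i).1 ∧ v ≠ (p i).2 := by
      intro i hi
      obtain ⟨ha, hb⟩ := h4 i hi
      exact ⟨fun h => ha (h ▸ hv), fun h => hb (h ▸ hv)⟩
    set p' : ℕ → Fin n × Fin n := fun i => if i = m then (v, w) else p i with hp'
    have key : RMN G c ((m+1) + y) := by
      refine ih (Y.erase v) (m+1) p' ?_ (by omega) ?_ ?_ ?_ ?_ ?_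
      · rw [Finset.card_erase_of_mem hv, hYcard]; omega
      · exact fun u hu => hdeg u (Finset.mem_of_mem_erase hu)
      · intro i hi
        by_cases h : i = m
        · simp [hp', h]; exact hadjvw
        · have : i < m := by omega
          simp [hp', h]; exact h1 i this
      · intro i hi j hj hij
        by_cases hi' : i = m <;> by_cases hj' : j = m
        · omega
        · have hjm : j < m := by omega
          simp only [hp', hi', if_pos rfl, if_neg hj']
          exact ⟨(hvpts j hjm).1, (hwpts j hjm).2, hwcol j hjm⟩
        · have him : i < m := by omega
          simp only [hp', hj', if_pos rfl, if_neg hi']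
          exact ⟨(hvpts i him).1.symm, (hwpts i him).2.symm,
            (hwcol i him).symm⟩
        · have := h2 i (by omega) j (by omega) hij
          simpa [hp', hi', hj'] using this
      · intro i hi j hj
        by_cases hi' : i = m <;> by_cases hj' : j = m
        · simp only [hp', hi', hj', if_pos rfl]
          exact hadjvw.ne
        · have hjm : j < m := by omega
          simp only [hp', hi', if_pos rfl, if_neg hj']
          exact (hvpts j hjm).2
        · have him : i < m := by omega
          simp only [hp', hj', if_pos rfl, if_neg hi']
          exact ((hwpts i him).1).symm
        · have := h3 i (by omega) j (by omega)
          simpa [hp', hi', hj'] using this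
      · intro i hi
        by_cases h : i = m
        · simp only [hp', h, if_pos rfl]
          exact ⟨Finset.notMem_erase _ _, fun hw' => hwY (Finset.mem_of_mem_erase hw')⟩
        · have him : i < m := by omega
          simp only [hp', if_neg h]
          obtain ⟨ha, hb⟩ := h4 i him
          exact ⟨fun h' => ha (Finset.mem_of_mem_erase h'),
            fun h' => hb (Finset.mem_of_mem_erase h')⟩
    rw [show m + (y+1) = (m+1) + y by omega]
    exact key

/-- Edges of one color class are pairwise vertex-disjoint, so there are at most n/2. -/
lemma color_class_card {n : ℕ} {G : SimpleGraph (Fin n)} [DecidableRel G.Adj]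
    {c : Sym2 (Fin n) → ℕ} (hc : IsProperEdgeColoring G c) (γ : ℕ) :
    2 * ((G.edgeFinset).filter (fun e => c e = γ)).card ≤ n := by
  classical
  set S := (G.edgeFinset).filter (fun e => c e = γ) with hS
  set F : Sym2 (Fin n) → Finset (Fin n) := fun e => Finset.univ.filter (· ∈ e) with hF
  have hcard2 : ∀ e ∈ S, (F e).card = 2 := by
    intro e he
    have heE : e ∈ G.edgeSet := by
      rw [← mem_edgeFinset]; exact (Finset.mem_filter.mp he).1
    induction e using Sym2.ind with
    | _ a b =>
      have hab : a ≠ b := (G.mem_edgeSet.mp heE).ne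
      have : F (s(a, b)) = {a, b} := by
        ext z; simp [hF, Sym2.mem_iff]
      rw [this, Finset.card_insert_of_notMem (by simp [hab]), Finset.card_singleton]
  have hdisj : ∀ e₁ ∈ S, ∀ e₂ ∈ S, e₁ ≠ e₂ → Disjoint (F e₁) (F e₂) := by
    intro e₁ h₁ e₂ h₂ hne
    rw [Finset.disjoint_left]
    intro z hz₁ hz₂
    have hm₁ : z ∈ e₁ := by simpa [hF] using hz₁
    have hm₂ : z ∈ e₂ := by simpa [hF] using hz₂
    have he₁ : e₁ ∈ G.edgeSet := by
      rw [← mem_edgeFinset]; exact (Finset.mem_filter.mp h₁).1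
    have he₂ : e₂ ∈ G.edgeSet := by
      rw [← mem_edgeFinset]; exact (Finset.mem_filter.mp h₂).1
    exact hc he₁ he₂ hne ⟨z, hm₁, hm₂⟩
      (by rw [(Finset.mem_filter.mp h₁).2, (Finset.mem_filter.mp h₂).2])
  calc 2 * S.card = ∑ e ∈ S, (F e).card := by
        rw [Finset.sum_congr rfl hcard2, Finset.sum_const, smul_eq_mul, mul_comm]
    _ = (S.biUnion F).card := (Finset.card_biUnion (fun e h₁ e' h₂ => hdisj e h₁ e' h₂)).symm
    _ ≤ (Finset.univ : Finset (Fin n)).card := Finset.card_le_card (Finset.subset_univ _)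
    _ = n := by simp

lemma cover_count {n : ℕ} (G : SimpleGraph (Fin n)) [DecidableRel G.Adj]
    (X : Finset (Fin n)) [DecidablePred (fun e : Sym2 (Fin n) => ∃ v ∈ X, v ∈ e)] :
    2 * ((G.edgeFinset).filter (fun e => ∃ v ∈ X, v ∈ e)).card ≤
      X.card * (n - 1) + (n - X.card) * X.card := by
  classical
  set GX : SimpleGraph (Fin n) :=
    { Adj := fun u v => G.Adj u v ∧ (u ∈ X ∨ v ∈ X)
      symm := ⟨by intro u v ⟨h1, h2⟩; exact ⟨h1.symm, h2.symm⟩⟩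
      loopless := ⟨by intro u ⟨h1, _⟩; exact h1.ne rfl⟩ } with hGX
  have hEX : (G.edgeFinset).filter (fun e => ∃ v ∈ X, v ∈ e) = GX.edgeFinset := by
    ext e
    induction e using Sym2.ind with
    | _ a b =>
      simp only [Finset.mem_filter, mem_edgeFinset, mem_edgeSet, hGX]
      constructor
      · rintro ⟨hadj, v, hvX, hve⟩
        rw [Sym2.mem_iff] at hve
        exact ⟨hadj, by rcases hve with rfl | rfl; exact Or.inl hvX; exact Or.inr hvX⟩
      · rintro ⟨hadj, hor⟩
        refine ⟨hadj, ?_⟩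
        rcases hor with h | h
        · exact ⟨a, h, by simp⟩
        · exact ⟨b, h, by simp⟩
  rw [hEX, ← SimpleGraph.sum_degrees_eq_twice_card_edges]
  have hdeg1 : ∀ v, GX.degree v ≤ n - 1 := by
    intro v
    have := GX.degree_lt_card_verts v
    simp only [Fintype.card_fin] at this
    omega
  have hdeg2 : ∀ v ∉ X, GX.degree v ≤ X.card := by
    intro v hv
    rw [← SimpleGraph.card_neighborFinset_eq_degree]
    refine Finset.card_le_card ?_
    intro u hu
    rw [SimpleGraph.mem_neighborFinset] at hu
    rcases hu.2 with h | h
    · exact absurd h hv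
    · exact h
  calc ∑ v, GX.degree v
      = ∑ v ∈ Finset.univ.filter (· ∈ X), GX.degree v
        + ∑ v ∈ Finset.univ.filter (· ∉ X), GX.degree v :=
        (Finset.sum_filter_add_sum_filter_not _ _ _).symm
    _ ≤ ∑ _v ∈ Finset.univ.filter (· ∈ X), (n-1)
        + ∑ v ∈ Finset.univ.filter (· ∉ X), X.card := by
        refine Nat.add_le_add (Finset.sum_le_sum fun v _ => hdeg1 v)
          (Finset.sum_le_sum fun v hv => hdeg2 v (by simpa using hv))
    _ = X.card * (n-1) + (n - X.card) * X.card := by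
        rw [Finset.sum_const, Finset.sum_const, smul_eq_mul, smul_eq_mul]
        congr 1
        · congr 1
          rw [Finset.filter_univ_mem]
        · congr 1
          have : Finset.univ.filter (· ∉ X) = Finset.univ \ X := by
            ext v; simp
          rw [this, Finset.card_sdiff_of_subset (Finset.subset_univ _)]
          simp

/-- The extremal graph: all edges meeting the first `k-1` vertices. -/
def extrGraph (n a : ℕ) : SimpleGraph (Fin n) where
  Adj u v := u ≠ v ∧ ((u : ℕ) < a ∨ (v : ℕ) < a)
  symm := ⟨by rintro u v ⟨h1, h2⟩; exact ⟨h1.symm, h2.symm⟩⟩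
  loopless := ⟨by rintro u ⟨h1, _⟩; exact h1 rfl⟩

/-- injective coloring -/
noncomputable def injColoring (n : ℕ) : Sym2 (Fin n) → ℕ :=
  Sym2.lift ⟨fun u v => min (u:ℕ) (v:ℕ) * n + max (u:ℕ) (v:ℕ),
    fun u v => by simp [Nat.min_comm, Nat.max_comm]⟩

lemma injColoring_inj {n : ℕ} : Function.Injective (injColoring n) := by
  intro e₁ e₂ h
  induction e₁ using Sym2.ind with
  | _ u v =>
    induction e₂ using Sym2.ind with
    | _ u' v' =>
      simp only [injColoring, Sym2.lift_mk] at h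
      have hu : (u:ℕ) < n := u.isLt
      have hv : (v:ℕ) < n := v.isLt
      have hu' : (u':ℕ) < n := u'.isLt
      have hv' : (v':ℕ) < n := v'.isLt
      have hmax : max (u:ℕ) (v:ℕ) < n := by omega
      have hmax' : max (u':ℕ) (v':ℕ) < n := by omega
      have hn0 : 0 < n := by omega
      have hdiv : min (u:ℕ) (v:ℕ) = min (u':ℕ) (v':ℕ) ∧
          max (u:ℕ) (v:ℕ) = max (u':ℕ) (v':ℕ) := by
        have h2 := congrArg (· % n) h
        rw [Nat.mul_add_mod', Nat.mul_add_mod',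
          Nat.mod_eq_of_lt hmax, Nat.mod_eq_of_lt hmax'] at h2
        have h1 : (↑u ⊓ ↑v) * n = (↑u' ⊓ ↑v') * n := by omega
        have h1' : (↑u ⊓ ↑v : ℕ) = ↑u' ⊓ ↑v' :=
          Nat.eq_of_mul_eq_mul_right hn0 h1
        omega
      rw [Sym2.eq_iff]
      obtain ⟨h1, h2⟩ := hdiv
      rcases Nat.le_total (u:ℕ) (v:ℕ) with hle | hle <;>
        rcases Nat.le_total (u':ℕ) (v':ℕ) with hle' | hle'
      · left; exact ⟨Fin.ext (by omega), Fin.ext (by omega)⟩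
      · right; exact ⟨Fin.ext (by omega), Fin.ext (by omega)⟩
      · right; exact ⟨Fin.ext (by omega), Fin.ext (by omega)⟩
      · left; exact ⟨Fin.ext (by omega), Fin.ext (by omega)⟩

lemma extr_no_copy {n k : ℕ} (hk : 0 < k) (hkn : k ≤ n) :
    ∀ (f : Fin (2*k) ↪ Fin n),
      ¬ (∀ ⦃a b⦄, (matchingGraph k).Adj a b → (extrGraph n (k-1)).Adj (f a) (f b)) := by
  intro f hf
  classical
  -- each matching edge has an endpoint with value < k-1
  set g : Fin k → Fin n := fun i =>
    if ((f ⟨2*(i:ℕ), by omega⟩ : Fin n) : ℕ) < k-1 then f ⟨2*(i:ℕ), by omega⟩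
      else f ⟨2*(i:ℕ)+1, by omega⟩ with hg
  have hadj : ∀ i : Fin k, (extrGraph n (k-1)).Adj (f ⟨2*(i:ℕ), by omega⟩)
      (f ⟨2*(i:ℕ)+1, by omega⟩) := by
    intro i
    refine hf ?_
    rw [matchingGraph, fromRel_adj]
    constructor
    · simp only [ne_eq, Fin.mk.injEq]; omega
    · left; simp only [Fin.val_mk]; omega
  have hglt : ∀ i : Fin k, ((g i : Fin n) : ℕ) < k - 1 := by
    intro i
    rw [hg]
    obtain ⟨_, h2⟩ := hadj i
    by_cases h : ((f ⟨2*(i:ℕ), by omega⟩ : Fin n) : ℕ) < k-1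
    · simp only [if_pos h]; exact h
    · simp only [if_neg h]
      omega
  have hginj : Function.Injective g := by
    intro i j hij
    by_contra hne
    have hij' : (i:ℕ) ≠ (j:ℕ) := fun h => hne (Fin.ext h)
    rw [hg] at hij
    simp only at hij
    have hfi : ∀ (a b : Fin (2*k)), a ≠ b → f a ≠ f b := fun a b hab h =>
      hab (f.injective h)
    by_cases h1 : ((f ⟨2*(i:ℕ), by omega⟩ : Fin n) : ℕ) < k-1 <;>
      by_cases h2 : ((f ⟨2*(j:ℕ), by omega⟩ : Fin n) : ℕ) < k-1 <;>
      simp only [if_pos, if_neg, h1, h2, if_true, if_false] at hij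
    · exact hfi _ _ (by simp only [ne_eq, Fin.mk.injEq]; omega) hij
    · exact hfi _ _ (by simp only [ne_eq, Fin.mk.injEq]; omega) hij
    · exact hfi _ _ (by simp only [ne_eq, Fin.mk.injEq]; omega) hij
    · exact hfi _ _ (by simp only [ne_eq, Fin.mk.injEq]; omega) hij
  -- counting: k distinct elements with value < k-1
  have hcard : (Finset.univ.image g).card = k := by
    rw [Finset.card_image_of_injective _ hginj, Finset.card_univ, Fintype.card_fin]
  have hsub : Finset.univ.image g ⊆ Finset.univ.filter (fun v : Fin n => (v:ℕ) < k-1) := by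
    intro v hv
    obtain ⟨i, _, rfl⟩ := Finset.mem_image.mp hv
    exact Finset.mem_filter.mpr ⟨Finset.mem_univ _, hglt i⟩
  have hfilt : (Finset.univ.filter (fun v : Fin n => (v:ℕ) < k-1)).card = k - 1 := by
    have himg : (Finset.univ.filter (fun v : Fin n => (v:ℕ) < k-1)).image Fin.val
        = Finset.range (k-1) := by
      ext z
      simp only [Finset.mem_image, Finset.mem_filter, Finset.mem_univ, true_and,
        Finset.mem_range]
      constructor
      · rintro ⟨v, hv, rfl⟩; exact hv
      · intro hz; exact ⟨⟨z, by omega⟩, hz, rfl⟩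
    have := Finset.card_image_of_injective
      (Finset.univ.filter (fun v : Fin n => (v:ℕ) < k-1)) Fin.val_injective
    rw [himg, Finset.card_range] at this
    omega
  have := Finset.card_le_card hsub
  rw [hcard, hfilt] at this
  omega

lemma two_mul_choose_two' (a : ℕ) : 2 * Nat.choose a 2 = a * (a - 1) := by
  induction a with
  | zero => simp
  | succ a ih =>
    rw [Nat.choose_succ_succ, Nat.mul_add, ih, Nat.choose_one_right]
    rcases a with _ | b
    · simp
    · simp only [Nat.succ_sub_one]
      ring

lemma two_mul_B {n k : ℕ} (hk : 0 < k) (hkn : k ≤ n) :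
    2 * (Nat.choose (k-1) 2 + (k-1)*(n-k+1))
      = (k-1) * (n-1) + (n - (k-1)) * (k-1) := by
  have hnk1 : n - k + 1 = n - (k-1) := by omega
  rw [hnk1, Nat.mul_add, two_mul_choose_two']
  set a := k - 1 with hadef
  rcases Nat.eq_zero_or_pos a with ha | ha
  · simp [ha]
  · obtain ⟨m, hm⟩ : ∃ m, a + m = n := ⟨n - a, by omega⟩
    have h1 : n - 1 = (a - 1) + m := by omega
    have h2 : n - a = m := by omega
    obtain ⟨b, hb⟩ : ∃ b, b + 1 = a := ⟨a - 1, by omega⟩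
    rw [h1, h2, ← hb]
    simp only [Nat.add_sub_cancel]
    ring

lemma filter_lt_card {n a : ℕ} (han : a ≤ n) :
    (Finset.univ.filter (fun v : Fin n => (v:ℕ) < a)).card = a := by
  have himg : (Finset.univ.filter (fun v : Fin n => (v:ℕ) < a)).image Fin.val
      = Finset.range a := by
    ext z
    simp only [Finset.mem_image, Finset.mem_filter, Finset.mem_univ, true_and,
      Finset.mem_range]
    constructor
    · rintro ⟨v, hv, rfl⟩; exact hv
    · intro hz; exact ⟨⟨z, by omega⟩, hz, rfl⟩
  have := Finset.card_image_of_injective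
    (Finset.univ.filter (fun v : Fin n => (v:ℕ) < a)) Fin.val_injective
  rw [himg, Finset.card_range] at this
  omega

lemma extr_card {n k : ℕ} (hk : 0 < k) (hkn : k ≤ n) :
    (extrGraph n (k-1)).edgeSet.ncard = Nat.choose (k-1) 2 + (k-1)*(n-k+1) := by
  classical
  set a := k - 1 with hadef
  have han : a ≤ n := by omega
  set G := extrGraph n a with hGdef
  letI : DecidableRel G.Adj := Classical.decRel _
  have hAdj : ∀ u v : Fin n, G.Adj u v ↔ (u ≠ v ∧ ((u:ℕ) < a ∨ (v:ℕ) < a)) :=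
    fun u v => Iff.rfl
  have hdeg1 : ∀ v : Fin n, (v:ℕ) < a → G.degree v = n - 1 := by
    intro v hv
    rw [← SimpleGraph.card_neighborFinset_eq_degree]
    have : G.neighborFinset v = Finset.univ.erase v := by
      ext u
      rw [SimpleGraph.mem_neighborFinset, hAdj, Finset.mem_erase]
      constructor
      · rintro ⟨h1, _⟩; exact ⟨fun h => h1 h.symm, Finset.mem_univ u⟩
      · rintro ⟨h1, _⟩; exact ⟨fun h => h1 h.symm, Or.inl hv⟩
    rw [this, Finset.card_erase_of_mem (Finset.mem_univ v), Finset.card_univ,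
      Fintype.card_fin]
  have hdeg2 : ∀ v : Fin n, ¬ (v:ℕ) < a → G.degree v = a := by
    intro v hv
    rw [← SimpleGraph.card_neighborFinset_eq_degree]
    have : G.neighborFinset v = Finset.univ.filter (fun u : Fin n => (u:ℕ) < a) := by
      ext u
      rw [SimpleGraph.mem_neighborFinset, hAdj, Finset.mem_filter]
      constructor
      · rintro ⟨h1, h2⟩
        exact ⟨Finset.mem_univ u, by omega⟩
      · rintro ⟨_, h2⟩
        refine ⟨fun h => ?_, Or.inr h2⟩
        rw [h] at hv; exact hv h2
    rw [this, filter_lt_card han]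
  have hsum : ∑ v, G.degree v = a * (n-1) + (n - a) * a := by
    rw [← Finset.sum_filter_add_sum_filter_not Finset.univ (fun v : Fin n => (v:ℕ) < a)]
    have e1 : ∑ v ∈ Finset.univ.filter (fun v : Fin n => (v:ℕ) < a), G.degree v
        = a * (n-1) := by
      rw [Finset.sum_congr rfl (fun v hv => hdeg1 v (Finset.mem_filter.mp hv).2),
        Finset.sum_const, smul_eq_mul, filter_lt_card han]
    have e2 : ∑ v ∈ Finset.univ.filter (fun v : Fin n => ¬ (v:ℕ) < a), G.degree v
        = (n - a) * a := by
      rw [Finset.sum_congr rfl (fun v hv => hdeg2 v (Finset.mem_filter.mp hv).2),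
        Finset.sum_const, smul_eq_mul]
      congr 1
      have : Finset.univ.filter (fun v : Fin n => ¬ (v:ℕ) < a)
          = Finset.univ \ Finset.univ.filter (fun v : Fin n => (v:ℕ) < a) := by
        ext v; simp
      rw [this, Finset.card_sdiff_of_subset (Finset.filter_subset _ _), filter_lt_card han,
        Finset.card_univ, Fintype.card_fin]
    rw [e1, e2]
  have hhs := SimpleGraph.sum_degrees_eq_twice_card_edges G
  rw [hsum] at hhs
  have hcard : G.edgeSet.ncard = G.edgeFinset.card := by
    rw [← SimpleGraph.coe_edgeFinset, Set.ncard_coe_finset]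
  have h2B := two_mul_B (n := n) (k := k) hk hkn
  rw [← hadef] at h2B
  rw [hcard]
  omega

lemma two_mul_choose_two (a : ℕ) : 2 * Nat.choose a 2 = a * (a - 1) := by
  induction a with
  | zero => simp
  | succ a ih =>
    rw [Nat.choose_succ_succ, Nat.mul_add, ih, Nat.choose_one_right]
    rcases a with _ | b
    · simp
    · simp only [Nat.succ_sub_one]
      ring

lemma upper_bound {k n : ℕ} (hk : 0 < k) (hn : 9*k^2 ≤ n) (G : SimpleGraph (Fin n))
    (c : Sym2 (Fin n) → ℕ) (hc : IsProperEdgeColoring G c) (hno : ¬ RMN G c k) :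
    G.edgeSet.ncard ≤ Nat.choose (k-1) 2 + (k-1)*(n-k+1) := by
  classical
  have hkn : k ≤ n := by
    have h1 : k * 1 ≤ k * k := Nat.mul_le_mul_left k hk
    have h2 : 1 * (k*k) ≤ 9 * (k*k) := Nat.mul_le_mul_right (k*k) (by norm_num)
    have h3 : 9 * k^2 = 9 * (k*k) := by ring
    omega
  have hn0 : 0 < n := by omega
  set X := Finset.univ.filter (fun v : Fin n => 4*k ≤ G.degree v) with hXdef
  set x := X.card with hxdef
  have hdegX : ∀ v ∈ X, 4*k ≤ G.degree v := fun v hv => (Finset.mem_filter.mp hv).2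
  have hdegnX : ∀ v : Fin n, v ∉ X → G.degree v ≤ 4*k - 1 := by
    intro v hv
    by_contra h
    exact hv (Finset.mem_filter.mpr ⟨Finset.mem_univ v, by omega⟩)
  -- Step A : x < k
  have hxk : x < k := by
    by_contra hxge
    push_neg at hxge
    obtain ⟨Y, hYX, hYcard⟩ := Finset.exists_subset_card_eq hxge
    have := greedy_ext hc k k Y 0 (fun _ => (⟨0,hn0⟩,⟨0,hn0⟩)) hYcard (by omega)
      (fun v hv => hdegX v (hYX hv))
      (fun i hi => absurd hi (Nat.not_lt_zero i))
      (fun i hi => absurd hi (Nat.not_lt_zero i))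
      (fun i hi => absurd hi (Nat.not_lt_zero i))
      (fun i hi => absurd hi (Nat.not_lt_zero i))
    rw [Nat.zero_add] at this
    exact hno this
  -- the graph H
  set H : SimpleGraph (Fin n) :=
    { Adj := fun u v => G.Adj u v ∧ u ∉ X ∧ v ∉ X
      symm := ⟨by rintro u v ⟨h1, h2, h3⟩; exact ⟨h1.symm, h3, h2⟩⟩
      loopless := ⟨by rintro u ⟨h1, _⟩; exact h1.ne rfl⟩ } with hHdef
  have hHadj : ∀ u v : Fin n, H.Adj u v ↔ (G.Adj u v ∧ u ∉ X ∧ v ∉ X) := fun u v => Iff.rfl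
  have hHfail : ¬ RMN H c (k - x) := by
    rintro ⟨p, hp1, hp2, hp3⟩
    have := greedy_ext hc k x X (k-x) p rfl (by omega) hdegX
      (fun i hi => (hp1 i hi).1) hp2 hp3
      (fun i hi => ⟨(hp1 i hi).2.1, (hp1 i hi).2.2⟩)
    rw [Nat.sub_add_cancel (le_of_lt hxk)] at this
    exact hno this
  have hfex : ∃ m, ¬ RMN H c m := ⟨k - x, hHfail⟩
  have hj : ¬ RMN H c (Nat.find hfex) := Nat.find_spec hfex
  have hjle : Nat.find hfex ≤ k - x := Nat.find_min' hfex hHfail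
  have hj0 : Nat.find hfex ≠ 0 := by
    intro h
    apply hj
    rw [h]
    exact ⟨fun _ => (⟨0,hn0⟩,⟨0,hn0⟩), fun i hi => absurd hi (Nat.not_lt_zero i),
      fun i hi => absurd hi (Nat.not_lt_zero i), fun i hi => absurd hi (Nat.not_lt_zero i)⟩
  set t' := Nat.find hfex - 1 with ht'def
  have hPt : RMN H c t' := by
    have := Nat.find_min hfex (m := t') (by omega)
    exact not_not.mp this
  have hPsucc : ¬ RMN H c (t' + 1) := by
    rw [show t' + 1 = Nat.find hfex by omega]
    exact hj
  have ht'le : t' + 1 ≤ k - x := by omega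
  obtain ⟨p, hp1, hp2, hp3⟩ := hPt
  have hpadjG : ∀ i < t', G.Adj (p i).1 (p i).2 := fun i hi => (hp1 i hi).1
  have hpX : ∀ i < t', (p i).1 ∉ X ∧ (p i).2 ∉ X :=
    fun i hi => ⟨(hp1 i hi).2.1, (hp1 i hi).2.2⟩
  -- edge splits
  set EX := G.edgeFinset.filter (fun e => ∃ v ∈ X, v ∈ e) with hEXdef
  set EH := G.edgeFinset.filter (fun e => ¬ ∃ v ∈ X, v ∈ e) with hEHdef
  have hsplit1 : EX.card + EH.card = G.edgeFinset.card :=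
    Finset.card_filter_add_card_filter_not _
  set Vp := (Finset.range t').biUnion (fun i => {(p i).1, (p i).2}) with hVpdef
  set EHp := EH.filter (fun e => ∃ v ∈ Vp, v ∈ e) with hEHpdef
  set EHo := EH.filter (fun e => ¬ ∃ v ∈ Vp, v ∈ e) with hEHodef
  have hsplit2 : EHp.card + EHo.card = EH.card :=
    Finset.card_filter_add_card_filter_not _
  have hD1 : 2 * EX.card ≤ x * (n-1) + (n - x) * x := cover_count G X
  have hVpcard : Vp.card ≤ 2 * t' := by
    calc Vp.card ≤ ∑ i ∈ Finset.range t', ({(p i).1, (p i).2} : Finset (Fin n)).card :=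
        Finset.card_biUnion_le
      _ ≤ ∑ _i ∈ Finset.range t', 2 :=
        Finset.sum_le_sum fun i _ => (Finset.card_insert_le _ _).trans (by simp)
      _ = 2 * t' := by simp [mul_comm]
  have hVpnX : ∀ v ∈ Vp, v ∉ X := by
    intro v hv
    rw [hVpdef, Finset.mem_biUnion] at hv
    obtain ⟨i, hi, hv⟩ := hv
    rw [Finset.mem_range] at hi
    rw [Finset.mem_insert, Finset.mem_singleton] at hv
    rcases hv with rfl | rfl
    · exact (hpX i hi).1
    · exact (hpX i hi).2
  have hD2a : EHp.card ≤ 2 * t' * (4*k - 1) := by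
    have hsub : EHp ⊆ Vp.biUnion (fun v => G.incidenceFinset v) := by
      intro e he
      rw [hEHpdef, Finset.mem_filter] at he
      obtain ⟨heEH, v, hvVp, hve⟩ := he
      rw [hEHdef, Finset.mem_filter] at heEH
      exact Finset.mem_biUnion.mpr ⟨v, hvVp,
        (SimpleGraph.mem_incidenceFinset _ _ _).mpr ⟨mem_edgeFinset.mp heEH.1, hve⟩⟩
    calc EHp.card ≤ (Vp.biUnion (fun v => G.incidenceFinset v)).card :=
        Finset.card_le_card hsub
      _ ≤ ∑ v ∈ Vp, (G.incidenceFinset v).card := Finset.card_biUnion_le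
      _ ≤ ∑ _v ∈ Vp, (4*k - 1) := by
          refine Finset.sum_le_sum fun v hv => ?_
          rw [SimpleGraph.card_incidenceFinset_eq_degree]
          exact hdegnX v (hVpnX v hv)
      _ = Vp.card * (4*k-1) := by simp [mul_comm]
      _ ≤ 2 * t' * (4*k-1) := Nat.mul_le_mul_right _ hVpcard
  have hD2b : ∀ e ∈ EHo, ∃ i, i < t' ∧ c e = c (s((p i).1, (p i).2)) := by
    intro e he
    by_contra hcon
    push_neg at hcon
    rw [hEHodef, Finset.mem_filter, hEHdef, Finset.mem_filter] at he
    revert hcon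
    revert he
    induction e using Sym2.ind with
    | _ u v =>
      intro he hcon
      obtain ⟨⟨heE, hnX⟩, hnP⟩ := he
      have hadj : G.Adj u v := mem_edgeFinset.mp heE
      have huX : u ∉ X := fun h => hnX ⟨u, h, by simp⟩
      have hvX : v ∉ X := fun h => hnX ⟨v, h, by simp⟩
      have huP : ∀ i < t', u ≠ (p i).1 ∧ u ≠ (p i).2 := by
        intro i hi
        constructor <;> intro h <;> refine hnP ⟨u, ?_, by simp⟩ <;>
          refine Finset.mem_biUnion.mpr ⟨i, Finset.mem_range.mpr hi, by simp [h]⟩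
      have hvP : ∀ i < t', v ≠ (p i).1 ∧ v ≠ (p i).2 := by
        intro i hi
        constructor <;> intro h <;> refine hnP ⟨v, ?_, by simp⟩ <;>
          refine Finset.mem_biUnion.mpr ⟨i, Finset.mem_range.mpr hi, by simp [h]⟩
      apply hPsucc
      refine ⟨fun i => if i = t' then (u, v) else p i, ?_, ?_, ?_⟩
      · intro i hi
        by_cases h : i = t'
        · simp only [h, if_pos rfl]
          exact (hHadj u v).mpr ⟨hadj, huX, hvX⟩
        · simp only [if_neg h]
          exact hp1 i (by omega)
      · intro i hi j hj hij
        by_cases hi' : i = t' <;> by_cases hj' : j = t'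
        · omega
        · have hjm : j < t' := by omega
          simp only [hi', if_pos rfl, if_neg hj']
          exact ⟨(huP j hjm).1, (hvP j hjm).2, hcon j hjm⟩
        · have him : i < t' := by omega
          simp only [hj', if_pos rfl, if_neg hi']
          exact ⟨(huP i him).1.symm, (hvP i him).2.symm, (hcon i him).symm⟩
        · simp only [if_neg hi', if_neg hj']
          exact hp2 i (by omega) j (by omega) hij
      · intro i hi j hj
        by_cases hi' : i = t' <;> by_cases hj' : j = t'
        · simp only [hi', hj', if_pos rfl]
          exact hadj.ne
        · have hjm : j < t' := by omega
          simp only [hi', if_pos rfl, if_neg hj']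
          exact (huP j hjm).2
        · have him : i < t' := by omega
          simp only [hj', if_pos rfl, if_neg hi']
          exact ((hvP i him).1).symm
        · simp only [if_neg hi', if_neg hj']
          exact hp3 i (by omega) j (by omega)
  have hD2c : 2 * EHo.card ≤ t' * n := by
    have hsub : EHo ⊆ (Finset.range t').biUnion
        (fun i => G.edgeFinset.filter (fun e => c e = c (s((p i).1, (p i).2)))) := by
      intro e he
      obtain ⟨i, hi, hce⟩ := hD2b e he
      have heE : e ∈ G.edgeFinset := by
        rw [hEHodef, Finset.mem_filter, hEHdef, Finset.mem_filter] at he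
        exact he.1.1
      exact Finset.mem_biUnion.mpr ⟨i, Finset.mem_range.mpr hi,
        Finset.mem_filter.mpr ⟨heE, hce⟩⟩
    calc 2 * EHo.card
        ≤ 2 * ∑ i ∈ Finset.range t',
            (G.edgeFinset.filter (fun e => c e = c (s((p i).1, (p i).2)))).card := by
          refine Nat.mul_le_mul_left _ ((Finset.card_le_card hsub).trans Finset.card_biUnion_le)
      _ = ∑ i ∈ Finset.range t',
            2 * (G.edgeFinset.filter (fun e => c e = c (s((p i).1, (p i).2)))).card := by
          rw [Finset.mul_sum]
      _ ≤ ∑ _i ∈ Finset.range t', n :=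
          Finset.sum_le_sum fun i _ => color_class_card hc _
      _ = t' * n := by simp [mul_comm]
  -- final arithmetic
  have hxa : x ≤ k - 1 := by omega
  have hta : t' + x + 1 ≤ k := by omega
  have harith : x * (n-1) + (n - x) * x + (2 * (2 * t' * (4*k - 1))) + t' * n
      ≤ (k-1) * (n-1) + (n - (k-1)) * (k-1) := by
    set a := k - 1 with hadef
    obtain ⟨d, hd⟩ : ∃ d, x + d = a := ⟨a - x, by omega⟩
    obtain ⟨m, hm⟩ : ∃ m, a + m = n := ⟨n - a, by omega⟩
    obtain ⟨n1, hn1⟩ : ∃ n1, n1 + 1 = n := ⟨n - 1, by omega⟩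
    have htd : t' ≤ d := by omega
    have hk4 : 1 ≤ 4 * k := by omega
    have hk4 : 0 < 4 * k := by omega
    obtain ⟨K, hK⟩ : ∃ K, K + 1 = 4 * k := ⟨4*k - 1, by omega⟩
    have hsub1 : n - 1 = n1 := by omega
    have hsub2 : n - x = d + m := by omega
    have hsub3 : n - a = m := by omega
    have hsub4 : 4*k - 1 = K := by omega
    rw [hsub1, hsub2, hsub3, hsub4]
    rcases Nat.eq_zero_or_pos d with hd0 | hdpos
    · have hx : x = a := by omega
      have ht0 : t' = 0 := by omega
      rw [hd0, ht0, hx]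
      norm_num
    · have hk2 : 2 ≤ k := by omega
      have h9 : 18 * k ≤ 9 * k^2 := by
        have h1 : 2*k ≤ k*k := Nat.mul_le_mul_right k hk2
        have h2 : 9*(2*k) ≤ 9*(k*k) := Nat.mul_le_mul_left 9 h1
        have h3 : 9 * k^2 = 9 * (k*k) := by ring
        omega
      have hm2 : x + 4*K + 1 ≤ m := by omega
      have haval : a = x + d := by omega
      have main : d*x + 4*(t'*K) + t'*n ≤ d*n1 + m*d := by
        calc d*x + 4*(t'*K) + t'*n ≤ d*x + 4*(d*K) + d*n :=
              Nat.add_le_add (Nat.add_le_add_left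
                (Nat.mul_le_mul_left 4 (Nat.mul_le_mul_right K htd)) _)
                (Nat.mul_le_mul_right n htd)
          _ = d*(x + 4*K + 1) + d*n1 := by rw [← hn1]; ring
          _ ≤ d*m + d*n1 := Nat.add_le_add_right (Nat.mul_le_mul_left d hm2) _
          _ = d*n1 + m*d := by ring
      have expand1 : a*n1 = x*n1 + d*n1 := by rw [haval]; ring
      have expand2 : m*a = m*x + m*d := by rw [haval]; ring
      have expand3 : (d+m)*x = d*x + m*x := by ring
      have expand4 : 2*(2*t'*K) = 4*(t'*K) := by ring
      linarith [main, expand1, expand2, expand3, expand4]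
  have hcard : G.edgeSet.ncard = G.edgeFinset.card := by
    rw [← SimpleGraph.coe_edgeFinset, Set.ncard_coe_finset]
  have h2B : 2 * (Nat.choose (k-1) 2 + (k-1)*(n-k+1))
      = (k-1) * (n-1) + (n - (k-1)) * (k-1) := by
    have hnk1 : n - k + 1 = n - (k-1) := by omega
    rw [hnk1, Nat.mul_add, two_mul_choose_two]
    set a := k - 1 with hadef
    rcases Nat.eq_zero_or_pos a with ha | ha
    · simp [ha]
    · obtain ⟨m, hm⟩ : ∃ m, a + m = n := ⟨n - a, by omega⟩
      have h1 : n - 1 = (a - 1) + m := by omega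
      have h2 : n - a = m := by omega
      obtain ⟨b, hb⟩ : ∃ b, b + 1 = a := ⟨a - 1, by omega⟩
      rw [h1, h2, ← hb]
      simp only [Nat.add_sub_cancel]
      ring
  have hfin : 2 * G.edgeFinset.card ≤ 2 * (Nat.choose (k-1) 2 + (k-1)*(n-k+1)) := by
    rw [h2B]
    calc 2 * G.edgeFinset.card = 2 * EX.card + (2 * EHp.card + 2 * EHo.card) := by omega
      _ ≤ (x * (n-1) + (n - x) * x) + ((2 * (2 * t' * (4*k - 1))) + t' * n) := by
          refine Nat.add_le_add hD1 (Nat.add_le_add ?_ hD2c)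
          omega
      _ ≤ (k-1) * (n-1) + (n - (k-1)) * (k-1) := by
          have := harith; omega
  rw [hcard]
  omega

/-- For `k ≥ 1` and `n ≥ 9k²`, `ex*(n, M_k) = C(k-1,2) + (k-1)(n-k+1)`. -/
theorem rainbowTuran_matching (k : ℕ) (hk : 0 < k) (n : ℕ) (hn : 9 * k ^ 2 ≤ n) :
    IsGreatest (rainbowExSet n (matchingGraph k))
      (Nat.choose (k - 1) 2 + (k - 1) * (n - k + 1)) := by
  have hkn : k ≤ n := by
    have h1 : k * 1 ≤ k * k := Nat.mul_le_mul_left k hk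
    have h2 : 1 * (k*k) ≤ 9 * (k*k) := Nat.mul_le_mul_right (k*k) (by norm_num)
    have h3 : 9 * k^2 = 9 * (k*k) := by ring
    omega
  constructor
  · refine ⟨extrGraph n (k-1), injColoring n, ?_, ?_, extr_card hk hkn⟩
    · intro e₁ e₂ _ _ hne _ h
      exact hne (injColoring_inj h)
    · rintro ⟨f, hf, _⟩
      exact extr_no_copy hk hkn f hf
  · rintro m ⟨G, c, hc, hnr, rfl⟩
    exact upper_bound hk hn G c hc (fun hr => hnr (rmn_to_copy hr))
end

section
/- Let G be a graph with minimum degree δ, and let c be a proper edge-coloring of G. Then G contains a rainbow path whose number of edges l satisfies 3l ≥ 2δ (that is, a rainbow path of length at least (2/3)δ). -/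
open SimpleGraph Finset

/-- Key counting lemma: if `P` is a rainbow path of maximum length among all rainbow
paths of a properly colored graph, then `2δ ≤ 3 * P.length`. -/
lemma rainbow_aux {V β : Type*} [Fintype V]
    (G : SimpleGraph V) (c : Sym2 V → β) (hc : IsProperEdgeColoring G c)
    {u₀ v₀ : V} (P : G.Walk u₀ v₀) (hP : P.IsPath) (hrb : (P.edges.map c).Nodup)
    (hmax : ∀ (a b : V) (q : G.Walk a b), q.IsPath → (q.edges.map c).Nodup →
      q.length ≤ P.length)
    (δ : ℕ) (hδ : ∀ v, δ ≤ (G.neighborSet v).ncard) :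
    2 * δ ≤ 3 * P.length := by
  classical
  set k := P.length with hkdef
  have hPnd : P.support.Nodup := (SimpleGraph.Walk.isPath_def P).1 hP
  -- finite neighbor sets
  have hδF : ∀ v : V, δ ≤ ((G.neighborSet v).toFinite.toFinset).card := by
    intro v
    have := hδ v
    rwa [Set.ncard_eq_toFinset_card (G.neighborSet v) (G.neighborSet v).toFinite] at this
  have hmemnb : ∀ v w : V, w ∈ (G.neighborSet v).toFinite.toFinset ↔ G.Adj v w := by
    intro v w; rw [Set.Finite.mem_toFinset, SimpleGraph.mem_neighborSet]
  -- properness at a vertex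
  have hcc : ∀ (x a b : V), G.Adj x a → G.Adj x b → c s(x, a) = c s(x, b) → a = b := by
    intro x a b ha hb hab
    by_contra hne
    refine hc (G.mem_edgeSet.2 ha) (G.mem_edgeSet.2 hb) ?_ ⟨x, ?_, ?_⟩ hab
    · intro h
      exact hne (Sym2.congr_right.1 h)
    · exact Sym2.mem_mk_left x a
    · exact Sym2.mem_mk_left x b
  -- the color set of P
  set CF : Finset β := (P.edges.map c).toFinset with hCFdef
  have hCFcard : CF.card = k := by
    rw [hCFdef, List.toFinset_card_of_nodup hrb, List.length_map,
      SimpleGraph.Walk.length_edges]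
  set out : Finset V :=
    Finset.univ.filter (fun t => G.Adj v₀ t ∧ t ∉ P.support) with houtdef
  set fresh : Finset V :=
    Finset.univ.filter (fun z => G.Adj u₀ z ∧ c s(u₀, z) ∉ CF) with hfreshdef
  have hout_mem : ∀ t, t ∈ out ↔ (G.Adj v₀ t ∧ t ∉ P.support) := by
    intro t; simp [houtdef]
  have hfresh_mem : ∀ z, z ∈ fresh ↔ (G.Adj u₀ z ∧ c s(u₀, z) ∉ CF) := by
    intro z; simp [hfreshdef]
  -- (A)  δ ≤ k + |out|
  have hA : δ ≤ k + out.card := by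
    have hsub : (G.neighborSet v₀).toFinite.toFinset ⊆
        (P.support.toFinset.erase v₀) ∪ out := by
      intro t ht
      have hadj : G.Adj v₀ t := (hmemnb v₀ t).1 ht
      by_cases hmem : t ∈ P.support
      · exact Finset.mem_union.2 (Or.inl (Finset.mem_erase.2
          ⟨hadj.ne', List.mem_toFinset.2 hmem⟩))
      · exact Finset.mem_union.2 (Or.inr ((hout_mem t).2 ⟨hadj, hmem⟩))
    have hsupcard : P.support.toFinset.card = k + 1 := by
      rw [List.toFinset_card_of_nodup hPnd, SimpleGraph.Walk.length_support]
    have herase : (P.support.toFinset.erase v₀).card = k := by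
      rw [Finset.card_erase_of_mem (List.mem_toFinset.2 P.end_mem_support), hsupcard]
      omega
    calc δ ≤ ((G.neighborSet v₀).toFinite.toFinset).card := hδF v₀
      _ ≤ ((P.support.toFinset.erase v₀) ∪ out).card := Finset.card_le_card hsub
      _ ≤ (P.support.toFinset.erase v₀).card + out.card := Finset.card_union_le _ _
      _ = k + out.card := by rw [herase]
  -- (B)  δ ≤ k + |fresh|
  have hB : δ ≤ k + fresh.card := by
    have h1 : ((G.neighborSet u₀).toFinite.toFinset \ fresh).card ≤ CF.card := by
      apply Finset.card_le_card_of_injOn (fun z => c s(u₀, z))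
      · intro z hz
        rw [Finset.mem_coe, Finset.mem_sdiff] at hz
        have hadj : G.Adj u₀ z := (hmemnb u₀ z).1 hz.1
        have := hz.2
        rw [hfresh_mem] at this
        push_neg at this
        exact this hadj
      · intro z₁ h₁ z₂ h₂ he
        rw [Finset.mem_coe, Finset.mem_sdiff] at h₁ h₂
        exact hcc u₀ z₁ z₂ ((hmemnb u₀ z₁).1 h₁.1) ((hmemnb u₀ z₂).1 h₂.1) he
    have h2 : ((G.neighborSet u₀).toFinite.toFinset).card ≤
        ((G.neighborSet u₀).toFinite.toFinset \ fresh).card + fresh.card :=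
      Finset.card_le_card_sdiff_add_card
    have := hδF u₀
    omega
  -- colors of edges from v₀ to outside vertices are path colors
  have hout_col : ∀ t ∈ out, c s(v₀, t) ∈ CF := by
    intro t ht
    rw [hout_mem] at ht
    obtain ⟨hadj, hns⟩ := ht
    by_contra hnc
    have hpath : (P.concat hadj).IsPath := by
      rw [SimpleGraph.Walk.isPath_def, SimpleGraph.Walk.support_concat,
        List.nodup_append]
      refine ⟨hPnd, List.nodup_singleton t, ?_⟩
      intro a ha b hb hab
      rw [List.mem_singleton] at hb
      subst hb
      subst hab
      exact hns ha
    have hrb2 : ((P.concat hadj).edges.map c).Nodup := by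
      rw [SimpleGraph.Walk.edges_concat, List.concat_eq_append, List.map_append,
        List.nodup_append]
      refine ⟨hrb, by simp, ?_⟩
      intro a ha b hb hab
      simp only [List.map_cons, List.map_nil, List.mem_singleton] at hb
      subst hb
      subst hab
      exact hnc (List.mem_toFinset.2 ha)
    have := hmax _ _ (P.concat hadj) hpath hrb2
    rw [SimpleGraph.Walk.length_concat] at this
    omega
  -- fresh neighbors of u₀ lie on P
  have hfresh_supp : ∀ z ∈ fresh, z ∈ P.support := by
    intro z hz
    rw [hfresh_mem] at hz
    obtain ⟨hadj, hcol⟩ := hz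
    by_contra hns
    have hpath : (SimpleGraph.Walk.cons hadj.symm P).IsPath :=
      hP.cons hns
    have hrb2 : (((SimpleGraph.Walk.cons hadj.symm P)).edges.map c).Nodup := by
      rw [SimpleGraph.Walk.edges_cons, List.map_cons, List.nodup_cons]
      constructor
      · rw [Sym2.eq_swap]
        intro hmem
        exact hcol (List.mem_toFinset.2 hmem)
      · exact hrb
    have := hmax _ _ _ hpath hrb2
    rw [SimpleGraph.Walk.length_cons] at this
    omega
  -- Key rotation lemma
  have hkey : ∀ z ∈ fresh, ∃ d : G.Dart, d ∈ P.darts ∧ d.toProd.2 = z ∧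
      ∀ t ∈ out, c s(v₀, t) ≠ c d.edge := by
    intro z hz
    have hadj : G.Adj u₀ z := ((hfresh_mem z).1 hz).1
    have hcol : c s(u₀, z) ∉ CF := ((hfresh_mem z).1 hz).2
    have hzsupp : z ∈ P.support := hfresh_supp z hz
    have hzne : z ≠ u₀ := hadj.ne'
    set q : G.Walk u₀ z := P.takeUntil z hzsupp with hqdef
    set r : G.Walk z v₀ := P.dropUntil z hzsupp with hrdef
    have hqr : q.append r = P := P.take_spec hzsupp
    obtain ⟨x, hzx, q', hqrev⟩ := SimpleGraph.Walk.exists_eq_cons_of_ne hzne q.reverse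
    -- hqrev : q.reverse = cons hzx q', with hzx : G.Adj z x, q' : G.Walk x u₀
    have hqsupp : q.support = q'.support.reverse ++ [z] := by
      have h1 := congrArg SimpleGraph.Walk.support hqrev
      rw [SimpleGraph.Walk.support_reverse, SimpleGraph.Walk.support_cons] at h1
      calc q.support = q.support.reverse.reverse := (List.reverse_reverse _).symm
        _ = (z :: q'.support).reverse := by rw [h1]
        _ = q'.support.reverse ++ [z] := List.reverse_cons
    have hqe : q.edges = q'.edges.reverse ++ [s(z, x)] := by
      have h1 := congrArg SimpleGraph.Walk.edges hqrev
      rw [SimpleGraph.Walk.edges_reverse, SimpleGraph.Walk.edges_cons] at h1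
      calc q.edges = q.edges.reverse.reverse := (List.reverse_reverse _).symm
        _ = (s(z, x) :: q'.edges).reverse := by rw [h1]
        _ = q'.edges.reverse ++ [s(z, x)] := List.reverse_cons
    have hql : q.length = q'.length + 1 := by
      have h1 := congrArg SimpleGraph.Walk.length hqrev
      rw [SimpleGraph.Walk.length_reverse, SimpleGraph.Walk.length_cons] at h1
      omega
    have hlqr : q.length + r.length = k := by
      have := congrArg SimpleGraph.Walk.length hqr
      rwa [SimpleGraph.Walk.length_append] at this
    refine ⟨⟨(x, z), hzx.symm⟩, ?_, rfl, ?_⟩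
    · -- dart membership
      apply P.darts_takeUntil_subset hzsupp
      have h2 : q = (SimpleGraph.Walk.cons hzx q').reverse := by
        rw [← hqrev, SimpleGraph.Walk.reverse_reverse]
      rw [hqdef] at h2
      rw [h2, SimpleGraph.Walk.reverse_cons, SimpleGraph.Walk.darts_append]
      simp
    · -- rotation: no out-edge color equals c s(x, z)
      intro t ht hteq
      rw [hout_mem] at ht
      obtain ⟨hadjt, htns⟩ := ht
      have hdedge : (SimpleGraph.Dart.mk (x, z) hzx.symm).edge = s(x, z) := rfl
      rw [hdedge] at hteq
      -- the rotated walk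
      set A : G.Walk x v₀ := q'.append (SimpleGraph.Walk.cons hadj r) with hAdef
      set W : G.Walk x t := A.concat hadjt with hWdef
      have hWsupp : W.support = (q'.support ++ r.support) ++ [t] := by
        rw [hWdef, SimpleGraph.Walk.support_concat, hAdef,
          SimpleGraph.Walk.support_append, SimpleGraph.Walk.support_cons,
          List.tail_cons]
      have hWedges : W.edges = (q'.edges ++ (s(u₀, z) :: r.edges)) ++ [s(v₀, t)] := by
        rw [hWdef, SimpleGraph.Walk.edges_concat, hAdef,
          SimpleGraph.Walk.edges_append, SimpleGraph.Walk.edges_cons,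
          List.concat_eq_append]
      have hPsupp : P.support = (q'.support.reverse ++ [z]) ++ r.support.tail := by
        rw [← hqr, SimpleGraph.Walk.support_append, hqsupp]
      have hPedges : P.edges = (q'.edges.reverse ++ [s(z, x)]) ++ r.edges := by
        rw [← hqr, SimpleGraph.Walk.edges_append, hqe]
      have hrsupp : r.support = z :: r.support.tail := r.support_eq_cons
      -- support permutation
      have hpermS : W.support.Perm (P.support ++ [t]) := by
        rw [hWsupp, hPsupp, List.perm_iff_count]
        intro a
        rw [hrsupp]
        simp only [List.count_append, List.count_cons, List.count_reverse,
          List.count_nil, List.tail_cons]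
        ring
      have hWpath : W.IsPath := by
        rw [SimpleGraph.Walk.isPath_def, hpermS.nodup_iff, List.nodup_append]
        refine ⟨hPnd, List.nodup_singleton t, ?_⟩
        intro a ha b hb hab
        rw [List.mem_singleton] at hb
        subst hb
        subst hab
        exact htns ha
      -- edges permutation
      have hpermE : (W.edges.map c).Perm ((P.edges.map c) ++ [c s(u₀, z)]) := by
        rw [hWedges, hPedges, List.perm_iff_count]
        intro a
        simp only [List.map_append, List.map_cons, List.map_reverse, List.map_nil]
        rw [hteq, Sym2.eq_swap (a := z) (b := x)]
        simp only [List.count_append, List.count_cons, List.count_reverse,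
          List.count_nil]
        ring
      have hWrb : (W.edges.map c).Nodup := by
        rw [hpermE.nodup_iff, List.nodup_append]
        refine ⟨hrb, List.nodup_singleton _, ?_⟩
        intro a ha b hb hab
        rw [List.mem_singleton] at hb
        subst hb
        subst hab
        exact hcol (List.mem_toFinset.2 ha)
      have hle := hmax _ _ W hWpath hWrb
      have hWlen : W.length = k + 1 := by
        rw [hWdef, SimpleGraph.Walk.length_concat, hAdef,
          SimpleGraph.Walk.length_append, SimpleGraph.Walk.length_cons]
        omega
      omega
  -- (C)  |out| + |fresh| ≤ k
  have hC : out.card + fresh.card ≤ k := by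
    set im1 : Finset β := out.image (fun t => c s(v₀, t)) with him1def
    have him1card : im1.card = out.card := by
      apply Finset.card_image_of_injOn
      intro t₁ h₁ t₂ h₂ he
      rw [Finset.mem_coe, hout_mem] at h₁ h₂
      exact hcc v₀ t₁ t₂ h₁.1 h₂.1 he
    have him1sub : im1 ⊆ CF := by
      intro b hb
      rw [him1def, Finset.mem_image] at hb
      obtain ⟨t, ht, rfl⟩ := hb
      exact hout_col t ht
    choose df hd1 hd2 hd3 using hkey
    have hfcard : fresh.card ≤ (CF \ im1).card := by
      apply Finset.card_le_card_of_injOn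
        (fun z => if h : z ∈ fresh then c ((df z h).edge) else c s(v₀, v₀))
      · intro z hz
        simp only [dif_pos (Finset.mem_coe.1 hz)]
        rw [Finset.mem_coe, Finset.mem_sdiff]
        constructor
        · have : (df z hz).edge ∈ P.edges := List.mem_map_of_mem (hd1 z hz)
          exact List.mem_toFinset.2 (List.mem_map_of_mem this)
        · intro hmem
          rw [him1def, Finset.mem_image] at hmem
          obtain ⟨t, ht, hteq⟩ := hmem
          exact hd3 z hz t ht hteq
      · intro z₁ h₁ z₂ h₂ he
        rw [Finset.mem_coe] at h₁ h₂
        simp only [dif_pos h₁, dif_pos h₂] at he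
        have hnd : (P.darts.map (fun d => c d.edge)).Nodup := by
          have hmap : P.edges.map c = P.darts.map (fun d => c d.edge) := by
            rw [SimpleGraph.Walk.edges, List.map_map]
            rfl
          rwa [hmap] at hrb
        have hdd : df z₁ h₁ = df z₂ h₂ :=
          List.inj_on_of_nodup_map hnd (hd1 z₁ h₁) (hd1 z₂ h₂) he
        have := hd2 z₁ h₁
        rw [hdd, hd2 z₂ h₂] at this
        exact this.symm
    have := Finset.card_sdiff_add_card_eq_card him1sub
    omega
  omega
/-- Any proper edge-coloring of a graph with minimum degree `δ` contains a rainbow path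
of length at least `(2/3)δ`, i.e. a rainbow path with `l` edges where `3l ≥ 2δ`. -/
theorem rainbow_path_min_degree {V β : Type*} [Fintype V] [Nonempty V]
    (G : SimpleGraph V) (δ : ℕ) (hδ : ∀ v, δ ≤ (G.neighborSet v).ncard)
    (c : Sym2 V → β) (hc : IsProperEdgeColoring G c) :
    ∃ (u v : V) (p : G.Walk u v), p.IsPath ∧ (p.edges.map c).Nodup ∧
      2 * δ ≤ 3 * p.length := by
  classical
  set pred : ℕ → Prop := fun m => ∃ (a b : V) (p : G.Walk a b),
    p.IsPath ∧ (p.edges.map c).Nodup ∧ p.length = m with hpreddef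
  have hpred0 : pred 0 := by
    obtain ⟨v⟩ := ‹Nonempty V›
    exact ⟨v, v, SimpleGraph.Walk.nil, SimpleGraph.Walk.IsPath.nil, by simp, rfl⟩
  have hboundall : ∀ (a b : V) (p : G.Walk a b), p.IsPath → p.length ≤ Fintype.card V := by
    intro a b p hp
    have h1 : p.support.length ≤ Fintype.card V :=
      List.Nodup.length_le_card ((SimpleGraph.Walk.isPath_def p).1 hp)
    rw [SimpleGraph.Walk.length_support] at h1
    omega
  have hkp : pred (Nat.findGreatest pred (Fintype.card V)) :=
    Nat.findGreatest_spec (Nat.zero_le _) hpred0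
  obtain ⟨u₀, v₀, P, hP, hrb, hk⟩ := hkp
  have hmax : ∀ (a b : V) (q : G.Walk a b), q.IsPath → (q.edges.map c).Nodup →
      q.length ≤ P.length := by
    intro a b q hq hqrb
    rw [hk]
    by_contra hcon
    push_neg at hcon
    exact Nat.findGreatest_is_greatest hcon (hboundall a b q hq) ⟨a, b, q, hq, hqrb, rfl⟩
  exact ⟨u₀, v₀, P, hP, hrb, rainbow_aux G c hc P hP hrb hmax δ hδ⟩
end

section
/- Let G be a graph equipped with an arbitrary (not necessarily proper) edge-coloring, and suppose every vertex of G is incident to edges of at least θ distinct colors. Then G contains a rainbow path whose number of edges l satisfies 3l ≥ 2θ (that is, a rainbow path of length at least (2/3)θ). -/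
open SimpleGraph Finset

namespace RainbowPathAux

variable {V β : Type*} {G : SimpleGraph V} {c : Sym2 V → β}

/-- Extending a rainbow path at its back end. -/
lemma extend_concat {u v x : V} (p : G.Walk u v) (hp : p.IsPath)
    (hr : (p.edges.map c).Nodup) (h : G.Adj v x) (hx : x ∉ p.support)
    (hc : c s(v, x) ∉ p.edges.map c) :
    ∃ q : G.Walk u x, q.IsPath ∧ (q.edges.map c).Nodup ∧ q.length = p.length + 1 := by
  refine ⟨p.concat h, ?_, ?_, by simp [Walk.length_concat]⟩
  · rw [← Walk.isPath_reverse_iff, Walk.reverse_concat]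
    exact (hp.reverse).cons (by simpa using hx)
  · rw [Walk.edges_concat, List.concat_eq_append, List.map_append]
    simp only [List.map_cons, List.map_nil]
    rw [List.nodup_append]
    exact ⟨hr, List.nodup_singleton _, by simpa using hc⟩

/-- Extending a rainbow path at its front end. -/
lemma extend_cons {u v x : V} (p : G.Walk u v) (hp : p.IsPath)
    (hr : (p.edges.map c).Nodup) (h : G.Adj x u) (hx : x ∉ p.support)
    (hc : c s(x, u) ∉ p.edges.map c) :
    ∃ q : G.Walk x v, q.IsPath ∧ (q.edges.map c).Nodup ∧ q.length = p.length + 1 := by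
  refine ⟨Walk.cons h p, hp.cons hx, ?_, by simp⟩
  simp only [Walk.edges_cons, List.map_cons]
  exact List.nodup_cons.2 ⟨hc, hr⟩



/-- Rotation: from a rainbow path `p : v0 → vl`, a vertex `w` on `p` with `w ≠ v0`,
and an edge `v0w` whose color is not on `p`, produce the dart of `p` entering `w` and a
rotated rainbow path ending at `vl` of the same length. -/
lemma rotation [DecidableEq V] {v0 vl w : V} (p : G.Walk v0 vl) (hp : p.IsPath)
    (hr : (p.edges.map c).Nodup)
    (hw : w ∈ p.support) (hwne : w ≠ v0) (hadj : G.Adj v0 w)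
    (hnew : c s(v0, w) ∉ p.edges.map c) :
    ∃ (d : G.Dart) (u : V) (q : G.Walk u vl),
      d ∈ p.darts ∧ d.snd = w ∧
      q.IsPath ∧ (q.edges.map c).Nodup ∧ q.length = p.length ∧
      (∀ x, x ∈ q.support → x ∈ p.support) ∧
      (∀ e ∈ q.edges, (e ∈ p.edges ∧ e ≠ d.edge) ∨ e = s(v0, w)) := by
  classical
  set A := p.takeUntil w hw with hA
  set B := p.dropUntil w hw with hB
  have hspec : A.append B = p := p.take_spec hw
  have hpA : A.IsPath := hp.takeUntil hw
  have hpB : B.IsPath := hp.dropUntil hw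
  obtain ⟨u, h₁, A₂, hA2⟩ := Walk.exists_eq_cons_of_ne hwne A.reverse
  have hAeq : A = A₂.reverse.concat h₁.symm := by
    rw [← A.reverse_reverse, hA2, Walk.reverse_cons, Walk.concat_eq_append]
  set d : G.Dart := ⟨(u, w), h₁.symm⟩ with hd
  have hdedge : d.edge = s(u, w) := rfl
  have hdsnd : d.snd = w := rfl
  have hdmem : d ∈ p.darts := by
    rw [← hspec, Walk.darts_append, List.mem_append]
    left
    rw [hAeq, Walk.darts_concat]
    simp
    exact Or.inr rfl
  -- the rotated walk
  set q : G.Walk u vl := A₂.append (Walk.cons hadj B) with hq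
  -- edges equations
  have hpe : p.edges = (A₂.edges.reverse ++ [s(u, w)]) ++ B.edges := by
    rw [← hspec, Walk.edges_append, hAeq, Walk.edges_concat]
    simp [List.concat_eq_append, Walk.edges_reverse]
  have hqe : q.edges = A₂.edges ++ (s(v0, w) :: B.edges) := by
    rw [hq, Walk.edges_append, Walk.edges_cons]
  -- support equations
  have hps : p.support = (A₂.support.reverse ++ [w]) ++ B.support.tail := by
    rw [← hspec, Walk.support_append]
    congr 1
    have : A.support = A.reverse.support.reverse := by simp [Walk.support_reverse]
    rw [this, hA2, Walk.support_cons]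
    simp
  have hqs : q.support = A₂.support ++ B.support := by
    rw [hq, Walk.support_append, Walk.support_cons]
    simp
  have hA2sub : ∀ x, x ∈ A₂.support → x ∈ p.support := by
    intro x hx
    rw [hps]
    simp only [List.append_assoc, List.mem_append, List.mem_reverse]
    tauto
  have hBsub : ∀ x, x ∈ B.support → x ∈ p.support := by
    intro x hx
    rw [← hspec, Walk.mem_support_append_iff]; tauto
  have hsupp : ∀ x, x ∈ q.support → x ∈ p.support := by
    intro x hx
    rw [hqs, List.mem_append] at hx
    rcases hx with hx | hx
    · exact hA2sub x hx
    · exact hBsub x hx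
  -- nodup of p supports
  have hpnodup : p.support.Nodup := hp.support_nodup
  have hwA2 : w ∉ A₂.support := by
    have := hpA.reverse.support_nodup
    rw [hA2, Walk.support_cons] at this
    exact (List.nodup_cons.1 this).1
  have hBcons : B.support = w :: B.support.tail := B.support_eq_cons
  -- q is a path
  have hqpath : q.IsPath := by
    rw [Walk.isPath_def, hqs, List.nodup_append]
    refine ⟨?_, hpB.support_nodup, ?_⟩
    · have := hpA.reverse.support_nodup
      rw [hA2, Walk.support_cons] at this
      exact ((List.nodup_cons.1 this).2)
    · intro x hx y hx' hxy
      subst hxy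
      rw [hBcons, List.mem_cons] at hx'
      rcases hx' with rfl | hx'
      · exact hwA2 hx
      · have := hpnodup
        rw [hps, List.nodup_append] at this
        exact this.2.2 _ (by simp [List.mem_append, hx]) _ hx' rfl
  -- lengths
  have hlen : q.length = p.length := by
    have h1 : p.length = A.length + B.length := by rw [← hspec, Walk.length_append]
    have h2 : A.length = A₂.length + 1 := by
      rw [hAeq, Walk.length_concat, Walk.length_reverse]
    have h3 : q.length = A₂.length + (B.length + 1) := by
      rw [hq, Walk.length_append, Walk.length_cons]
    omega
  -- edge membership
  have hA2edges : ∀ e, e ∈ A₂.edges → e ∈ p.edges := by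
    intro e he
    rw [hpe]
    simp only [List.append_assoc, List.mem_append, List.mem_reverse]
    tauto
  have hBedges : ∀ e, e ∈ B.edges → e ∈ p.edges := by
    intro e he
    rw [hpe]; simp only [List.append_assoc, List.mem_append]; tauto
  have hpenodup : p.edges.Nodup := hp.isTrail.edges_nodup
  have huwA2 : s(u, w) ∉ A₂.edges := by
    have := hpenodup
    rw [hpe, List.nodup_append] at this
    have := this.1
    rw [List.nodup_append] at this
    intro h
    exact this.2.2 _ (by simpa using h) _ (by simp) rfl
  have huwB : s(u, w) ∉ B.edges := by
    have := hpenodup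
    rw [hpe, List.nodup_append] at this
    exact fun h => this.2.2 _ (by simp) _ h rfl
  have hmem : ∀ e ∈ q.edges, (e ∈ p.edges ∧ e ≠ d.edge) ∨ e = s(v0, w) := by
    intro e he
    rw [hqe, List.mem_append, List.mem_cons] at he
    rcases he with he | he | he
    · exact Or.inl ⟨hA2edges e he, fun h => huwA2 (by rwa [← hdedge, ← h])⟩
    · exact Or.inr he
    · exact Or.inl ⟨hBedges e he, fun h => huwB (by rwa [← hdedge, ← h])⟩
  -- rainbow
  have hrq : (q.edges.map c).Nodup := by
    have hperm1 : List.Perm (q.edges.map c) (c s(v0, w) :: (A₂.edges.map c ++ B.edges.map c)) := by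
      rw [hqe]
      simpa using List.perm_middle
    rw [hperm1.nodup_iff, List.nodup_cons]
    constructor
    · intro h
      rw [List.mem_append] at h
      rcases h with h | h <;> obtain ⟨e, he, hce⟩ := List.mem_map.1 h
      · exact hnew (by rw [← hce]; exact List.mem_map_of_mem (f := c) (hA2edges e he))
      · exact hnew (by rw [← hce]; exact List.mem_map_of_mem (f := c) (hBedges e he))
    · have hperm2 : List.Perm (p.edges.map c)
          (c s(u, w) :: (A₂.edges.map c ++ B.edges.map c)) := by
        rw [hpe]
        have e1 : List.Perm ((A₂.edges.reverse ++ [s(u,w)] ++ B.edges).map c)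
            (c s(u, w) :: (A₂.edges.reverse.map c ++ B.edges.map c)) := by
          rw [List.append_assoc]
          simp only [List.map_append, List.map_reverse, List.singleton_append,
            List.map_cons, List.map_nil]
          exact List.perm_middle
        refine e1.trans (List.Perm.cons _ (List.Perm.append_right _ ?_))
        simp only [List.map_reverse]
        exact List.reverse_perm _
      have := hperm2.nodup_iff.1 hr
      exact (List.nodup_cons.1 this).2
  exact ⟨d, u, q, hdmem, hdsnd, hqpath, hrq, hlen, hsupp, hmem⟩

end RainbowPathAux

open RainbowPathAux in
/-- Babu–Chandran–Rajendraprasad: if `G` carries an arbitrary edge-coloring in which every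
vertex is incident to at least `θ` distinct colors, then `G` contains a rainbow path
of length at least `(2/3)θ`, i.e. a rainbow path with `l` edges where `3l ≥ 2θ`. -/
theorem rainbow_path_color_degree {V β : Type*} [Fintype V] [Nonempty V]
    (G : SimpleGraph V) (c : Sym2 V → β) (θ : ℕ)
    (hθ : ∀ v, θ ≤ (c '' G.incidenceSet v).ncard) :
    ∃ (u v : V) (p : G.Walk u v), p.IsPath ∧ (p.edges.map c).Nodup ∧
      2 * θ ≤ 3 * p.length := by
  classical
  -- a maximum-length rainbow path
  set L : Set ℕ :=
    {n | ∃ (u v : V) (p : G.Walk u v), p.IsPath ∧ (p.edges.map c).Nodup ∧ p.length = n} with hL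
  have hne : L.Nonempty := by
    inhabit V
    exact ⟨0, default, default, Walk.nil, Walk.IsPath.nil, by simp, rfl⟩
  have hbdd : BddAbove L := by
    refine ⟨Fintype.card V, fun m hm => ?_⟩
    obtain ⟨u, v, q, hq, -, rfl⟩ := hm
    exact hq.length_lt.le
  set n : ℕ := sSup L with hn
  obtain ⟨v0, vl, p, hp, hr, hplen⟩ : n ∈ L := Nat.sSup_mem hne hbdd
  have hmax : ∀ (a b : V) (q : G.Walk a b), q.IsPath → (q.edges.map c).Nodup →
      q.length ≤ n := fun a b q h1 h2 => le_csSup hbdd ⟨a, b, q, h1, h2, rfl⟩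
  refine ⟨v0, vl, p, hp, hr, ?_⟩
  rw [hplen]
  -- color sets
  set Cp : Set β := {a | a ∈ p.edges.map c} with hCp
  have hCpfin : Cp.Finite := (p.edges.map c).finite_toSet
  have hCpcard : Cp.ncard ≤ n := by
    have hcoe : Cp = ↑(p.edges.map c).toFinset := by ext a; simp [hCp]
    rw [hcoe, Set.ncard_coe_finset]
    calc (p.edges.map c).toFinset.card ≤ (p.edges.map c).length := (p.edges.map c).toFinset_card_le
      _ = n := by rw [List.length_map, Walk.length_edges, hplen]
  set K : V → Set β := fun x => c '' G.incidenceSet x with hK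
  have hKfin : ∀ x, (K x).Finite := fun x => (Set.toFinite _).image c
  have hinc : ∀ (x : V) (e : Sym2 V), e ∈ G.incidenceSet x → ∃ y, G.Adj x y ∧ e = s(x, y) := by
    intro x e he
    obtain ⟨hEdge, hx⟩ := he
    induction e with
    | _ a b =>
      rcases Sym2.mem_iff.1 hx with rfl | rfl
      · exact ⟨b, (G.mem_edgeSet).1 hEdge, rfl⟩
      · exact ⟨a, ((G.mem_edgeSet).1 hEdge).symm, Sym2.eq_swap⟩
  -- forcing: new-color edges at `v0` land on the path
  have hsupforce : ∀ y : V, G.Adj v0 y → c s(v0, y) ∉ p.edges.map c → y ∈ p.support := by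
    intro y hadj hcnew
    by_contra hy
    obtain ⟨q, h1, h2, h3⟩ := extend_cons p hp hr hadj.symm hy (by rwa [Sym2.eq_swap])
    have := hmax _ _ q h1 h2
    omega
  -- the three color sets at the two ends
  set Ein : Set (Sym2 V) :=
    {e | e ∈ G.incidenceSet vl ∧ ∃ x, x ∈ p.support ∧ e = s(vl, x)} with hEin
  set Inside : Set β := c '' Ein with hInside
  set Outside : Set β := K vl \ Inside with hOutside
  set Dnew : Set β := K v0 \ Cp with hDnew
  have hDnewfin : Dnew.Finite := (hKfin v0).subset Set.diff_subset
  have hOutfin : Outside.Finite := (hKfin vl).subset Set.diff_subset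
  -- (i) θ ≤ n + |Dnew|
  have hi : θ ≤ n + Dnew.ncard := by
    have h2 : K v0 ⊆ (K v0 ∩ Cp) ∪ Dnew := by
      intro a ha
      by_cases h : a ∈ Cp
      · exact Or.inl ⟨ha, h⟩
      · exact Or.inr ⟨ha, h⟩
    calc θ ≤ (K v0).ncard := hθ v0
      _ ≤ ((K v0 ∩ Cp) ∪ Dnew).ncard := Set.ncard_le_ncard h2
          (((hKfin v0).inter_of_left _).union hDnewfin)
      _ ≤ (K v0 ∩ Cp).ncard + Dnew.ncard := Set.ncard_union_le _ _
      _ ≤ Cp.ncard + Dnew.ncard :=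
          Nat.add_le_add_right (Set.ncard_le_ncard Set.inter_subset_right hCpfin) _
      _ ≤ n + Dnew.ncard := by gcongr
  -- (iii) θ ≤ n + |Outside|
  have hInsidecard : Inside.ncard ≤ n := by
    have hEsub : Ein ⊆ (fun x => s(vl, x)) '' {x | x ∈ p.support ∧ x ≠ vl} := by
      rintro e ⟨heinc, x, hxsup, rfl⟩
      refine ⟨x, ⟨hxsup, ?_⟩, rfl⟩
      rintro rfl
      exact G.not_isDiag_of_mem_edgeSet heinc.1 (by simp)
    have hTcard : {x | x ∈ p.support ∧ x ≠ vl}.ncard ≤ n := by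
      have hsub : {x | x ∈ p.support ∧ x ≠ vl} ⊆ ↑(p.support.toFinset.erase vl) := by
        intro x ⟨h1, h2⟩
        simp [Finset.mem_erase, h1, h2]
      calc {x | x ∈ p.support ∧ x ≠ vl}.ncard
          ≤ (p.support.toFinset.erase vl : Finset V).card := by
            rw [← Set.ncard_coe_finset]
            exact Set.ncard_le_ncard hsub (Set.toFinite _)
        _ = p.support.toFinset.card - 1 := Finset.card_erase_of_mem (by simp)
        _ ≤ n := by
            rw [List.toFinset_card_of_nodup hp.support_nodup, Walk.length_support, hplen]
            omega
    calc Inside.ncard ≤ Ein.ncard := Set.ncard_image_le (Set.toFinite _)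
      _ ≤ ((fun x => s(vl, x)) '' {x | x ∈ p.support ∧ x ≠ vl}).ncard :=
          Set.ncard_le_ncard hEsub (Set.toFinite _)
      _ ≤ {x | x ∈ p.support ∧ x ≠ vl}.ncard := Set.ncard_image_le (Set.toFinite _)
      _ ≤ n := hTcard
  have hiii : θ ≤ n + Outside.ncard := by
    have h2 : K vl ⊆ Inside ∪ Outside := by
      intro a ha
      by_cases h : a ∈ Inside
      · exact Or.inl h
      · exact Or.inr ⟨ha, h⟩
    calc θ ≤ (K vl).ncard := hθ vl
      _ ≤ (Inside ∪ Outside).ncard := Set.ncard_le_ncard h2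
          (((Set.toFinite Ein).image c).union hOutfin)
      _ ≤ Inside.ncard + Outside.ncard := Set.ncard_union_le _ _
      _ ≤ n + Outside.ncard := by gcongr
  -- witnesses for Outside colors
  have hout : ∀ a ∈ Outside, ∃ x, G.Adj vl x ∧ x ∉ p.support ∧ c s(vl, x) = a := by
    rintro a ⟨ha, hnotin⟩
    obtain ⟨e, he, hce⟩ := ha
    obtain ⟨y, hadj, rfl⟩ := hinc vl e he
    refine ⟨y, hadj, fun hy => hnotin ⟨_, ⟨he, y, hy, rfl⟩, hce⟩, hce⟩
  have hOutCp : Outside ⊆ Cp := by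
    intro a ha
    obtain ⟨x, hadj, hx, hca⟩ := hout a ha
    by_contra hacp
    obtain ⟨q, h1, h2, h3⟩ := extend_concat p hp hr hadj hx (by rw [hca]; exact hacp)
    have := hmax _ _ q h1 h2
    omega
  -- witnesses and rotations for Dnew colors
  have hwit : ∀ a ∈ Dnew, ∃ γ : β, γ ∈ Cp ∧ (∀ b ∈ Outside, b ≠ γ) ∧
      ∃ d : G.Dart, d ∈ p.darts ∧ c s(v0, d.snd) = a ∧ γ = c d.edge := by
    rintro a ⟨ha, hacp⟩
    obtain ⟨e, he, hce⟩ := ha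
    obtain ⟨w, hadj, rfl⟩ := hinc v0 e he
    have hnew : c s(v0, w) ∉ p.edges.map c := by rw [hce]; exact hacp
    have hwsup : w ∈ p.support := hsupforce w hadj hnew
    obtain ⟨d, u, q, hdmem, hdsnd, hqpath, hrq, hlen, hsupp, hmem⟩ :=
      rotation p hp hr hwsup hadj.ne' hadj hnew
    have hdedge : d.edge ∈ p.edges := List.mem_map_of_mem (f := Dart.edge) hdmem
    refine ⟨c d.edge, List.mem_map_of_mem (f := c) hdedge, ?_, d, hdmem, by rw [hdsnd, hce], rfl⟩
    intro b hb hbγ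
    obtain ⟨x, hadjx, hxsup, hcb⟩ := hout b hb
    have hxq : x ∉ q.support := fun h => hxsup (hsupp x h)
    have hbq : c s(vl, x) ∈ q.edges.map c := by
      by_contra hnot
      obtain ⟨q', h1, h2, h3⟩ := extend_concat q hqpath hrq hadjx hxq hnot
      have := hmax _ _ q' h1 h2
      omega
    rw [hcb] at hbq
    obtain ⟨e', he', hce'⟩ := List.mem_map.1 hbq
    rcases hmem e' he' with ⟨hep, hne⟩ | rfl
    · apply hne
      apply List.inj_on_of_nodup_map hr hep hdedge
      rw [hce']; exact hbγ
    · refine hacp ?_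
      have hab : a = c d.edge := by rw [← hce, hce']; exact hbγ
      rw [hCp, Set.mem_setOf_eq, hab]
      exact List.mem_map_of_mem (f := c) hdedge
  -- the injective map from Dnew into Cp avoiding Outside
  set g : β → β := fun a => if h : a ∈ Dnew then (hwit a h).choose else a with hgdef
  have hg : ∀ a (h : a ∈ Dnew), g a ∈ Cp ∧ (∀ b ∈ Outside, b ≠ g a) ∧
      ∃ d : G.Dart, d ∈ p.darts ∧ c s(v0, d.snd) = a ∧ g a = c d.edge := by
    intro a h
    have : g a = (hwit a h).choose := by rw [hgdef]; simp [h]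
    rw [this]
    exact (hwit a h).choose_spec
  have hdartsnodup : (p.darts.map Dart.edge).Nodup := hp.isTrail.edges_nodup
  have hginj : Set.InjOn g Dnew := by
    intro a1 h1 a2 h2 heq
    obtain ⟨-, -, d1, hd1, hc1, he1⟩ := hg a1 h1
    obtain ⟨-, -, d2, hd2, hc2, he2⟩ := hg a2 h2
    have hde : d1.edge = d2.edge := by
      apply List.inj_on_of_nodup_map hr
        (List.mem_map_of_mem (f := Dart.edge) hd1) (List.mem_map_of_mem (f := Dart.edge) hd2)
      rw [← he1, ← he2, heq]
    have hd12 : d1 = d2 := List.inj_on_of_nodup_map hdartsnodup hd1 hd2 hde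
    rw [← hc1, ← hc2, hd12]
  -- (ii) |Dnew| + |Outside| ≤ n
  have hii : Dnew.ncard + Outside.ncard ≤ n := by
    have hΓcard : (g '' Dnew).ncard = Dnew.ncard := Set.ncard_image_of_injOn hginj
    have hdisj : Disjoint (g '' Dnew) Outside := by
      rw [Set.disjoint_left]
      rintro b ⟨a, ha, rfl⟩ hb
      exact (hg a ha).2.1 (g a) hb rfl
    have hsub : (g '' Dnew) ∪ Outside ⊆ Cp := by
      rintro b (⟨a, ha, rfl⟩ | hb)
      · exact (hg a ha).1
      · exact hOutCp hb
    calc Dnew.ncard + Outside.ncard = (g '' Dnew).ncard + Outside.ncard := by rw [hΓcard]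
      _ = ((g '' Dnew) ∪ Outside).ncard :=
          (Set.ncard_union_eq hdisj (hDnewfin.image g) hOutfin).symm
      _ ≤ Cp.ncard := Set.ncard_le_ncard hsub hCpfin
      _ ≤ n := hCpcard
  omega
end

section
/- There exists a proper edge-coloring of the complete graph K_4 on four vertices (using 3 colors) that contains no rainbow path with 3 edges. Consequently, for every r ≥ 1 there is a graph with minimum degree 3 (a disjoint union of r copies of K_4) admitting a proper edge-coloring whose longest rainbow path has only 2 edges, showing the constant 2/3 in the rainbow path theorem cannot be improved in general. -/
open SimpleGraph Finset

private lemma key4'_aux : ∀ a b c d : Fin 4, a ≠ b → b ≠ c → c ≠ d →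
    ((a:ℕ) ^^^ (b:ℕ)) % 3 ≠ ((b:ℕ) ^^^ (c:ℕ)) % 3 →
    ((b:ℕ) ^^^ (c:ℕ)) % 3 ≠ ((c:ℕ) ^^^ (d:ℕ)) % 3 →
    ((a:ℕ) ^^^ (b:ℕ)) % 3 ≠ ((c:ℕ) ^^^ (d:ℕ)) % 3 → a = d := by decide

private lemma key4_aux : ∀ a b c d : Fin 4, a ≠ b → b ≠ c → c ≠ d →
    (a:ℕ) ^^^ (b:ℕ) ≠ (b:ℕ) ^^^ (c:ℕ) →
    (b:ℕ) ^^^ (c:ℕ) ≠ (c:ℕ) ^^^ (d:ℕ) →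
    (a:ℕ) ^^^ (b:ℕ) ≠ (c:ℕ) ^^^ (d:ℕ) → a = d := by decide

private lemma xor_inj_aux : ∀ a b c : Fin 4, (a:ℕ) ^^^ (b:ℕ) = (a:ℕ) ^^^ (c:ℕ) → b = c := by
  decide

private def c1Aux : Sym2 (Fin 4) → Fin 3 :=
  Sym2.lift ⟨fun a b => ⟨((a:ℕ) ^^^ (b:ℕ)) % 3, Nat.mod_lt _ (by norm_num)⟩,
    fun a b => by simp [Nat.xor_comm]⟩

private def G2Aux (r : ℕ) : SimpleGraph (Fin (4 * r)) :=
  SimpleGraph.fromRel (fun a b => (a : ℕ) / 4 = (b : ℕ) / 4)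

private def c2Aux (r : ℕ) : Sym2 (Fin (4 * r)) → ℕ :=
  Sym2.lift ⟨fun a b => (a : ℕ) % 4 ^^^ (b : ℕ) % 4, fun a b => Nat.xor_comm _ _⟩

private lemma hAdjAux (r : ℕ) : ∀ a b : Fin (4 * r), (G2Aux r).Adj a b ↔ a ≠ b ∧ (a : ℕ) / 4 = (b : ℕ) / 4 := by
  intro a b
  rw [G2Aux, SimpleGraph.fromRel_adj]
  constructor
  · rintro ⟨h, h' | h'⟩ <;> exact ⟨h, by omega⟩
  · rintro ⟨h, h'⟩; exact ⟨h, Or.inl h'⟩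

-- key cancellation: two distinct edges at a common vertex get distinct colors
private lemma proper2Aux (r : ℕ) : IsProperEdgeColoring (G2Aux r) (c2Aux r) := by
  have key : ∀ v b y : Fin (4 * r), (G2Aux r).Adj v b → (G2Aux r).Adj v y →
      c2Aux r s(v, b) = c2Aux r s(v, y) → b = y := by
    intro v b y hb hy h
    rw [hAdjAux] at hb hy
    simp only [c2Aux, Sym2.lift_mk] at h
    have hb4 : (b:ℕ) % 4 < 4 := by omega
    have hy4 : (y:ℕ) % 4 < 4 := by omega
    have hv4 : (v:ℕ) % 4 < 4 := by omega
    have := xor_inj_aux ⟨(v:ℕ)%4, hv4⟩ ⟨(b:ℕ)%4, hb4⟩ ⟨(y:ℕ)%4, hy4⟩ h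
    have hmod : (b:ℕ) % 4 = (y:ℕ) % 4 := congrArg Fin.val this
    have hdb := hb.2
    have hdy := hy.2
    apply Fin.ext; omega
  intro e1 e2 h1 h2 hne ⟨v, hv1, hv2⟩
  induction e1 using Sym2.ind with | _ a b =>
  induction e2 using Sym2.ind with | _ x y =>
  rw [SimpleGraph.mem_edgeSet] at h1 h2
  rw [Sym2.mem_iff] at hv1 hv2
  intro hc
  apply hne
  rcases hv1 with rfl | rfl <;> rcases hv2 with rfl | rfl
  · rw [key v b y h1 h2 hc]
  · rw [Sym2.eq_swap (a := x)] at hc ⊢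
    rw [key v b x h1 h2.symm hc]
  · rw [Sym2.eq_swap (a := a)] at hc ⊢
    rw [key v a y h1.symm h2 hc]
  · rw [Sym2.eq_swap (a := a), Sym2.eq_swap (a := x)] at hc ⊢
    rw [key v a x h1.symm h2.symm hc]

private lemma short2Aux (r : ℕ) : ∀ (u v : Fin (4 * r)) (p : (G2Aux r).Walk u v),
    p.IsPath → (p.edges.map (c2Aux r)).Nodup → p.length ≤ 2 := by
  intro u v p hp hn
  by_contra hlen
  push_neg at hlen
  cases p with
  | nil => simp at hlen
  | cons h1 q =>
    rename_i b
    cases q with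
    | nil => simp at hlen
    | cons h2 q =>
      rename_i c
      cases q with
      | nil => simp at hlen
      | cons h3 q =>
        rename_i d
        have hnd := hp.support_nodup
        simp only [Walk.support_cons, List.nodup_cons, List.mem_cons] at hnd
        have hud : u ≠ d := by
          intro h; exact hnd.1 (Or.inr (Or.inr (h ▸ q.start_mem_support)))
        simp only [Walk.edges_cons, List.map_cons, List.nodup_cons, List.mem_cons] at hn
        have e12 : c2Aux r s(u, b) ≠ c2Aux r s(b, c) := fun h => hn.1 (Or.inl h)
        have e13 : c2Aux r s(u, b) ≠ c2Aux r s(c, d) := fun h => hn.1 (Or.inr (Or.inl h))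
        have e23 : c2Aux r s(b, c) ≠ c2Aux r s(c, d) := fun h => hn.2.1 (Or.inl h)
        simp only [c2Aux, Sym2.lift_mk] at e12 e13 e23
        rw [hAdjAux] at h1 h2 h3
        have hu4 : (u:ℕ) % 4 < 4 := by omega
        have hb4 : (b:ℕ) % 4 < 4 := by omega
        have hc4 : (c:ℕ) % 4 < 4 := by omega
        have hd4 : (d:ℕ) % 4 < 4 := by omega
        have hub : ((⟨(u:ℕ)%4, hu4⟩ : Fin 4)) ≠ ⟨(b:ℕ)%4, hb4⟩ := by
          intro h; have := congrArg Fin.val h; simp only [Fin.val_mk] at this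
          have := h1.1; have h2' := h1.2
          apply this; apply Fin.ext; omega
        have hbc : ((⟨(b:ℕ)%4, hb4⟩ : Fin 4)) ≠ ⟨(c:ℕ)%4, hc4⟩ := by
          intro h; have := congrArg Fin.val h; simp only [Fin.val_mk] at this
          have := h2.1; have h2' := h2.2
          apply this; apply Fin.ext; omega
        have hcd : ((⟨(c:ℕ)%4, hc4⟩ : Fin 4)) ≠ ⟨(d:ℕ)%4, hd4⟩ := by
          intro h; have := congrArg Fin.val h; simp only [Fin.val_mk] at this
          have := h3.1; have h2' := h3.2
          apply this; apply Fin.ext; omega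
        have := key4_aux ⟨(u:ℕ)%4, hu4⟩ ⟨(b:ℕ)%4, hb4⟩ ⟨(c:ℕ)%4, hc4⟩ ⟨(d:ℕ)%4, hd4⟩
          hub hbc hcd e12 e23 e13
        have hmod : (u:ℕ) % 4 = (d:ℕ) % 4 := congrArg Fin.val this
        have d1 := h1.2; have d2 := h2.2; have d3 := h3.2
        exact hud (Fin.ext (by omega))

private lemma exists2Aux (r : ℕ) (hr : 1 ≤ r) : ∃ (u v : Fin (4 * r)) (p : (G2Aux r).Walk u v),
    p.IsPath ∧ (p.edges.map (c2Aux r)).Nodup ∧ p.length = 2 := by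
  have h4 : 4 ≤ 4 * r := by omega
  have h01 : (G2Aux r).Adj ⟨0, by omega⟩ ⟨1, by omega⟩ := by
    rw [hAdjAux]
    exact ⟨fun h => by have := congrArg Fin.val h; simp at this, by simp⟩
  have h12 : (G2Aux r).Adj ⟨1, by omega⟩ ⟨2, by omega⟩ := by
    rw [hAdjAux]
    exact ⟨fun h => by have := congrArg Fin.val h; simp at this, by simp⟩
  refine ⟨_, _, Walk.cons h01 (Walk.cons h12 Walk.nil), ?_, ?_, ?_⟩
  · rw [Walk.isPath_def]
    simp only [Walk.support_cons, Walk.support_nil, List.nodup_cons, List.mem_cons,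
      List.mem_singleton, List.not_mem_nil, or_false, List.nodup_nil, and_true]
    constructor
    · push_neg
      constructor <;> · intro h; have := congrArg Fin.val h; simp at this
    · exact ⟨fun h => by have := congrArg Fin.val h; simp at this, not_false⟩
  · simp only [Walk.edges_cons, Walk.edges_nil, List.map_cons, List.map_nil,
      c2Aux, Sym2.lift_mk, List.nodup_cons, List.mem_singleton, List.not_mem_nil,
      not_false_iff, and_true, List.nodup_nil]
    simp
  · simp


private lemma deg2Aux (r : ℕ) (v : Fin (4 * r)) : ((G2Aux r).neighborSet v).ncard = 3 := by
  have hset : (G2Aux r).neighborSet v =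
      ↑(Finset.univ.filter (fun w : Fin (4*r) => w ≠ v ∧ (w:ℕ)/4 = (v:ℕ)/4)) := by
    ext w
    simp only [mem_neighborSet, hAdjAux, Finset.coe_filter, Finset.mem_univ, true_and,
      Set.mem_setOf_eq]
    constructor
    · rintro ⟨h, h'⟩; exact ⟨h.symm, h'.symm⟩
    · rintro ⟨h, h'⟩; exact ⟨h.symm, h'.symm⟩
  rw [hset, Set.ncard_coe_finset]
  have hlt : (v : ℕ) % 4 < 4 := by omega
  have h : (Finset.univ.filter (fun w : Fin (4*r) => w ≠ v ∧ (w:ℕ)/4 = (v:ℕ)/4)).card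
      = (Finset.univ.filter (fun j : Fin 4 => j ≠ ⟨(v:ℕ)%4, hlt⟩)).card := by
    refine Finset.card_nbij' (fun w => (⟨(w:ℕ)%4, by omega⟩ : Fin 4))
      (fun j => (⟨4*((v:ℕ)/4)+(j:ℕ), by have := v.isLt; have := j.isLt; omega⟩ : Fin (4*r))) ?_ ?_ ?_ ?_
    · intro w hw
      simp only [Finset.mem_coe, Finset.mem_filter, Finset.mem_univ, true_and] at hw ⊢
      obtain ⟨h1, h2⟩ := hw
      have hne : (w:ℕ) ≠ (v:ℕ) := fun h => h1 (Fin.ext h)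
      intro h
      have := congrArg Fin.val h
      simp only [Fin.val_mk] at this
      omega
    · intro j hj
      simp only [Finset.mem_coe, Finset.mem_filter, Finset.mem_univ, true_and] at hj ⊢
      have hjne : (j:ℕ) ≠ (v:ℕ)%4 := fun h => hj (Fin.ext h)
      have hjlt := j.isLt
      have hvlt := v.isLt
      constructor
      · intro h
        have := congrArg Fin.val h
        simp only [Fin.val_mk] at this
        omega
      · omega
    · intro w hw
      simp only [Finset.mem_coe, Finset.mem_filter, Finset.mem_univ, true_and] at hw
      apply Fin.ext; simp only [Fin.val_mk]; omega
    · intro j hj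
      apply Fin.ext; simp only [Fin.val_mk]
      have := j.isLt; omega
  rw [h, Finset.filter_ne', Finset.card_erase_of_mem (Finset.mem_univ _)]
  simp

private lemma c1_proper : IsProperEdgeColoring (⊤ : SimpleGraph (Fin 4)) c1Aux := by
  simp only [IsProperEdgeColoring, edgeSet_top, Set.mem_setOf_eq]
  decide

private lemma c1_norainbow : ∀ (u v : Fin 4) (p : (⊤ : SimpleGraph (Fin 4)).Walk u v),
    p.IsPath → p.length = 3 → ¬ (p.edges.map c1Aux).Nodup := by
  intro u v p hp hl hn
  cases p with
  | nil => simp at hl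
  | cons h1 q =>
    rename_i b
    cases q with
    | nil => simp at hl
    | cons h2 q =>
      rename_i c
      cases q with
      | nil => simp at hl
      | cons h3 q =>
        rename_i d
        have hnd := hp.support_nodup
        simp only [Walk.support_cons, List.nodup_cons, List.mem_cons] at hnd
        have hud : u ≠ d := by
          intro h; exact hnd.1 (Or.inr (Or.inr (h ▸ q.start_mem_support)))
        simp only [Walk.edges_cons, List.map_cons, List.nodup_cons, List.mem_cons] at hn
        have e12 : c1Aux s(u, b) ≠ c1Aux s(b, c) := fun h => hn.1 (Or.inl h)
        have e13 : c1Aux s(u, b) ≠ c1Aux s(c, d) := fun h => hn.1 (Or.inr (Or.inl h))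
        have e23 : c1Aux s(b, c) ≠ c1Aux s(c, d) := fun h => hn.2.1 (Or.inl h)
        simp only [c1Aux, Sym2.lift_mk] at e12 e13 e23
        exact hud (key4'_aux u b c d h1.ne h2.ne h3.ne (fun h => e12 (Fin.ext h))
          (fun h => e23 (Fin.ext h)) (fun h => e13 (Fin.ext h)))

/-- There is a proper `3`-edge-coloring of `K_4` with no rainbow path of `3` edges;
consequently, for every `r ≥ 1` there is a `3`-regular graph (a disjoint union of `r`
copies of `K_4`) with a proper edge-coloring whose longest rainbow path has exactly
`2` edges, so the constant `2/3` in the rainbow path theorem is best possible. -/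
theorem K4_no_rainbow_P3 :
    (∃ c : Sym2 (Fin 4) → Fin 3,
      IsProperEdgeColoring (⊤ : SimpleGraph (Fin 4)) c ∧
      ∀ (u v : Fin 4) (p : (⊤ : SimpleGraph (Fin 4)).Walk u v),
        p.IsPath → p.length = 3 → ¬ (p.edges.map c).Nodup) ∧
    ∀ r : ℕ, 1 ≤ r →
      ∃ (G : SimpleGraph (Fin (4 * r))) (c : Sym2 (Fin (4 * r)) → ℕ),
        (∀ v, (G.neighborSet v).ncard = 3) ∧ IsProperEdgeColoring G c ∧
        (∀ (u v : Fin (4 * r)) (p : G.Walk u v),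
          p.IsPath → (p.edges.map c).Nodup → p.length ≤ 2) ∧
        (∃ (u v : Fin (4 * r)) (p : G.Walk u v),
          p.IsPath ∧ (p.edges.map c).Nodup ∧ p.length = 2) := by
  constructor
  · exact ⟨c1Aux, c1_proper, c1_norainbow⟩
  · intro r hr
    exact ⟨G2Aux r, c2Aux r, deg2Aux r, proper2Aux r, short2Aux r, exists2Aux r hr⟩
end

section
/- For every fixed l ≥ 1 and every n, the rainbow Turán number of the path with l edges satisfies ex*(n, P_l) ≤ ⌈(3l−2)/2⌉ · n. -/
open SimpleGraph Finset

namespace RainbowAux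

open SimpleGraph Finset

variable {V : Type*}

/-- A rainbow path with `k` edges, given as a vertex sequence `w 0, …, w k`. -/
def IsRPath (G : SimpleGraph V) (c : Sym2 V → ℕ) (w : ℕ → V) (k : ℕ) : Prop :=
  (∀ i ≤ k, ∀ j ≤ k, w i = w j → i = j) ∧
  (∀ i < k, G.Adj (w i) (w (i + 1))) ∧
  (∀ i < k, ∀ j < k, c s(w i, w (i + 1)) = c s(w j, w (j + 1)) → i = j)

lemma proper_color_ne {G : SimpleGraph V} {c : Sym2 V → ℕ} (hc : IsProperEdgeColoring G c)
    {v x y : V} (hx : G.Adj v x) (hy : G.Adj v y) (hxy : x ≠ y) :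
    c s(v, x) ≠ c s(v, y) := by
  apply hc ((G.mem_edgeSet).mpr hx) ((G.mem_edgeSet).mpr hy) ?_
    ⟨v, Sym2.mem_mk_left v x, Sym2.mem_mk_left v y⟩
  intro hcon
  rw [Sym2.eq_iff] at hcon
  rcases hcon with ⟨-, h⟩ | ⟨h1, -⟩
  · exact hxy h
  · exact hy.ne h1

lemma isRPath_one {G : SimpleGraph V} {c : Sym2 V → ℕ} {a b : V} (hab : G.Adj a b) :
    IsRPath G c (fun i => match i with | 0 => a | _ + 1 => b) 1 := by
  refine ⟨?_, ?_, ?_⟩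
  · intro i hi j hj hij
    interval_cases i <;> interval_cases j
    · rfl
    · exact absurd hij hab.ne
    · exact absurd hij.symm hab.ne
    · rfl
  · intro i hi
    interval_cases i
    exact hab
  · intro i hi j hj _
    omega

lemma isRPath_append {G : SimpleGraph V} {c : Sym2 V → ℕ} {w : ℕ → V} {k : ℕ}
    (h : IsRPath G c w k) {x : V} (hout : ∀ i ≤ k, x ≠ w i) (hadj : G.Adj (w k) x)
    (hfresh : ∀ i < k, c s(w k, x) ≠ c s(w i, w (i + 1))) :
    IsRPath G c (fun i => if i ≤ k then w i else x) (k + 1) := by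
  obtain ⟨h1, h2, h3⟩ := h
  have colf : ∀ i < k + 1,
      c s((if i ≤ k then w i else x), (if i + 1 ≤ k then w (i + 1) else x)) =
        if i < k then c s(w i, w (i + 1)) else c s(w k, x) := by
    intro i hi
    rcases Nat.lt_or_ge i k with hik | hik
    · rw [if_pos (by omega), if_pos (by omega), if_pos hik]
    · have : i = k := by omega
      subst this
      rw [if_pos le_rfl, if_neg (by omega), if_neg (by omega)]
  refine ⟨?_, ?_, ?_⟩
  · intro i hi j hj hij
    simp only at hij
    split_ifs at hij with ha hb hb
    · exact h1 i ha j hb hij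
    · exact absurd hij.symm (hout i ha)
    · exact absurd hij (hout j hb)
    · omega
  · intro i hi
    simp only
    rcases Nat.lt_or_ge i k with hik | hik
    · rw [if_pos (by omega), if_pos (by omega)]
      exact h2 i hik
    · have : i = k := by omega
      subst this
      rw [if_pos le_rfl, if_neg (by omega)]
      exact hadj
  · intro i hi j hj hij
    simp only at hij
    rw [colf i hi, colf j hj] at hij
    split_ifs at hij with ha hb hb
    · exact h3 i ha j hb hij
    · exact absurd hij.symm (hfresh i ha)
    · exact absurd hij (hfresh j hb)
    · omega

lemma isRPath_prepend {G : SimpleGraph V} {c : Sym2 V → ℕ} {w : ℕ → V} {k : ℕ}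
    (h : IsRPath G c w k) {x : V} (hout : ∀ i ≤ k, x ≠ w i) (hadj : G.Adj (w 0) x)
    (hfresh : ∀ i < k, c s(w 0, x) ≠ c s(w i, w (i + 1))) :
    IsRPath G c (fun i => match i with | 0 => x | j + 1 => w j) (k + 1) := by
  obtain ⟨h1, h2, h3⟩ := h
  refine ⟨?_, ?_, ?_⟩
  · intro i hi j hj hij
    match i, j with
    | 0, 0 => rfl
    | 0, j + 1 => exact absurd hij (hout j (by omega))
    | i + 1, 0 => exact absurd hij.symm (hout i (by omega))
    | i + 1, j + 1 =>
      have := h1 i (by omega) j (by omega) hij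
      omega
  · intro i hi
    match i with
    | 0 => exact hadj.symm
    | i + 1 => exact h2 i (by omega)
  · intro i hi j hj hij
    match i, j with
    | 0, 0 => rfl
    | 0, j + 1 =>
      exfalso
      apply hfresh j (by omega)
      rw [← hij]
      exact congrArg c Sym2.eq_swap
    | i + 1, 0 =>
      exfalso
      apply hfresh i (by omega)
      rw [hij]
      exact congrArg c Sym2.eq_swap
    | i + 1, j + 1 =>
      have := h3 i (by omega) j (by omega) hij
      omega

/-- The rotation of the path `w 0 … w k` through the chord `w k w t`:
`w 0, …, w t, w k, w (k-1), …, w (t+1)`. -/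
def rot (w : ℕ → V) (k t : ℕ) : ℕ → V := fun i => if i ≤ t then w i else w (k + t + 1 - i)

lemma isRPath_rotate {G : SimpleGraph V} {c : Sym2 V → ℕ} {w : ℕ → V} {k t : ℕ}
    (h : IsRPath G c w k) (ht : t + 1 < k)
    (hchord : G.Adj (w k) (w t))
    (hfresh : ∀ i < k, c s(w k, w t) ≠ c s(w i, w (i + 1))) :
    IsRPath G c (rot w k t) k ∧
      ∀ i < k, c s(rot w k t i, rot w k t (i + 1)) = c s(w k, w t) ∨
        ∃ j, j < k ∧ j ≠ t ∧ c s(rot w k t i, rot w k t (i + 1)) = c s(w j, w (j + 1)) := by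
  obtain ⟨h1, h2, h3⟩ := id h
  have colf : ∀ i < k, c s(rot w k t i, rot w k t (i + 1)) =
      if i = t then c s(w k, w t)
      else if i < t then c s(w i, w (i + 1)) else c s(w (k + t - i), w (k + t - i + 1)) := by
    intro i hi
    rcases Nat.lt_trichotomy i t with hit | hit | hit
    · rw [if_neg (by omega), if_pos hit]
      unfold rot
      rw [if_pos (by omega), if_pos (by omega)]
    · subst hit
      rw [if_pos rfl]
      unfold rot
      rw [if_pos le_rfl, if_neg (by omega), show k + i + 1 - (i + 1) = k by omega]
      exact congrArg c Sym2.eq_swap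
    · rw [if_neg (by omega), if_neg (by omega)]
      unfold rot
      rw [if_neg (by omega), if_neg (by omega),
        show k + t + 1 - i = (k + t - i) + 1 by omega,
        show k + t + 1 - (i + 1) = k + t - i by omega]
      exact congrArg c Sym2.eq_swap
  have hpath : IsRPath G c (rot w k t) k := by
    refine ⟨?_, ?_, ?_⟩
    · intro i hi j hj hij
      unfold rot at hij
      split_ifs at hij with ha hb hb
      · exact h1 i (by omega) j (by omega) hij
      · have := h1 i (by omega) (k + t + 1 - j) (by omega) hij
        omega
      · have := h1 (k + t + 1 - i) (by omega) j (by omega) hij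
        omega
      · have := h1 (k + t + 1 - i) (by omega) (k + t + 1 - j) (by omega) hij
        omega
    · intro i hi
      rcases Nat.lt_trichotomy i t with hit | hit | hit
      · unfold rot
        rw [if_pos (by omega), if_pos (by omega)]
        exact h2 i (by omega)
      · subst hit
        unfold rot
        rw [if_pos le_rfl, if_neg (by omega), show k + i + 1 - (i + 1) = k by omega]
        exact hchord.symm
      · unfold rot
        rw [if_neg (by omega), if_neg (by omega),
          show k + t + 1 - i = (k + t - i) + 1 by omega,
          show k + t + 1 - (i + 1) = k + t - i by omega]
        exact (h2 (k + t - i) (by omega)).symm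
    · intro i hi j hj hij
      rw [colf i hi, colf j hj] at hij
      split_ifs at hij with ha hb hc hc hd he he
      · omega
      · exact absurd hij (hfresh j (by omega))
      · exact absurd hij (hfresh (k + t - j) (by omega))
      · exact absurd hij.symm (hfresh i (by omega))
      · exact h3 i (by omega) j (by omega) hij
      · have := h3 i (by omega) (k + t - j) (by omega) hij
        omega
      · exact absurd hij.symm (hfresh (k + t - i) (by omega))
      · have := h3 (k + t - i) (by omega) j (by omega) hij
        omega
      · have := h3 (k + t - i) (by omega) (k + t - j) (by omega) hij
        omega
  refine ⟨hpath, ?_⟩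
  intro i hi
  rw [colf i hi]
  split_ifs with ha hb
  · exact Or.inl rfl
  · exact Or.inr ⟨i, by omega, by omega, rfl⟩
  · exact Or.inr ⟨k + t - i, by omega, by omega, rfl⟩

end RainbowAux

namespace RainbowAux

open SimpleGraph Finset

variable {V : Type*}

/-- Key counting lemma: if `w` is a rainbow path of maximum length `k ≥ 1`, then the degrees
of its two endpoints sum to at most `3k`. -/
lemma core [Fintype V] [DecidableEq V] {G : SimpleGraph V} [DecidableRel G.Adj]
    {c : Sym2 V → ℕ} (hc : IsProperEdgeColoring G c) {w : ℕ → V} {k : ℕ} (hk : 1 ≤ k)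
    (h : IsRPath G c w k) (hmax : ∀ w', ¬ IsRPath G c w' (k + 1)) :
    G.degree (w 0) + G.degree (w k) ≤ 3 * k := by
  classical
  obtain ⟨h1, h2, h3⟩ := id h
  set CF : Finset ℕ := (Finset.range k).image (fun i => c s(w i, w (i + 1))) with hCFdef
  have hCFcard : CF.card = k := by
    rw [hCFdef, Finset.card_image_of_injOn, Finset.card_range]
    intro i hi j hj hij
    exact h3 i (Finset.mem_range.mp hi) j (Finset.mem_range.mp hj) hij
  have hmemCF : ∀ {γ : ℕ}, γ ∈ CF ↔ ∃ i, i < k ∧ c s(w i, w (i + 1)) = γ := by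
    intro γ
    constructor
    · intro hg
      obtain ⟨i, hi, hh⟩ := Finset.mem_image.mp (hCFdef ▸ hg)
      exact ⟨i, Finset.mem_range.mp hi, hh⟩
    · rintro ⟨i, hi, hh⟩
      rw [hCFdef]
      exact Finset.mem_image.mpr ⟨i, Finset.mem_range.mpr hi, hh⟩
  -- end-extension: any edge from `w k` leaving the path has a path color
  have hext : ∀ x : V, G.Adj (w k) x → (∀ i ≤ k, x ≠ w i) → c s(w k, x) ∈ CF := by
    intro x hadj hout
    by_contra hfresh
    refine hmax _ (isRPath_append h hout hadj ?_)
    intro i hi hcol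
    exact hfresh (hmemCF.mpr ⟨i, hi, hcol.symm⟩)
  -- front-extension
  have hext0 : ∀ x : V, G.Adj (w 0) x → (∀ i ≤ k, x ≠ w i) → c s(w 0, x) ∈ CF := by
    intro x hadj hout
    by_contra hfresh
    refine hmax _ (isRPath_prepend h hout hadj ?_)
    intro i hi hcol
    exact hfresh (hmemCF.mpr ⟨i, hi, hcol.symm⟩)
  -- the set of chord indices at `w k` with fresh colors
  set D : Finset ℕ := (Finset.range (k - 1)).filter
      (fun t => G.Adj (w k) (w t) ∧ c s(w k, w t) ∉ CF) with hDdef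
  have hDsub : ∀ t ∈ D, t < k - 1 ∧ G.Adj (w k) (w t) ∧ c s(w k, w t) ∉ CF := by
    intro t htD
    rw [hDdef, Finset.mem_filter, Finset.mem_range] at htD
    exact ⟨htD.1, htD.2.1, htD.2.2⟩
  -- Step A : degree of `w k`
  have hA : G.degree (w k) ≤ k + D.card := by
    rw [← SimpleGraph.card_neighborFinset_eq_degree]
    set A1 := (G.neighborFinset (w k)).filter (fun x => c s(w k, x) ∈ CF) with hA1def
    set A2 := (G.neighborFinset (w k)).filter (fun x => ¬ c s(w k, x) ∈ CF) with hA2def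
    have hsplit : G.neighborFinset (w k) = A1 ∪ A2 :=
      (Finset.filter_union_filter_not_eq _ _).symm
    have hA1 : A1.card ≤ k := by
      rw [← hCFcard]
      apply Finset.card_le_card_of_injOn (fun x => c s(w k, x))
      · intro x hx
        exact (Finset.mem_filter.mp hx).2
      · intro x hx y hy hxy
        by_contra hne
        rw [Finset.mem_coe, hA1def, Finset.mem_filter, SimpleGraph.mem_neighborFinset] at hx hy
        exact proper_color_ne hc hx.1 hy.1 hne hxy
    have hA2 : A2.card ≤ D.card := by
      apply Finset.card_le_card_of_surjOn w
      intro x hx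
      rw [Finset.mem_coe, hA2def, Finset.mem_filter, SimpleGraph.mem_neighborFinset] at hx
      obtain ⟨hadj, hfr⟩ := hx
      have hxin : ∃ t, t ≤ k ∧ x = w t := by
        by_contra hcon
        push_neg at hcon
        exact hfr (hext x hadj hcon)
      obtain ⟨t, htk, rfl⟩ := hxin
      have htne : t ≠ k := by
        intro hh
        rw [hh] at hadj
        exact G.irrefl hadj
      have htne2 : t ≠ k - 1 := by
        intro hh
        apply hfr
        apply hmemCF.mpr ⟨k - 1, by omega, ?_⟩
        rw [show k - 1 + 1 = k by omega, ← hh]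
        exact congrArg c Sym2.eq_swap
      refine ⟨t, ?_, rfl⟩
      rw [Finset.mem_coe, hDdef, Finset.mem_filter, Finset.mem_range]
      exact ⟨by omega, hadj, hfr⟩
    calc #(G.neighborFinset (w k)) = #(A1 ∪ A2) := by rw [hsplit]
      _ ≤ #A1 + #A2 := Finset.card_union_le _ _
      _ ≤ k + D.card := Nat.add_le_add hA1 hA2
  -- colors freed by rotations
  set Dc : Finset ℕ := D.image (fun t => c s(w t, w (t + 1))) with hDcdef
  have hDccard : Dc.card = D.card := by
    apply Finset.card_image_of_injOn
    intro i hi j hj hij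
    exact h3 i (by have := (hDsub i hi).1; omega) j (by have := (hDsub j hj).1; omega) hij
  have hDcsub : Dc ⊆ CF := by
    intro γ hγ
    obtain ⟨t, ht, rfl⟩ := Finset.mem_image.mp hγ
    exact hmemCF.mpr ⟨t, by have := (hDsub t ht).1; omega, rfl⟩
  -- Step B : degree of `w 0`
  have hB : G.degree (w 0) ≤ k + (k - D.card) := by
    rw [← SimpleGraph.card_neighborFinset_eq_degree]
    set W : Finset V := (Finset.range (k + 1)).image w with hWdef
    set B1 := (G.neighborFinset (w 0)).filter (fun x => x ∈ W) with hB1def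
    set B2 := (G.neighborFinset (w 0)).filter (fun x => ¬ x ∈ W) with hB2def
    have hsplit : G.neighborFinset (w 0) = B1 ∪ B2 :=
      (Finset.filter_union_filter_not_eq _ _).symm
    have hB1 : B1.card ≤ k := by
      have hsub : B1 ⊆ W.erase (w 0) := by
        intro x hx
        rw [hB1def, Finset.mem_filter, SimpleGraph.mem_neighborFinset] at hx
        exact Finset.mem_erase.mpr ⟨hx.1.ne', hx.2⟩
      have hWmem : w 0 ∈ W := by
        rw [hWdef]
        exact Finset.mem_image.mpr ⟨0, Finset.mem_range.mpr (by omega), rfl⟩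
      have := Finset.card_le_card hsub
      rw [Finset.card_erase_of_mem hWmem] at this
      have hWcard : W.card ≤ k + 1 := le_trans Finset.card_image_le (by rw [Finset.card_range])
      omega
    have hB2 : B2.card ≤ k - D.card := by
      have hcard : (CF \ Dc).card = k - D.card := by
        rw [Finset.card_sdiff_of_subset hDcsub, hCFcard, hDccard]
      rw [← hcard]
      apply Finset.card_le_card_of_injOn (fun x => c s(w 0, x))
      · intro x hx
        rw [Finset.mem_coe, hB2def, Finset.mem_filter, SimpleGraph.mem_neighborFinset] at hx
        obtain ⟨hadj, hxW⟩ := hx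
        have hout : ∀ i ≤ k, x ≠ w i := by
          intro i hi hxi
          exact hxW (by rw [hWdef]; exact Finset.mem_image.mpr ⟨i, Finset.mem_range.mpr (by omega), hxi.symm⟩)
        have hγCF : c s(w 0, x) ∈ CF := hext0 x hadj hout
        rw [Finset.mem_coe, Finset.mem_sdiff]; beta_reduce
        refine ⟨hγCF, ?_⟩
        intro hmem
        obtain ⟨t, htD, hteq⟩ := Finset.mem_image.mp hmem
        obtain ⟨ht1, hchord, hfr⟩ := hDsub t htD
        have hfr' : ∀ i < k, c s(w k, w t) ≠ c s(w i, w (i + 1)) := by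
          intro i hi hcol
          exact hfr (hmemCF.mpr ⟨i, hi, hcol.symm⟩)
        obtain ⟨hR, hRcol⟩ := isRPath_rotate h (by omega : t + 1 < k) hchord hfr'
        have hrot0 : rot w k t 0 = w 0 := by
          unfold rot
          rw [if_pos (Nat.zero_le t)]
        have houtR : ∀ i ≤ k, x ≠ rot w k t i := by
          intro i hi
          unfold rot
          split_ifs with hh
          · exact hout i (by omega)
          · exact hout (k + t + 1 - i) (by omega)
        have hadjR : G.Adj (rot w k t 0) x := by rw [hrot0]; exact hadj
        have hfreshR : ∀ i < k, c s(rot w k t 0, x) ≠ c s(rot w k t i, rot w k t (i + 1)) := by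
          intro i hi hcol
          rw [hrot0] at hcol
          rcases hRcol i hi with hγt | ⟨j, hj, hjt, hcolj⟩
          · rw [hγt] at hcol
            exact hfr (hcol ▸ hγCF)
          · rw [hcolj] at hcol
            have h1' : c s(w t, w (t + 1)) = c s(w j, w (j + 1)) := by rw [hteq, hcol]
            exact hjt (h3 j hj t (by omega) h1'.symm)
        exact hmax _ (isRPath_prepend hR houtR hadjR hfreshR)
      · intro x hx y hy hxy
        by_contra hne
        rw [Finset.mem_coe, hB2def, Finset.mem_filter, SimpleGraph.mem_neighborFinset] at hx hy
        exact proper_color_ne hc hx.1 hy.1 hne hxy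
    calc #(G.neighborFinset (w 0)) = #(B1 ∪ B2) := by rw [hsplit]
      _ ≤ #B1 + #B2 := Finset.card_union_le _ _
      _ ≤ k + (k - D.card) := Nat.add_le_add hB1 hB2
  have hDk : D.card ≤ k := by
    rw [← hDccard, ← hCFcard]
    exact Finset.card_le_card hDcsub
  omega

end RainbowAux

namespace RainbowAux

open SimpleGraph Finset

lemma hasRainbowCopy_of_isRPath {n l : ℕ} {G : SimpleGraph (Fin n)} {c : Sym2 (Fin n) → ℕ}
    {w : ℕ → Fin n} (h : IsRPath G c w l) : HasRainbowCopy (pathGraph (l + 1)) G c := by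
  obtain ⟨h1, h2, h3⟩ := h
  refine ⟨⟨fun i => w i.val, ?_⟩, ?_, ?_⟩
  · intro a b hab
    exact Fin.ext (h1 a.val (by omega) b.val (by omega) hab)
  · intro a b hab
    rw [SimpleGraph.pathGraph_adj] at hab
    rcases hab with hab | hab
    · have : a.val < l := by omega
      have := h2 a.val this
      show G.Adj (w a.val) (w b.val)
      simpa [hab] using this
    · have : b.val < l := by omega
      have := h2 b.val this
      exact (by simpa [hab] using this : G.Adj (w b.val) (w a.val)).symm
  · have hedge : ∀ e ∈ (pathGraph (l + 1)).edgeSet,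
        ∃ i, ∃ hi : i < l, e = s((⟨i, by omega⟩ : Fin (l + 1)), (⟨i + 1, by omega⟩ : Fin (l + 1))) := by
      intro e
      induction e using Sym2.ind with
      | _ a b =>
        intro he
        rw [SimpleGraph.mem_edgeSet, SimpleGraph.pathGraph_adj] at he
        rcases he with he | he
        · refine ⟨a.val, by omega, ?_⟩
          have ha2 : ((⟨a.val, by omega⟩ : Fin (l + 1))) = a := rfl
          have hb2 : ((⟨a.val + 1, by omega⟩ : Fin (l + 1))) = b := Fin.ext he
          rw [ha2, hb2]
        · refine ⟨b.val, by omega, ?_⟩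
          have hb2 : ((⟨b.val, by omega⟩ : Fin (l + 1))) = b := rfl
          have ha2 : ((⟨b.val + 1, by omega⟩ : Fin (l + 1))) = a := Fin.ext he
          rw [hb2, ha2]
          exact Sym2.eq_swap
    intro e₁ he₁ e₂ he₂ hcc
    obtain ⟨i, hi, rfl⟩ := hedge e₁ he₁
    obtain ⟨j, hj, rfl⟩ := hedge e₂ he₂
    rw [Sym2.map_pair_eq, Sym2.map_pair_eq] at hcc
    have : i = j := h3 i hi j hj hcc
    subst this
    rfl

lemma isRPath_mono {V : Type*} {G : SimpleGraph V} {c : Sym2 V → ℕ} {w : ℕ → V} {k j : ℕ}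
    (hjk : j ≤ k) (h : IsRPath G c w k) : IsRPath G c w j :=
  ⟨fun a ha b hb => h.1 a (by omega) b (by omega),
   fun a ha => h.2.1 a (by omega),
   fun a ha b hb => h.2.2 a (by omega) b (by omega)⟩

lemma exists_low_degree {n l : ℕ} (hl : 1 ≤ l) (hn : 0 < n) (G : SimpleGraph (Fin n))
    [DecidableRel G.Adj] {c : Sym2 (Fin n) → ℕ} (hc : IsProperEdgeColoring G c)
    (hno : ¬ HasRainbowCopy (pathGraph (l + 1)) G c) :
    ∃ v, G.degree v ≤ (3 * l - 1) / 2 := by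
  by_cases hE : ∃ a b, G.Adj a b
  · obtain ⟨a, b, hab⟩ := hE
    have hQ1 : ∃ w, IsRPath G c w 1 := ⟨_, isRPath_one hab⟩
    have hnQl : ¬ ∃ w, IsRPath G c w l := by
      rintro ⟨w, hw⟩
      exact hno (hasRainbowCopy_of_isRPath hw)
    haveI : DecidablePred fun j => ¬ ∃ w, IsRPath G c w (j + 1) := fun _ => Classical.dec _
    have hex : ∃ j, ¬ ∃ w, IsRPath G c w (j + 1) :=
      ⟨l - 1, by rw [Nat.sub_add_cancel hl]; exact hnQl⟩
    set k := Nat.find hex with hkdef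
    have hmax : ¬ ∃ w, IsRPath G c w (k + 1) := Nat.find_spec hex
    have hk1 : 1 ≤ k := by
      by_contra hcon
      have : k = 0 := by omega
      rw [this] at hmax
      exact hmax hQ1
    have hQk : ∃ w, IsRPath G c w k := by
      have hmin := Nat.find_min hex (m := k - 1) (by omega)
      rw [not_not, Nat.sub_add_cancel hk1] at hmin
      exact hmin
    have hkl : k ≤ l - 1 := Nat.find_le (by rw [Nat.sub_add_cancel hl]; exact hnQl)
    obtain ⟨w, hw⟩ := hQk
    have hcore := core hc hk1 hw (fun w' hw' => hmax ⟨w', hw'⟩)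
    rcases le_total (G.degree (w 0)) (G.degree (w k)) with hle | hle
    · exact ⟨w 0, by omega⟩
    · exact ⟨w k, by omega⟩
  · push_neg at hE
    refine ⟨⟨0, hn⟩, ?_⟩
    have hempty : G.neighborFinset ⟨0, hn⟩ = ∅ := by
      ext x
      simp [SimpleGraph.mem_neighborFinset, hE]
    rw [← SimpleGraph.card_neighborFinset_eq_degree, hempty]
    simp

lemma edge_bound (l : ℕ) (hl : 1 ≤ l) :
    ∀ n (G : SimpleGraph (Fin n)) (c : Sym2 (Fin n) → ℕ),
      IsProperEdgeColoring G c → ¬ HasRainbowCopy (pathGraph (l + 1)) G c →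
      G.edgeSet.ncard ≤ (3 * l - 1) / 2 * n := by
  intro n
  induction n with
  | zero =>
    intro G c _ _
    have hempty : G.edgeSet = ∅ := by
      ext e
      induction e using Sym2.ind with
      | _ a b => exact a.elim0
    simp [hempty]
  | succ n ih =>
    intro G c hc hno
    classical
    obtain ⟨v, hv⟩ := exists_low_degree hl (Nat.succ_pos n) G hc hno
    set G' : SimpleGraph (Fin n) := SimpleGraph.comap v.succAbove G with hG'def
    set c' : Sym2 (Fin n) → ℕ := fun e => c (e.map v.succAbove) with hc'def
    have hmapedge : ∀ e ∈ G'.edgeSet, e.map v.succAbove ∈ G.edgeSet := by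
      intro e
      induction e using Sym2.ind with
      | _ a b =>
        intro he
        rw [Sym2.map_pair_eq]
        exact he
    have hcp : IsProperEdgeColoring G' c' := by
      intro e₁ e₂ hm1 hm2 hne hsh
      apply hc (hmapedge _ hm1) (hmapedge _ hm2)
      · intro hcon
        exact hne (Sym2.map.injective Fin.succAbove_right_injective hcon)
      · obtain ⟨u, hu1, hu2⟩ := hsh
        exact ⟨v.succAbove u, Sym2.mem_map.mpr ⟨u, hu1, rfl⟩, Sym2.mem_map.mpr ⟨u, hu2, rfl⟩⟩
    have hno' : ¬ HasRainbowCopy (pathGraph (l + 1)) G' c' := by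
      rintro ⟨f, hadj, hrb⟩
      refine hno ⟨f.trans v.succAboveEmb, fun a b hab => hadj hab, ?_⟩
      intro e₁ he₁ e₂ he₂ hcc
      apply hrb e₁ he₁ e₂ he₂
      have hmm : ∀ e : Sym2 (Fin (l + 1)),
          Sym2.map (⇑(f.trans v.succAboveEmb)) e = Sym2.map v.succAbove (Sym2.map (⇑f) e) := by
        intro e
        rw [Sym2.map_map]
        rfl
      rw [hmm, hmm] at hcc
      exact hcc
    have hkey : #G.edgeFinset ≤ #G'.edgeFinset + G.degree v := by
      have hstep1 : #G.edgeFinset ≤ #(G.edgeFinset \ G.incidenceFinset v) + #(G.incidenceFinset v) :=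
        Finset.card_le_card_sdiff_add_card
      have hstep2 : #(G.incidenceFinset v) = G.degree v :=
        SimpleGraph.card_incidenceFinset_eq_degree G v
      have hstep3 : #(G.edgeFinset \ G.incidenceFinset v) ≤ #G'.edgeFinset := by
        apply Finset.card_le_card_of_surjOn (Sym2.map v.succAbove)
        intro e he
        rw [Finset.coe_sdiff, Set.mem_diff] at he
        obtain ⟨he1, he2⟩ := he
        rw [Finset.mem_coe, SimpleGraph.mem_edgeFinset] at he1
        rw [Finset.mem_coe, SimpleGraph.mem_incidenceFinset] at he2
        have hvnot : v ∉ e := fun hve => he2 ⟨he1, hve⟩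
        revert he1 hvnot
        induction e using Sym2.ind with
        | _ a b =>
          intro he1 hvnot
          have hav : a ≠ v := fun hh => hvnot (hh ▸ Sym2.mem_mk_left a b)
          have hbv : b ≠ v := fun hh => hvnot (hh ▸ Sym2.mem_mk_right a b)
          obtain ⟨a', ha'⟩ := Fin.exists_succAbove_eq hav
          obtain ⟨b', hb'⟩ := Fin.exists_succAbove_eq hbv
          refine ⟨s(a', b'), ?_, ?_⟩
          · rw [Finset.mem_coe, SimpleGraph.mem_edgeFinset, SimpleGraph.mem_edgeSet]
            show G.Adj (v.succAbove a') (v.succAbove b')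
            rw [ha', hb']
            exact he1
          · rw [Sym2.map_pair_eq, ha', hb']
      omega
    have hih := ih G' c' hcp hno'
    have hG'card : G'.edgeSet.ncard = #G'.edgeFinset := by
      rw [← SimpleGraph.coe_edgeFinset, Set.ncard_coe_finset]
    have hGcard : G.edgeSet.ncard = #G.edgeFinset := by
      rw [← SimpleGraph.coe_edgeFinset, Set.ncard_coe_finset]
    rw [hGcard]
    rw [hG'card] at hih
    calc #G.edgeFinset ≤ #G'.edgeFinset + G.degree v := hkey
      _ ≤ (3 * l - 1) / 2 * n + (3 * l - 1) / 2 := Nat.add_le_add hih hv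
      _ = (3 * l - 1) / 2 * (n + 1) := by ring
end RainbowAux

/-- For every fixed `l ≥ 1` and every `n`, `ex*(n, P_l) ≤ ⌈(3l-2)/2⌉·n`
(here `⌈(3l-2)/2⌉ = (3l-1)/2` with natural division, and `P_l`, the path with `l`
edges, is `pathGraph (l+1)`). -/
theorem rainbowTuran_path_upperBound (l : ℕ) (hl : 1 ≤ l) (n : ℕ) :
    ∀ m ∈ rainbowExSet n (pathGraph (l + 1)), m ≤ (3 * l - 1) / 2 * n := by
  rintro m ⟨G, c, hc, hno, rfl⟩
  exact RainbowAux.edge_bound l hl n G c hc hno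
end

section
/- Every graph on n vertices with more than (3/2)·n edges, equipped with any proper edge-coloring, contains a rainbow path with 3 edges. -/
open SimpleGraph Finset

set_option linter.unreachableTactic false
set_option linter.unusedTactic false

section RainbowAux

lemma pg4_edge {e : Sym2 (Fin 4)} (he : e ∈ (pathGraph 4).edgeSet) :
    e = s(0, 1) ∨ e = s(1, 2) ∨ e = s(2, 3) := by
  induction e with
  | _ i j =>
    rw [SimpleGraph.mem_edgeSet, pathGraph_adj] at he
    fin_cases i <;> fin_cases j <;> simp_all [Sym2.eq_iff] <;> omega

lemma path_color {n : ℕ} {β : Type*} {G : SimpleGraph (Fin n)} {c : Sym2 (Fin n) → β}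
    (hc : IsProperEdgeColoring G c) (hno : ¬ HasRainbowCopy (pathGraph 4) G c)
    {a b x y : Fin n} (hab : G.Adj a b) (hbx : G.Adj b x) (hxy : G.Adj x y)
    (hax : a ≠ x) (hay : a ≠ y) (hby : b ≠ y) :
    c s(a, b) = c s(x, y) := by
  have hab' : a ≠ b := hab.ne
  have hbx' : b ≠ x := hbx.ne
  have hxy' : x ≠ y := hxy.ne
  set f : Fin 4 → Fin n := ![a, b, x, y] with hf
  have hf0 : f 0 = a := rfl
  have hf1 : f 1 = b := rfl
  have hf2 : f 2 = x := rfl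
  have hf3 : f 3 = y := rfl
  have hinj : Function.Injective f := by
    intro i j hij
    fin_cases i <;> fin_cases j <;> simp_all [f]
  have hadj : ∀ ⦃i j : Fin 4⦄, (pathGraph 4).Adj i j → G.Adj (f i) (f j) := by
    intro i j hij
    rw [pathGraph_adj] at hij
    fin_cases i <;> fin_cases j <;>
      simp_all [f, G.adj_comm] <;> omega
  rw [HasRainbowCopy] at hno
  push_neg at hno
  obtain ⟨e₁, he₁, e₂, he₂, hcc, hne⟩ := hno ⟨f, hinj⟩ hadj
  have hES : ∀ {p q : Fin n}, G.Adj p q → s(p, q) ∈ G.edgeSet := fun h => h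
  rcases pg4_edge he₁ with rfl | rfl | rfl <;> rcases pg4_edge he₂ with rfl | rfl | rfl <;>
    simp only [Sym2.map_pair_eq, Function.Embedding.coeFn_mk, hf0, hf1, hf2, hf3] at hcc hne ⊢
  · exact absurd rfl hne
  · exact absurd hcc (hc (hES hab) (hES hbx) (by simp [Sym2.eq_iff]; tauto) ⟨b, by simp, by simp⟩)
  · exact hcc
  · exact absurd hcc (hc (hES hbx) (hES hab) (by simp [Sym2.eq_iff]; tauto) ⟨b, by simp, by simp⟩)
  · exact absurd rfl hne
  · exact absurd hcc (hc (hES hbx) (hES hxy) (by simp [Sym2.eq_iff]; tauto) ⟨x, by simp, by simp⟩)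
  · exact hcc.symm
  · exact absurd hcc (hc (hES hxy) (hES hbx) (by simp [Sym2.eq_iff]; tauto) ⟨x, by simp, by simp⟩)
  · exact absurd rfl hne

lemma pair_ne {α : Type*} {u x₁ x₂ : α} (h12 : x₁ ≠ x₂) (h2 : x₂ ≠ u) :
    s(u, x₁) ≠ s(u, x₂) := by
  rw [Ne, Sym2.eq_iff]
  rintro (⟨-, h⟩ | ⟨h, -⟩)
  · exact h12 h
  · exact h2 h.symm

variable {n : ℕ} {β : Type*} {G : SimpleGraph (Fin n)} [DecidableRel G.Adj] {c : Sym2 (Fin n) → β}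

lemma nbr_subset (hc : IsProperEdgeColoring G c) (hno : ¬ HasRainbowCopy (pathGraph 4) G c)
    {u v : Fin n} (hu : 3 ≤ G.degree u) (huv : G.Adj u v) :
    G.neighborFinset v ⊆ insert u (G.neighborFinset u) := by
  intro y hy
  rw [mem_neighborFinset] at hy
  by_contra hyn
  simp only [mem_insert, mem_neighborFinset] at hyn
  push_neg at hyn
  obtain ⟨hyu, hyNu⟩ := hyn
  have hcard : 1 < ((G.neighborFinset u).erase v).card := by
    have h1 : ((G.neighborFinset u).erase v).card = G.degree u - 1 := by
      rw [card_erase_of_mem (by rwa [mem_neighborFinset]), G.card_neighborFinset_eq_degree]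
    omega
  obtain ⟨x₁, hx₁, x₂, hx₂, hx12⟩ := Finset.one_lt_card.mp hcard
  have hx₁v : x₁ ≠ v := (mem_erase.mp hx₁).1
  have hx₂v : x₂ ≠ v := (mem_erase.mp hx₂).1
  have hx₁u : G.Adj u x₁ := (mem_neighborFinset _ _ _).mp (mem_erase.mp hx₁).2
  have hx₂u : G.Adj u x₂ := (mem_neighborFinset _ _ _).mp (mem_erase.mp hx₂).2
  have hyx₁ : y ≠ x₁ := fun h => hyNu (h ▸ hx₁u)
  have hyx₂ : y ≠ x₂ := fun h => hyNu (h ▸ hx₂u)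
  have h1 : c s(y, v) = c s(u, x₁) :=
    path_color hc hno hy.symm huv.symm hx₁u hyu hyx₁ hx₁v.symm
  have h2 : c s(y, v) = c s(u, x₂) :=
    path_color hc hno hy.symm huv.symm hx₂u hyu hyx₂ hx₂v.symm
  have hES : ∀ {p q : Fin n}, G.Adj p q → s(p, q) ∈ G.edgeSet := fun h => h
  exact hc (hES hx₁u) (hES hx₂u) (pair_ne hx12 hx₂u.ne')
    ⟨u, Sym2.mem_mk_left u x₁, Sym2.mem_mk_left u x₂⟩ (h1.symm.trans h2)

lemma deg_le_two (hc : IsProperEdgeColoring G c) (hno : ¬ HasRainbowCopy (pathGraph 4) G c)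
    {u v : Fin n} (hu : 4 ≤ G.degree u) (huv : G.Adj u v) :
    G.degree v ≤ 2 := by
  by_contra hd
  push_neg at hd
  have hsub := nbr_subset hc hno (by omega) huv
  have hcard : 1 < ((G.neighborFinset v).erase u).card := by
    have h1 : ((G.neighborFinset v).erase u).card = G.degree v - 1 := by
      rw [card_erase_of_mem (by rw [mem_neighborFinset]; exact huv.symm),
        G.card_neighborFinset_eq_degree]
    omega
  obtain ⟨y, hy, z, hz, hyz⟩ := Finset.one_lt_card.mp hcard
  have hyu : y ≠ u := (mem_erase.mp hy).1
  have hzu : z ≠ u := (mem_erase.mp hz).1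
  have hyv : G.Adj v y := (mem_neighborFinset _ _ _).mp (mem_erase.mp hy).2
  have hzv : G.Adj v z := (mem_neighborFinset _ _ _).mp (mem_erase.mp hz).2
  have hyNu : G.Adj u y := by
    have := hsub ((mem_neighborFinset _ _ _).mpr hyv)
    simp only [mem_insert, mem_neighborFinset] at this
    tauto
  have hzNu : G.Adj u z := by
    have := hsub ((mem_neighborFinset _ _ _).mpr hzv)
    simp only [mem_insert, mem_neighborFinset] at this
    tauto
  have hNle : #({v, y, z} : Finset (Fin n)) ≤ 3 :=
    le_trans (Finset.card_insert_le _ _)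
      (Nat.succ_le_succ (le_trans (Finset.card_insert_le _ _) (by simp)))
  have hcard2 : 0 < #(G.neighborFinset u \ ({v, y, z} : Finset (Fin n))) := by
    have h1 := Finset.le_card_sdiff ({v, y, z} : Finset (Fin n)) (G.neighborFinset u)
    rw [G.card_neighborFinset_eq_degree] at h1
    omega
  obtain ⟨w, hw⟩ := Finset.card_pos.mp hcard2
  simp only [mem_sdiff, mem_neighborFinset, mem_insert, not_or, Finset.mem_singleton] at hw
  obtain ⟨hwu, hwv, hwy, hwz⟩ := hw
  -- path w - u - y - v : c s(w,u) = c s(y,v)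
  have h1 : c s(w, u) = c s(y, v) :=
    path_color hc hno hwu.symm hyNu hyv.symm hwy hwv huv.ne
  -- path u - z - v - y : c s(u,z) = c s(v,y)
  have h2 : c s(u, z) = c s(v, y) :=
    path_color hc hno hzNu hzv.symm hyv huv.ne (Ne.symm hyu) hyz.symm
  have h3 : (s(v, y) : Sym2 (Fin n)) = s(y, v) := Sym2.eq_swap
  have hwuz : c s(w, u) = c s(u, z) := by rw [h1, ← h3, ← h2]
  have hES : ∀ {p q : Fin n}, G.Adj p q → s(p, q) ∈ G.edgeSet := fun h => h
  rw [Sym2.eq_swap (a := w) (b := u)] at hwuz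
  exact hc (hES hwu) (hES hzNu) (pair_ne hwz hzNu.ne')
    ⟨u, Sym2.mem_mk_left u w, Sym2.mem_mk_left u z⟩ hwuz

end RainbowAux

/-- Every properly edge-colored graph on `n` vertices with more than `(3/2)n` edges
contains a rainbow path with `3` edges. -/
theorem rainbow_P3_of_many_edges {n : ℕ} (G : SimpleGraph (Fin n))
    (h : 3 * n < 2 * G.edgeSet.ncard) {β : Type*} (c : Sym2 (Fin n) → β)
    (hc : IsProperEdgeColoring G c) :
    HasRainbowCopy (pathGraph 4) G c := by
  by_contra hno
  letI : DecidableRel G.Adj := Classical.decRel _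
  set C : Fin n → Finset (Fin n) := fun u => insert u (G.neighborFinset u) with hC
  have hCC : ∀ {u w : Fin n}, 3 ≤ G.degree u → w ∈ C u → G.neighborFinset w ⊆ C u := by
    intro u w hu hw
    rcases Finset.mem_insert.mp hw with rfl | hw
    · exact subset_insert _ _
    · exact nbr_subset hc hno hu ((mem_neighborFinset _ _ _).mp hw)
  have hmemC : ∀ {u w : Fin n}, w ∈ C u ↔ u ∈ C w := by
    intro u w
    simp only [hC, mem_insert, mem_neighborFinset]
    rw [G.adj_comm, eq_comm]
  have hcardC : ∀ u, (C u).card = G.degree u + 1 := by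
    intro u
    rw [hC]
    simp only
    rw [card_insert_of_notMem (by simp), G.card_neighborFinset_eq_degree]
  have hCsub : ∀ {u v : Fin n}, 3 ≤ G.degree u → v ∈ C u → C v ⊆ C u := by
    intro u v hu hv w hw
    rcases mem_insert.mp hw with rfl | hw
    · exact hv
    · exact hCC hu hv hw
  have hCeq : ∀ {u v : Fin n}, 3 ≤ G.degree u → 3 ≤ G.degree v →
      ¬ Disjoint (C u) (C v) → C u = C v := by
    intro u v hu hv hnd
    obtain ⟨w, hw1, hw2⟩ := Finset.not_disjoint_iff.mp hnd
    have hvCu : v ∈ C u := hCsub hu hw1 (hmemC.mp hw2)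
    have huCv : u ∈ C v := hmemC.mp hvCu
    exact subset_antisymm (hCsub hv huCv) (hCsub hu hvCu)
  have hclass : ∀ u : Fin n, 3 ≤ G.degree u → ∑ v ∈ C u, G.degree v ≤ 3 * (C u).card := by
    intro u hu
    by_cases h4 : 4 ≤ G.degree u
    · have hnb : ∀ v ∈ G.neighborFinset u, G.degree v ≤ 2 := fun v hv =>
        deg_le_two hc hno h4 ((mem_neighborFinset _ _ _).mp hv)
      have hs : ∑ v ∈ C u, G.degree v = G.degree u + ∑ v ∈ G.neighborFinset u, G.degree v := by
        rw [hC]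
        simp only
        rw [sum_insert (by simp)]
      have hb : ∑ v ∈ G.neighborFinset u, G.degree v ≤ 2 * G.degree u := by
        calc ∑ v ∈ G.neighborFinset u, G.degree v ≤ ∑ _v ∈ G.neighborFinset u, 2 :=
              Finset.sum_le_sum hnb
          _ = (G.neighborFinset u).card * 2 := by rw [sum_const, smul_eq_mul]
          _ = 2 * G.degree u := by rw [G.card_neighborFinset_eq_degree, Nat.mul_comm]
      rw [hs, hcardC]
      omega
    · have hdv : ∀ v ∈ C u, G.degree v ≤ 3 := by
        intro v hv
        have hsub : G.neighborFinset v ⊆ (C u).erase v := fun w hw =>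
          mem_erase.mpr ⟨((mem_neighborFinset _ _ _).mp hw).ne', hCC hu hv hw⟩
        have hle := card_le_card hsub
        rw [card_erase_of_mem hv, hcardC, G.card_neighborFinset_eq_degree] at hle
        omega
      calc ∑ v ∈ C u, G.degree v ≤ ∑ _v ∈ C u, 3 := Finset.sum_le_sum hdv
        _ = (C u).card * 3 := by rw [sum_const, smul_eq_mul]
        _ = 3 * (C u).card := Nat.mul_comm _ _
  set A : Finset (Fin n) := univ.filter (fun v => 3 ≤ G.degree v) with hA
  set 𝒞 : Finset (Finset (Fin n)) := A.image C with h𝒞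
  have hdegA : ∀ T ∈ 𝒞, ∃ u, 3 ≤ G.degree u ∧ C u = T := by
    intro T hT
    simp only [h𝒞, mem_image, hA, mem_filter, mem_univ, true_and] at hT
    exact hT
  have hdisj : (↑𝒞 : Set (Finset (Fin n))).PairwiseDisjoint id := by
    intro T1 hT1 T2 hT2 hne
    obtain ⟨u, hu, rfl⟩ := hdegA T1 hT1
    obtain ⟨v, hv, rfl⟩ := hdegA T2 hT2
    by_contra hd
    exact hne (hCeq hu hv hd)
  set S : Finset (Fin n) := 𝒞.biUnion id with hS
  have hSsum : ∑ v ∈ S, G.degree v ≤ 3 * S.card := by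
    rw [hS, Finset.sum_biUnion hdisj,
      Finset.card_biUnion (fun x hx y hy hxy => hdisj hx hy hxy), Finset.mul_sum]
    apply Finset.sum_le_sum
    intro T hT
    obtain ⟨u, hu, rfl⟩ := hdegA T hT
    exact hclass u hu
  have hrest : ∀ v ∈ univ \ S, G.degree v ≤ 2 := by
    intro v hv
    by_contra hd
    push_neg at hd
    have hvA : v ∈ A := by
      rw [hA, mem_filter]
      exact ⟨mem_univ _, hd⟩
    have hvS : v ∈ S := mem_biUnion.mpr ⟨C v, mem_image_of_mem C hvA, mem_insert_self _ _⟩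
    exact (mem_sdiff.mp hv).2 hvS
  have hsplit : ∑ v ∈ univ \ S, G.degree v + ∑ v ∈ S, G.degree v = ∑ v, G.degree v :=
    Finset.sum_sdiff (subset_univ S)
  have hScard : S.card ≤ n := by
    have := card_le_card (subset_univ S)
    simpa using this
  have hcards : (univ \ S).card = n - S.card := by
    rw [card_sdiff_of_subset (subset_univ S)]
    simp
  have hrsum : ∑ v ∈ univ \ S, G.degree v ≤ 2 * (univ \ S).card := by
    calc ∑ v ∈ univ \ S, G.degree v ≤ ∑ _v ∈ univ \ S, 2 := Finset.sum_le_sum hrest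
      _ = (univ \ S).card * 2 := by rw [sum_const, smul_eq_mul]
      _ = 2 * (univ \ S).card := Nat.mul_comm _ _
  have h2e : ∑ v, G.degree v = 2 * G.edgeFinset.card := G.sum_degrees_eq_twice_card_edges
  have hne : G.edgeSet.ncard = G.edgeFinset.card := Set.ncard_eq_toFinset_card' _
  omega
end

section
/- If n is divisible by 4, then ex*(n, P_3) = 3n/2; that is, the maximum number of edges in an n-vertex graph admitting a proper edge-coloring with no rainbow path of 3 edges equals 3n/2, achieved by a disjoint union of n/4 properly 3-edge-colored copies of K_4. -/
open SimpleGraph Finset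

namespace RainbowAux

def KG (n : ℕ) : SimpleGraph (Fin n) where
  Adj a b := a ≠ b ∧ (a : ℕ) / 4 = (b : ℕ) / 4
  symm := ⟨fun _ _ h => ⟨h.1.symm, h.2.symm⟩⟩
  loopless := ⟨fun _ h => h.1 rfl⟩

instance (n : ℕ) : DecidableRel (KG n).Adj := fun a b => by
  unfold KG; exact instDecidableAnd

def col (n : ℕ) : Sym2 (Fin n) → ℕ :=
  Sym2.lift ⟨fun a b => (a : ℕ) % 4 ^^^ (b : ℕ) % 4, fun _ _ => Nat.xor_comm _ _⟩

lemma col_mk {n : ℕ} (a b : Fin n) : col n s(a, b) = (a : ℕ) % 4 ^^^ (b : ℕ) % 4 := rfl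

lemma res_ne {n : ℕ} {a b : Fin n} (h : (KG n).Adj a b) : (a : ℕ) % 4 ≠ (b : ℕ) % 4 := by
  have hne : (a : ℕ) ≠ (b : ℕ) := fun hh => h.1 (Fin.val_injective hh)
  have := h.2
  omega

lemma xor_inj {v p q : ℕ} (h : p ≠ q) : v ^^^ p ≠ v ^^^ q :=
  fun h' => h (by simpa using congrArg (fun x => v ^^^ x) h')

lemma KG_proper (n : ℕ) : IsProperEdgeColoring (KG n) (col n) := by
  intro e₁ e₂ h1 h2 hne ⟨v, hv1, hv2⟩
  induction e₁ using Sym2.ind with | _ a b =>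
  induction e₂ using Sym2.ind with | _ x y =>
  rw [SimpleGraph.mem_edgeSet] at h1 h2
  rw [Sym2.mem_iff] at hv1 hv2
  -- reduce to shared vertex form
  rcases hv1 with rfl | rfl
  · rcases hv2 with rfl | rfl
    · -- e₁ = s(v,b), e₂ = s(v,y)
      have hby : b ≠ y := fun h => hne (by rw [h])
      rw [col_mk, col_mk]
      exact xor_inj (by
        have h1' := res_ne h1; have h2' := res_ne h2
        have : (b:ℕ)/4 = (y:ℕ)/4 := by rw [← h1.2, ← h2.2]
        have : (b:ℕ) ≠ (y:ℕ) := fun hh => hby (Fin.val_injective hh)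
        omega)
    · have hbx : b ≠ x := fun h => hne (by rw [h, Sym2.eq_swap])
      rw [col_mk, col_mk, Nat.xor_comm ((x:ℕ)%4)]
      exact xor_inj (by
        have : (b:ℕ)/4 = (x:ℕ)/4 := by rw [← h1.2]; exact h2.2.symm
        have : (b:ℕ) ≠ (x:ℕ) := fun hh => hbx (Fin.val_injective hh)
        omega)
  · rcases hv2 with rfl | rfl
    · have hay : a ≠ y := fun h => hne (by rw [h, Sym2.eq_swap])
      rw [col_mk, col_mk, Nat.xor_comm ((a:ℕ)%4)]
      exact xor_inj (by
        have : (a:ℕ)/4 = (y:ℕ)/4 := by rw [h1.2]; exact h2.2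
        have : (a:ℕ) ≠ (y:ℕ) := fun hh => hay (Fin.val_injective hh)
        omega)
    · have hax : a ≠ x := fun h => hne (by rw [h])
      rw [col_mk, col_mk, Nat.xor_comm ((a:ℕ)%4), Nat.xor_comm ((x:ℕ)%4)]
      exact xor_inj (by
        have : (a:ℕ)/4 = (x:ℕ)/4 := by rw [h1.2]; rw [← h2.2]
        have : (a:ℕ) ≠ (x:ℕ) := fun hh => hax (Fin.val_injective hh)
        omega)

lemma block_card (n : ℕ) (hn : 4 ∣ n) (v : Fin n) :
    (univ.filter (fun b : Fin n => (b : ℕ) / 4 = (v : ℕ) / 4)).card = 4 := by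
  have hv : (v : ℕ) < n := v.isLt
  have himg : univ.filter (fun b : Fin n => (b : ℕ) / 4 = (v : ℕ) / 4) =
      Finset.image (fun i : Fin 4 => (⟨4 * ((v : ℕ) / 4) + (i : ℕ), by
        obtain ⟨k, rfl⟩ := hn; omega⟩ : Fin n)) univ := by
    ext b
    simp only [mem_filter, mem_univ, true_and, mem_image]
    constructor
    · intro hb
      exact ⟨⟨(b : ℕ) % 4, Nat.mod_lt _ (by norm_num)⟩, by apply Fin.ext; simp; omega⟩
    · rintro ⟨i, rfl⟩
      simp; omega
  rw [himg, Finset.card_image_of_injective _ (fun i j hij => by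
    have := congrArg Fin.val hij
    simp at this
    exact Fin.ext (by omega)), Finset.card_univ, Fintype.card_fin]

lemma KG_degree (n : ℕ) (hn : 4 ∣ n) (v : Fin n) : (KG n).degree v = 3 := by
  rw [← SimpleGraph.card_neighborFinset_eq_degree]
  have : (KG n).neighborFinset v =
      (univ.filter (fun b : Fin n => (b : ℕ) / 4 = (v : ℕ) / 4)).erase v := by
    ext b
    simp only [SimpleGraph.mem_neighborFinset, mem_erase, mem_filter, mem_univ, true_and]
    constructor
    · intro h; exact ⟨h.symm.1, h.symm.2.symm ▸ h.2.symm⟩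
    · intro ⟨h1, h2⟩; exact ⟨fun h => h1 h.symm, h2.symm⟩
  rw [this, Finset.card_erase_of_mem (by simp), block_card n hn v]

set_option synthInstance.maxSize 512 in
lemma xor4 : ∀ p q r t : Fin 4, p ≠ q → p ≠ r → p ≠ t → q ≠ r → q ≠ t → r ≠ t →
    p.val ^^^ q.val = r.val ^^^ t.val := by decide

lemma pg_adj01 : (pathGraph 4).Adj 0 1 := by rw [pathGraph_adj]; left; rfl
lemma pg_adj12 : (pathGraph 4).Adj 1 2 := by rw [pathGraph_adj]; left; rfl
lemma pg_adj23 : (pathGraph 4).Adj 2 3 := by rw [pathGraph_adj]; left; rfl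

lemma KG_no_rainbow (n : ℕ) : ¬ HasRainbowCopy (pathGraph 4) (KG n) (col n) := by
  rintro ⟨f, hadj, hrb⟩
  have hab := hadj pg_adj01
  have hbc := hadj pg_adj12
  have hcd := hadj pg_adj23
  set a := f 0 with ha; set b := f 1 with hb; set c := f 2 with hc; set d := f 3 with hd
  have h1 := hab.2; have h2 := hbc.2; have h3 := hcd.2
  have hres : ∀ x y : Fin n, x ≠ y → (x : ℕ) / 4 = (y : ℕ) / 4 →
      (x : ℕ) % 4 ≠ (y : ℕ) % 4 := by
    intro x y hxy hbk hcc
    exact hxy (Fin.val_injective (by omega))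
  have fne : ∀ i j : Fin 4, i ≠ j → f i ≠ f j := fun i j hij h => hij (f.injective h)
  have h4 : ∀ x : Fin n, (x : ℕ) % 4 < 4 := fun x => Nat.mod_lt _ (by norm_num)
  have hkey : col n s(a, b) = col n s(c, d) := by
    rw [col_mk, col_mk]
    have := xor4 ⟨(a : ℕ) % 4, h4 a⟩ ⟨(b : ℕ) % 4, h4 b⟩ ⟨(c : ℕ) % 4, h4 c⟩ ⟨(d : ℕ) % 4, h4 d⟩
      (by simp only [Ne, Fin.mk.injEq]; exact hres a b (fne 0 1 (by decide)) (by omega))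
      (by simp only [Ne, Fin.mk.injEq]; exact hres a c (fne 0 2 (by decide)) (by omega))
      (by simp only [Ne, Fin.mk.injEq]; exact hres a d (fne 0 3 (by decide)) (by omega))
      (by simp only [Ne, Fin.mk.injEq]; exact hres b c (fne 1 2 (by decide)) (by omega))
      (by simp only [Ne, Fin.mk.injEq]; exact hres b d (fne 1 3 (by decide)) (by omega))
      (by simp only [Ne, Fin.mk.injEq]; exact hres c d (fne 2 3 (by decide)) (by omega))
    simpa using this
  have := hrb s(0,1) (by rw [SimpleGraph.mem_edgeSet]; exact pg_adj01) s(2,3)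
    (by rw [SimpleGraph.mem_edgeSet]; exact pg_adj23)
    (by rw [Sym2.map_pair_eq, Sym2.map_pair_eq]; exact hkey)
  rw [Sym2.eq_iff] at this
  revert this; decide

lemma pg_edges : (SimpleGraph.pathGraph 4).edgeSet = {s(0,1), s(1,2), s(2,3)} := by
  ext e
  induction e using Sym2.ind with | _ x y =>
  simp only [SimpleGraph.mem_edgeSet, SimpleGraph.pathGraph_adj, Set.mem_insert_iff,
    Set.mem_singleton_iff, Sym2.eq_iff]
  revert x y; decide

variable {n : ℕ} {G : SimpleGraph (Fin n)} {c : Sym2 (Fin n) → ℕ}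

lemma key_s13 (hp : IsProperEdgeColoring G c) (hr : ¬ HasRainbowCopy (pathGraph 4) G c)
    {a b d e : Fin n} (hab : a ≠ b) (had : a ≠ d) (hae : a ≠ e) (hbd : b ≠ d) (hbe : b ≠ e)
    (hde : d ≠ e) (h1 : G.Adj a b) (h2 : G.Adj b d) (h3 : G.Adj d e) :
    c s(a, b) = c s(d, e) := by
  have m1 : s(a,b) ∈ G.edgeSet := h1
  have m2 : s(b,d) ∈ G.edgeSet := h2
  have m3 : s(d,e) ∈ G.edgeSet := h3
  have ne12 : s(a,b) ≠ s(b,d) := by rw [Ne, Sym2.eq_iff]; push_neg; tauto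
  have ne23 : s(b,d) ≠ s(d,e) := by rw [Ne, Sym2.eq_iff]; push_neg; tauto
  have c12 : c s(a,b) ≠ c s(b,d) := hp m1 m2 ne12 ⟨b, by simp, by simp⟩
  have c23 : c s(b,d) ≠ c s(d,e) := hp m2 m3 ne23 ⟨d, by simp, by simp⟩
  by_contra hne
  apply hr
  refine ⟨⟨![a, b, d, e], ?_⟩, ?_, ?_⟩
  · intro i j hij
    fin_cases i <;> fin_cases j <;> simp_all <;> tauto
  · intro x y hxy
    rw [SimpleGraph.pathGraph_adj] at hxy
    fin_cases x <;> fin_cases y <;> simp_all <;>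
      first | exact h1 | exact h2 | exact h3 | exact h1.symm | exact h2.symm | exact h3.symm | omega
  · intro e₁ he₁ e₂ he₂ hc
    rw [pg_edges] at he₁ he₂
    simp only [Set.mem_insert_iff, Set.mem_singleton_iff] at he₁ he₂
    have m01 : ∀ (f : Fin 4 ↪ Fin n), Sym2.map ⇑f s(0,1) = s(f 0, f 1) := fun _ => rfl
    rcases he₁ with rfl | rfl | rfl <;> rcases he₂ with rfl | rfl | rfl
    · rfl
    · exact absurd (show c s(a,b) = c s(b,d) from hc) c12
    · exact absurd (show c s(a,b) = c s(d,e) from hc) hne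
    · exact absurd (show c s(b,d) = c s(a,b) from hc) c12.symm
    · rfl
    · exact absurd (show c s(b,d) = c s(d,e) from hc) c23
    · exact absurd (show c s(d,e) = c s(a,b) from hc) (fun h => hne h.symm)
    · exact absurd (show c s(d,e) = c s(b,d) from hc) c23.symm
    · rfl

-- L1: if deg v >= 3, neighbors' neighbors stay in the closed neighborhood
lemma nbhdClosure [DecidableRel G.Adj] (hp : IsProperEdgeColoring G c)
    (hr : ¬ HasRainbowCopy (pathGraph 4) G c) {v : Fin n} (hv : 3 ≤ G.degree v)
    {u x : Fin n} (hu : G.Adj v u) (hx : G.Adj u x) :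
    x = v ∨ G.Adj v x := by
  by_contra hcon
  push_neg at hcon
  obtain ⟨hxv, hxadj⟩ := hcon
  have hcard : 1 < ((G.neighborFinset v).erase u).card := by
    rw [Finset.card_erase_of_mem (by simpa using hu), G.card_neighborFinset_eq_degree]
    omega
  obtain ⟨w₁, hw₁, w₂, hw₂, hww⟩ := Finset.one_lt_card.mp hcard
  simp only [Finset.mem_erase, SimpleGraph.mem_neighborFinset] at hw₁ hw₂
  have key1 := key_s13 hp hr (G.ne_of_adj hx).symm hxv (fun h => hxadj (h ▸ hw₁.2))
    (G.ne_of_adj hu).symm (fun h => hw₁.1 h.symm) (G.ne_of_adj hw₁.2)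
    hx.symm hu.symm hw₁.2
  have key2 := key_s13 hp hr (G.ne_of_adj hx).symm hxv (fun h => hxadj (h ▸ hw₂.2))
    (G.ne_of_adj hu).symm (fun h => hw₂.1 h.symm) (G.ne_of_adj hw₂.2)
    hx.symm hu.symm hw₂.2
  have : c s(v, w₁) ≠ c s(v, w₂) := hp hw₁.2 hw₂.2
    (by rw [Ne, Sym2.eq_iff]; push_neg
        exact ⟨fun _ => hww, fun h => absurd h (G.ne_of_adj hw₂.2)⟩)
    ⟨v, by simp, by simp⟩
  rw [← key1, ← key2] at this
  exact this rfl

-- L2: if deg v >= 4, the neighborhood of v is independent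
lemma nbhdIndep [DecidableRel G.Adj] (hp : IsProperEdgeColoring G c)
    (hr : ¬ HasRainbowCopy (pathGraph 4) G c) {v : Fin n} (hv : 4 ≤ G.degree v)
    {u w : Fin n} (hu : G.Adj v u) (hw : G.Adj v w) (huw : G.Adj u w) : False := by
  have hcard : 1 < (((G.neighborFinset v).erase u).erase w).card := by
    rw [Finset.card_erase_of_mem, Finset.card_erase_of_mem (by simpa using hu),
      G.card_neighborFinset_eq_degree]
    · omega
    · simp only [Finset.mem_erase, SimpleGraph.mem_neighborFinset]
      exact ⟨G.ne_of_adj huw |>.symm, hw⟩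
  obtain ⟨z₁, hz₁, z₂, hz₂, hzz⟩ := Finset.one_lt_card.mp hcard
  simp only [Finset.mem_erase, SimpleGraph.mem_neighborFinset] at hz₁ hz₂
  -- path z - v - u - w
  have key1 := key_s13 hp hr (G.ne_of_adj hz₁.2.2).symm (fun h => hz₁.2.1 h)
    (fun h => hz₁.1 h) (G.ne_of_adj hu) (G.ne_of_adj hw) (G.ne_of_adj huw)
    hz₁.2.2.symm hu huw
  have key2 := key_s13 hp hr (G.ne_of_adj hz₂.2.2).symm (fun h => hz₂.2.1 h)
    (fun h => hz₂.1 h) (G.ne_of_adj hu) (G.ne_of_adj hw) (G.ne_of_adj huw)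
    hz₂.2.2.symm hu huw
  have : c s(z₁, v) ≠ c s(z₂, v) := hp
    (by rw [SimpleGraph.mem_edgeSet]; exact hz₁.2.2.symm)
    (by rw [SimpleGraph.mem_edgeSet]; exact hz₂.2.2.symm)
    (by rw [Ne, Sym2.eq_iff]; push_neg
        exact ⟨fun h => absurd h hzz, fun h => absurd h (G.ne_of_adj hz₁.2.2).symm⟩)
    ⟨v, by simp, by simp⟩
  rw [key1, key2] at this
  exact this rfl

-- L3: if deg v >= 4, every neighbor of v has degree 1
lemma nbhdDegOne [DecidableRel G.Adj] (hp : IsProperEdgeColoring G c)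
    (hr : ¬ HasRainbowCopy (pathGraph 4) G c) {v : Fin n} (hv : 4 ≤ G.degree v)
    {u : Fin n} (hu : G.Adj v u) : G.degree u = 1 := by
  have hnbhd : G.neighborFinset u = {v} := by
    ext x
    simp only [SimpleGraph.mem_neighborFinset, Finset.mem_singleton]
    constructor
    · intro hx
      rcases nbhdClosure hp hr (by omega) hu hx with h | h
      · exact h
      · exact (nbhdIndep hp hr hv hu h hx).elim
    · rintro rfl; exact hu.symm
  rw [← G.card_neighborFinset_eq_degree, hnbhd, Finset.card_singleton]

lemma upper_bound [DecidableRel G.Adj] (hp : IsProperEdgeColoring G c)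
    (hr : ¬ HasRainbowCopy (pathGraph 4) G c) : 2 * G.edgeFinset.card ≤ 3 * n := by
  classical
  set S : Finset (Fin n) := univ.filter (fun v => 4 ≤ G.degree v) with hS
  set L : Finset (Fin n) := S.biUnion (fun v => G.neighborFinset v) with hL
  have hSdeg : ∀ s ∈ S, 4 ≤ G.degree s := fun s hs => (Finset.mem_filter.mp hs).2
  have hLdeg : ∀ l ∈ L, G.degree l = 1 := by
    intro l hl
    obtain ⟨s, hs, hls⟩ := Finset.mem_biUnion.mp hl
    exact nbhdDegOne hp hr (hSdeg s hs) (by simpa using hls)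
  have hdisj : ∀ x ∈ S, ∀ y ∈ S, x ≠ y → Disjoint (G.neighborFinset x) (G.neighborFinset y) := by
    intro x hx y hy hxy
    rw [Finset.disjoint_left]
    intro u hux huy
    have h1 : G.degree u = 1 := nbhdDegOne hp hr (hSdeg x hx) (by simpa using hux)
    have h2 : ({x, y} : Finset (Fin n)) ⊆ G.neighborFinset u := by
      intro z hz
      simp only [SimpleGraph.mem_neighborFinset] at hux huy ⊢
      rcases Finset.mem_insert.mp hz with rfl | hz
      · exact hux.symm
      · rw [Finset.mem_singleton] at hz; subst hz
        exact huy.symm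
    have := Finset.card_le_card h2
    rw [Finset.card_pair hxy, G.card_neighborFinset_eq_degree] at this
    omega
  have hLcard : L.card = ∑ s ∈ S, G.degree s := by
    rw [Finset.card_biUnion hdisj]
    exact Finset.sum_congr rfl fun s _ => G.card_neighborFinset_eq_degree s
  have hLsub : L ⊆ univ \ S := by
    intro l hl
    rw [Finset.mem_sdiff]
    refine ⟨Finset.mem_univ _, fun hls => ?_⟩
    have := hSdeg l hls; have := hLdeg l hl; omega
  set R : Finset (Fin n) := (univ \ S) \ L with hR
  have hsum1 : ∑ v ∈ univ \ S, G.degree v + ∑ v ∈ S, G.degree v = ∑ v : Fin n, G.degree v :=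
    Finset.sum_sdiff (Finset.subset_univ S)
  have hsum2 : ∑ v ∈ R, G.degree v + ∑ v ∈ L, G.degree v = ∑ v ∈ univ \ S, G.degree v :=
    Finset.sum_sdiff hLsub
  have hsumL : ∑ v ∈ L, G.degree v = L.card := by
    rw [Finset.sum_congr rfl hLdeg]; simp
  have hsumR : ∑ v ∈ R, G.degree v ≤ 3 * R.card := by
    rw [mul_comm]
    refine Finset.sum_le_card_nsmul _ _ 3 fun v hv => ?_
    have : v ∉ S := (Finset.mem_sdiff.mp ((Finset.mem_sdiff.mp hv).1)).2
    rw [hS, Finset.mem_filter] at this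
    push_neg at this
    have := this (Finset.mem_univ v); omega
  have hcardR : R.card = (n - S.card) - L.card := by
    rw [hR, Finset.card_sdiff_of_subset hLsub, Finset.card_sdiff_of_subset (Finset.subset_univ S)]
    simp
  have hcardS : S.card ≤ n := by
    simpa using Finset.card_le_card (Finset.subset_univ S)
  have hcardL : L.card ≤ n - S.card := by
    have := Finset.card_le_card hLsub
    rwa [Finset.card_sdiff_of_subset (Finset.subset_univ S), Finset.card_univ, Fintype.card_fin] at this
  have hdeg : ∑ v : Fin n, G.degree v = 2 * G.edgeFinset.card :=
    G.sum_degrees_eq_twice_card_edges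
  have hAS : 4 * S.card ≤ ∑ s ∈ S, G.degree s := by
    calc 4 * S.card = ∑ _s ∈ S, 4 := by rw [Finset.sum_const]; ring
    _ ≤ _ := Finset.sum_le_sum hSdeg
  omega

end RainbowAux

/-- If `4 ∣ n` then `ex*(n, P_3) = 3n/2`, achieved by `n/4` disjoint properly
`3`-edge-colored copies of `K_4`. -/
theorem rainbowTuran_P3 (n : ℕ) (hn : 4 ∣ n) :
    IsGreatest (rainbowExSet n (pathGraph 4)) (3 * n / 2) := by
  classical
  constructor
  · refine ⟨RainbowAux.KG n, RainbowAux.col n, RainbowAux.KG_proper n,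
      RainbowAux.KG_no_rainbow n, ?_⟩
    have hcount : (RainbowAux.KG n).edgeSet.ncard = (RainbowAux.KG n).edgeFinset.card := by
      rw [← SimpleGraph.coe_edgeFinset, Set.ncard_coe_finset]
    have hsum : ∑ v : Fin n, (RainbowAux.KG n).degree v = 3 * n := by
      rw [Finset.sum_congr rfl (fun v _ => RainbowAux.KG_degree n hn v)]
      simp [mul_comm]
    have h2 := (RainbowAux.KG n).sum_degrees_eq_twice_card_edges
    rw [hcount]; omega
  · rintro m ⟨G, c, hp, hr, hcard⟩
    haveI : DecidableRel G.Adj := Classical.decRel _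
    have h2 := RainbowAux.upper_bound hp hr
    have hcount : G.edgeSet.ncard = G.edgeFinset.card := by
      rw [← SimpleGraph.coe_edgeFinset, Set.ncard_coe_finset]
    rw [Nat.le_div_iff_mul_le (by norm_num : (0:ℕ) < 2)]
    omega
end
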